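/- arXiv:2205.04082 — 4 statements merged into one kernel-verified Lean document; each statement's English description precedes it below -/
import Mathlib

section
/- Let n and t be nonnegative integers with 3t ≤ n, and set m = n − 3t. If m is even, then the maximum of mis(G) over all simple graphs G on n vertices that contain no induced triangle matching of size t+1 equals 3^t · 2^{m/2}; that is, every such graph G satisfies mis(G) ≤ 3^t · 2^{m/2}, and some such graph attains this value. -/
/-- A finset of vertices is independent: no two of its elements are adjacent. -/
def IsIndepFinset {V : Type*} (G : SimpleGraph V) (s : Finset V) : Prop :=
  ∀ ⦃a⦄, a ∈ s → ∀ ⦃b⦄, b ∈ s → ¬ G.Adj a b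

/-- A finset of vertices is a maximal independent set: it is independent and is not
properly contained in any other independent set. -/
def IsMaxIndepFinset {V : Type*} (G : SimpleGraph V) (s : Finset V) : Prop :=
  IsIndepFinset G s ∧ ∀ t : Finset V, IsIndepFinset G t → s ⊆ t → s = t

/-- `mis G` is the number of maximal independent sets of `G`. -/
noncomputable def mis {V : Type*} (G : SimpleGraph V) : ℕ :=
  Set.ncard {s : Finset V | IsMaxIndepFinset G s}

/-- `G` has an induced triangle matching of size `t`: there are `t` pairwise disjoint
triples of vertices, each triple pairwise adjacent (a triangle), with no edges between
distinct triples (so the induced subgraph on their union is a disjoint union of `t`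
triangles). -/
def HasInducedTriangleMatching {V : Type*} (G : SimpleGraph V) (t : ℕ) : Prop :=
  ∃ f : Fin t → Finset V,
    (∀ i, (f i).card = 3) ∧
    (∀ i j, i ≠ j → Disjoint (f i) (f j)) ∧
    (∀ i, ∀ a ∈ f i, ∀ b ∈ f i, a ≠ b → G.Adj a b) ∧
    (∀ i j, i ≠ j → ∀ a ∈ f i, ∀ b ∈ f j, ¬ G.Adj a b)

/-- `G` has an induced matching of size `t`: there are `t` pairwise disjoint
pairs of vertices, each pair adjacent, with no edges between distinct pairs. -/
def HasInducedMatching {V : Type*} (G : SimpleGraph V) (t : ℕ) : Prop :=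
  ∃ f : Fin t → Finset V,
    (∀ i, (f i).card = 2) ∧
    (∀ i j, i ≠ j → Disjoint (f i) (f j)) ∧
    (∀ i, ∀ a ∈ f i, ∀ b ∈ f i, a ≠ b → G.Adj a b) ∧
    (∀ i j, i ≠ j → ∀ a ∈ f i, ∀ b ∈ f j, ¬ G.Adj a b)

instance finsetFinite {V : Type} [Finite V] : Finite (Finset V) := by
  have := Fintype.ofFinite V
  classical
  infer_instance

namespace MISAux

variable {V : Type}

lemma mis_dominates {G : SimpleGraph V} {S : Finset V} (hS : IsMaxIndepFinset G S) {v : V}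
    (hv : v ∉ S) : ∃ w ∈ S, G.Adj v w := by
  classical
  by_contra hc
  push_neg at hc
  have hins : IsIndepFinset G (insert v S) := by
    intro a ha b hb
    rw [Finset.mem_insert] at ha hb
    rcases ha with rfl | ha
    · rcases hb with rfl | hb
      · exact fun h => G.irrefl h
      · exact hc b hb
    · rcases hb with rfl | hb
      · exact fun h => hc a ha h.symm
      · exact hS.1 ha hb
  have heq := hS.2 _ hins (Finset.subset_insert v S)
  exact hv (by rw [heq]; exact Finset.mem_insert_self v S)

/-- MAIN: the class of maximal independent sets containing `X` and avoiding `Y`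
injects into the maximal independent sets of the induced subgraph on `W`. -/
lemma class_le_mis_induce [Finite V] (G : SimpleGraph V) (X Y : Finset V)
    (hX : IsIndepFinset G X) (W : Set V)
    (hW : ∀ v, v ∈ W ↔ (v ∉ X ∧ ∀ x ∈ X, ¬ G.Adj x v) ∧ v ∉ Y) :
    {S : Finset V | IsMaxIndepFinset G S ∧ X ⊆ S ∧ ∀ y ∈ Y, y ∉ S}.ncard ≤
      mis (G.induce W) := by
  classical
  have key : ∀ S : Finset V, IsMaxIndepFinset G S → X ⊆ S → (∀ y ∈ Y, y ∉ S) →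
      ∀ v ∈ S, v ∈ X ∨ v ∈ W := by
    intro S hS hXS hYS v hv
    by_cases hvX : v ∈ X
    · exact Or.inl hvX
    · refine Or.inr ((hW v).2 ⟨⟨hvX, fun x hx => hS.1 (hXS hx) hv⟩, fun hvY => hYS v hvY hv⟩)
  apply Set.ncard_le_ncard_of_injOn (fun S => S.subtype (· ∈ W))
  · rintro S ⟨hS, hXS, hYS⟩
    constructor
    · -- independent
      intro a ha b hb hadj
      rw [Finset.mem_subtype] at ha hb
      exact hS.1 ha hb (by simpa using hadj)
    · -- maximal
      intro T hT hsub
      have hTW : ∀ b : W, b ∈ T → (b : V) ∈ W := fun b _ => b.2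
      -- lift T
      set Tlift : Finset V := X ∪ T.map (Function.Embedding.subtype _) with hTlift
      have hmem : ∀ c : V, c ∈ Tlift ↔ c ∈ X ∨ ∃ hc : c ∈ W, (⟨c, hc⟩ : W) ∈ T := by
        intro c
        simp only [hTlift, Finset.mem_union, Finset.mem_map,
          Function.Embedding.coe_subtype]
        constructor
        · rintro (h | ⟨⟨c', hc'⟩, hc'T, rfl⟩)
          · exact Or.inl h
          · exact Or.inr ⟨hc', hc'T⟩
        · rintro (h | ⟨hc, hcT⟩)
          · exact Or.inl h
          · exact Or.inr ⟨⟨c, hc⟩, hcT, rfl⟩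
      have hTliftIndep : IsIndepFinset G Tlift := by
        intro a ha b hb hadj
        rw [hmem] at ha hb
        rcases ha with ha | ⟨haW, haT⟩ <;> rcases hb with hb | ⟨hbW, hbT⟩
        · exact hX ha hb hadj
        · exact (((hW b).1 hbW).1.2 a ha) hadj
        · exact (((hW a).1 haW).1.2 b hb) hadj.symm
        · exact hT haT hbT (by simpa using hadj)
      have hSsub : S ⊆ Tlift := by
        intro v hv
        rcases key S hS hXS hYS v hv with h | h
        · exact (hmem v).2 (Or.inl h)
        · have : (⟨v, h⟩ : W) ∈ S.subtype (· ∈ W) := by rw [Finset.mem_subtype]; exact hv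
          exact (hmem v).2 (Or.inr ⟨h, hsub this⟩)
      have hSeq : S = Tlift := hS.2 _ hTliftIndep hSsub
      -- conclude T = S.subtype
      apply Finset.Subset.antisymm hsub
      intro b hbT
      rw [Finset.mem_subtype]
      have : (b : V) ∈ Tlift := (hmem b).2 (Or.inr ⟨b.2, (by simpa using hbT)⟩)
      rw [← hSeq] at this
      exact this
  · -- injective
    rintro S1 ⟨hS1, hXS1, hYS1⟩ S2 ⟨hS2, hXS2, hYS2⟩ heq
    have hrec : ∀ S : Finset V, IsMaxIndepFinset G S → X ⊆ S → (∀ y ∈ Y, y ∉ S) →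
        S = X ∪ (S.subtype (· ∈ W)).map (Function.Embedding.subtype _) := by
      intro S hS hXS hYS
      ext v
      simp only [Finset.mem_union, Finset.mem_map, Finset.mem_subtype,
        Function.Embedding.coe_subtype]
      constructor
      · intro hv
        rcases key S hS hXS hYS v hv with h | h
        · exact Or.inl h
        · exact Or.inr ⟨⟨v, h⟩, by simpa using hv, rfl⟩
      · rintro (h | ⟨⟨c, hc⟩, hcS, rfl⟩)
        · exact hXS h
        · simpa using hcS
    rw [hrec S1 hS1 hXS1 hYS1, hrec S2 hS2 hXS2 hYS2]
    simp only at heq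
    rw [heq]


/-- no induced triangle matching passes to induced subgraphs -/
lemma hasITM_of_induce {G : SimpleGraph V} {W : Set V} {k : ℕ}
    (h : HasInducedTriangleMatching (G.induce W) k) : HasInducedTriangleMatching G k := by
  obtain ⟨f, hcard, hdisj, hadj, hnadj⟩ := h
  refine ⟨fun i => (f i).map (Function.Embedding.subtype _), ?_, ?_, ?_, ?_⟩
  · intro i; rw [Finset.card_map]; exact hcard i
  · intro i j hij; exact (Finset.disjoint_map _).2 (hdisj i j hij)
  · intro i a ha b hb hab
    simp only [Finset.mem_map, Function.Embedding.coe_subtype] at ha hb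
    obtain ⟨a', ha', rfl⟩ := ha; obtain ⟨b', hb', rfl⟩ := hb
    have hab' : a' ≠ b' := fun h => hab (by rw [h])
    simpa using hadj i a' ha' b' hb' hab'
  · intro i j hij a ha b hb
    simp only [Finset.mem_map, Function.Embedding.coe_subtype] at ha hb
    obtain ⟨a', ha', rfl⟩ := ha; obtain ⟨b', hb', rfl⟩ := hb
    intro hadj'
    exact hnadj i j hij a' ha' b' hb' (by simpa using hadj')

lemma card_W_le [Finite V] (W : Set V) (Z : Finset V) (hZ : ∀ z ∈ Z, z ∉ W) :
    Nat.card ↥W + Z.card ≤ Nat.card V := by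
  classical
  have hd : Disjoint W (↑Z : Set V) := by
    rw [Set.disjoint_right]; intro a haZ; exact hZ a (by exact_mod_cast haZ)
  have h1 : (W ∪ ↑Z).ncard = W.ncard + (↑Z : Set V).ncard :=
    Set.ncard_union_eq hd (Set.toFinite _) (Set.toFinite _)
  have h2 : (W ∪ ↑Z).ncard ≤ (Set.univ : Set V).ncard :=
    Set.ncard_le_ncard (Set.subset_univ _) (Set.toFinite _)
  rw [Nat.card_coe_set_eq]
  calc W.ncard + Z.card = (W ∪ ↑Z).ncard := by rw [h1, Set.ncard_coe_finset]
    _ ≤ (Set.univ : Set V).ncard := h2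
    _ = Nat.card V := by rw [Set.ncard_univ]

lemma mis_eq_one_of_isEmpty [IsEmpty V] (G : SimpleGraph V) : mis G = 1 := by
  have h : {s : Finset V | IsMaxIndepFinset G s} = {∅} := by
    ext S
    simp only [Set.mem_setOf_eq, Set.mem_singleton_iff]
    constructor
    · intro _
      exact Finset.eq_empty_of_forall_notMem (fun x _ => (IsEmpty.false x).elim)
    · rintro rfl
      refine ⟨fun a ha => (IsEmpty.false a).elim, fun T _ _ => ?_⟩
      exact (Finset.eq_empty_of_forall_notMem (fun x _ => (IsEmpty.false x).elim)).symm
  rw [mis, h, Set.ncard_singleton]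

lemma misSet_cover2 [Finite V] (G : SimpleGraph V) (A B : Set (Finset V))
    (h : ∀ S : Finset V, IsMaxIndepFinset G S → S ∈ A ∨ S ∈ B) :
    mis G ≤ A.ncard + B.ncard := by
  have hsub : {s : Finset V | IsMaxIndepFinset G s} ⊆ A ∪ B := fun S hS => h S hS
  calc mis G ≤ (A ∪ B).ncard := Set.ncard_le_ncard hsub (Set.toFinite _)
    _ ≤ A.ncard + B.ncard := Set.ncard_union_le A B

lemma misSet_cover3 [Finite V] (G : SimpleGraph V) (A B C : Set (Finset V))
    (h : ∀ S : Finset V, IsMaxIndepFinset G S → S ∈ A ∨ S ∈ B ∨ S ∈ C) :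
    mis G ≤ A.ncard + B.ncard + C.ncard := by
  have hsub : {s : Finset V | IsMaxIndepFinset G s} ⊆ A ∪ (B ∪ C) := by
    intro S hS
    rcases h S hS with h1 | h2 | h3
    · exact Or.inl h1
    · exact Or.inr (Or.inl h2)
    · exact Or.inr (Or.inr h3)
  calc mis G ≤ (A ∪ (B ∪ C)).ncard := Set.ncard_le_ncard hsub (Set.toFinite _)
    _ ≤ A.ncard + (B ∪ C).ncard := Set.ncard_union_le _ _
    _ ≤ A.ncard + (B.ncard + C.ncard) := by
        exact Nat.add_le_add_left (Set.ncard_union_le B C) _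
    _ = A.ncard + B.ncard + C.ncard := by ring

-- arithmetic helpers
lemma arith_two_nbr (u a b K Q : ℕ) (hu : u ≤ a + b) (ha : a ^ 2 * K * 4 ≤ Q)
    (hb : b ^ 2 * K * 4 ≤ Q) : u ^ 2 * K ≤ Q := by
  have h1 : u ^ 2 ≤ (a + b) ^ 2 := Nat.pow_le_pow_left hu 2
  have h2 : u ^ 2 * K ≤ (a + b) ^ 2 * K := Nat.mul_le_mul_right K h1
  have h3 : 2 * ((a + b) ^ 2 * K) ≤ 2 * Q := by
    zify at ha hb ⊢
    nlinarith [sq_nonneg ((a : ℤ) - b), ha, hb]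
  omega

lemma arith_deg3 (u a b K Q : ℕ) (hu : u ≤ a + b) (ha : a ^ 2 * K * 2 ≤ Q)
    (hb : b ^ 2 * K * 16 ≤ Q) : u ^ 2 * K ≤ Q := by
  have h1 : u ^ 2 ≤ (a + b) ^ 2 := Nat.pow_le_pow_left hu 2
  have h2 : u ^ 2 * K ≤ (a + b) ^ 2 * K := Nat.mul_le_mul_right K h1
  have h3 : 16 * ((a + b) ^ 2 * K) ≤ 16 * Q := by
    zify at ha hb ⊢
    nlinarith [sq_nonneg ((a : ℤ) - 2 * b), mul_nonneg (mul_nonneg (Int.natCast_nonneg a) (Int.natCast_nonneg a)) (Int.natCast_nonneg K)]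
  omega

lemma arith_cyc (u a b c K Q : ℕ) (hu : u ≤ a + b + c) (ha : a ^ 2 * K * 8 ≤ Q)
    (hb : b ^ 2 * K * 8 ≤ Q) (hc : c ^ 2 * K * 32 ≤ Q) : u ^ 2 * K ≤ Q := by
  have h1 : u ^ 2 ≤ (a + b + c) ^ 2 := Nat.pow_le_pow_left hu 2
  have h2 : u ^ 2 * K ≤ (a + b + c) ^ 2 * K := Nat.mul_le_mul_right K h1
  have h3 : 32 * ((a + b + c) ^ 2 * K) ≤ 32 * Q := by
    zify at ha hb hc ⊢
    nlinarith [sq_nonneg ((a : ℤ) - b), sq_nonneg ((a : ℤ) - 2 * c), sq_nonneg ((b : ℤ) - 2 * c),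
      mul_nonneg (mul_nonneg (Int.natCast_nonneg a) (Int.natCast_nonneg b)) (Int.natCast_nonneg K),
      mul_nonneg (mul_nonneg (Int.natCast_nonneg a) (Int.natCast_nonneg c)) (Int.natCast_nonneg K),
      mul_nonneg (mul_nonneg (Int.natCast_nonneg b) (Int.natCast_nonneg c)) (Int.natCast_nonneg K)]
  omega

lemma arith_tri (u a b c K Q : ℕ) (hu : u ≤ a + b + c) (ha : a ^ 2 * K * 8 ≤ Q)
    (hb : b ^ 2 * K * 8 ≤ Q) (hc : c ^ 2 * K * 8 ≤ Q) : u ^ 2 * (8 * K) ≤ 9 * Q := by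
  have h1 : u ^ 2 ≤ (a + b + c) ^ 2 := Nat.pow_le_pow_left hu 2
  zify at ha hb hc ⊢
  nlinarith [sq_nonneg ((a : ℤ) - b), sq_nonneg ((a : ℤ) - c), sq_nonneg ((b : ℤ) - c),
    mul_nonneg (mul_nonneg (Int.natCast_nonneg a) (Int.natCast_nonneg b)) (Int.natCast_nonneg K),
    mul_nonneg (mul_nonneg (Int.natCast_nonneg a) (Int.natCast_nonneg c)) (Int.natCast_nonneg K),
    mul_nonneg (mul_nonneg (Int.natCast_nonneg b) (Int.natCast_nonneg c)) (Int.natCast_nonneg K),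
    h1]
  
lemma two_nbrs_char {G : SimpleGraph V} {v : V}
    (h2 : ∃ u1 u2, G.Adj v u1 ∧ G.Adj v u2 ∧ u1 ≠ u2 ∧ ∀ x, G.Adj v x → x = u1 ∨ x = u2)
    {a b : V} (ha : G.Adj v a) (hb : G.Adj v b) (hab : a ≠ b) :
    ∀ x, G.Adj v x → x = a ∨ x = b := by
  obtain ⟨u1, u2, _, _, hne, hch⟩ := h2
  intro x hx
  rcases hch x hx with rfl | rfl <;> rcases hch a ha with rfl | rfl <;>
    rcases hch b hb with rfl | rfl <;> tauto

lemma pow2_le {w k n : ℕ} (h : w + k ≤ n) : 2 ^ w * 2 ^ k ≤ 2 ^ n := by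
  rw [← pow_add]
  exact Nat.pow_le_pow_right (by norm_num) h


/-- One reduction step: bound a class of MIS by the mis of an induced subgraph,
using the inductive hypothesis. -/
lemma step_bound [Finite V] (G : SimpleGraph V) (N : ℕ) (hN : Nat.card V ≤ N + 1)
    (IH : ∀ (V' : Type) [Finite V'] (G' : SimpleGraph V') (t' : ℕ), Nat.card V' ≤ N →
      ¬ HasInducedTriangleMatching G' (t' + 1) →
      (mis G') ^ 2 * 8 ^ t' ≤ 9 ^ t' * 2 ^ (Nat.card V'))
    (X Y : Finset V) (hX : IsIndepFinset G X) (W : Set V)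
    (hW : ∀ v, v ∈ W ↔ (v ∉ X ∧ ∀ x ∈ X, ¬ G.Adj x v) ∧ v ∉ Y)
    (Z : Finset V) (hZsub : ∀ z ∈ Z, z ∉ W) (hZne : 0 < Z.card)
    (s : ℕ) (hITMW : ¬ HasInducedTriangleMatching (G.induce W) (s + 1)) :
    ({S : Finset V | IsMaxIndepFinset G S ∧ X ⊆ S ∧ ∀ y ∈ Y, y ∉ S}).ncard ^ 2 * 8 ^ s
      * 2 ^ Z.card ≤ 9 ^ s * 2 ^ (Nat.card V) := by
  have hclass := class_le_mis_induce G X Y hX W hW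
  have hcardW : Nat.card ↥W + Z.card ≤ Nat.card V := card_W_le W Z hZsub
  have hWN : Nat.card ↥W ≤ N := by omega
  have hIH := IH ↥W (G.induce W) s hWN hITMW
  calc ({S : Finset V | IsMaxIndepFinset G S ∧ X ⊆ S ∧ ∀ y ∈ Y, y ∉ S}).ncard ^ 2 * 8 ^ s
        * 2 ^ Z.card
      ≤ (mis (G.induce W)) ^ 2 * 8 ^ s * 2 ^ Z.card := by
        have := Nat.pow_le_pow_left hclass 2
        exact Nat.mul_le_mul_right _ (Nat.mul_le_mul_right _ this)
    _ ≤ (9 ^ s * 2 ^ (Nat.card ↥W)) * 2 ^ Z.card := Nat.mul_le_mul_right _ hIH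
    _ = 9 ^ s * (2 ^ (Nat.card ↥W) * 2 ^ Z.card) := by ring
    _ ≤ 9 ^ s * 2 ^ (Nat.card V) := Nat.mul_le_mul_left _ (pow2_le hcardW)

/-- Extending an induced triangle matching of an induced subgraph by a triangle component. -/
lemma hasITM_extend {G : SimpleGraph V} {v u1 u2 : V} (W : Set V)
    (hW : ∀ w, w ∈ W ↔ w ≠ v ∧ w ≠ u1 ∧ w ≠ u2)
    (h12 : G.Adj v u1) (h13 : G.Adj v u2) (h23 : G.Adj u1 u2)
    (hv : ∀ x, G.Adj v x → x = u1 ∨ x = u2)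
    (hu1 : ∀ x, G.Adj u1 x → x = v ∨ x = u2)
    (hu2 : ∀ x, G.Adj u2 x → x = v ∨ x = u1)
    {k : ℕ} (h : HasInducedTriangleMatching (G.induce W) k) :
    HasInducedTriangleMatching G (k + 1) := by
  classical
  obtain ⟨f, hcard, hdisj, hadj, hnadj⟩ := h
  have hne1 : v ≠ u1 := G.ne_of_adj h12
  have hne2 : v ≠ u2 := G.ne_of_adj h13
  have hne3 : u1 ≠ u2 := G.ne_of_adj h23
  have htri : ∀ a ∈ ({v, u1, u2} : Finset V), ∀ b ∈ ({v, u1, u2} : Finset V), a ≠ b →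
      G.Adj a b := by
    intro a ha b hb hab
    simp only [Finset.mem_insert, Finset.mem_singleton] at ha hb
    rcases ha with rfl | rfl | rfl <;> rcases hb with rfl | rfl | rfl <;>
      first
        | exact absurd rfl hab
        | exact h12 | exact h13 | exact h23
        | exact h12.symm | exact h13.symm | exact h23.symm
  have hmapmem : ∀ (j : Fin k) (x : V),
      x ∈ (f j).map (Function.Embedding.subtype (· ∈ W)) → x ∈ W := by
    intro j x hx
    simp only [Finset.mem_map, Function.Embedding.coe_subtype] at hx
    obtain ⟨⟨x', hx'⟩, _, rfl⟩ := hx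
    exact hx'
  have hnadjtri : ∀ a ∈ ({v, u1, u2} : Finset V), ∀ x ∈ W, ¬ G.Adj a x := by
    intro a ha x hx hadjax
    rw [hW] at hx
    simp only [Finset.mem_insert, Finset.mem_singleton] at ha
    rcases ha with rfl | rfl | rfl
    · rcases hv x hadjax with rfl | rfl
      · exact hx.2.1 rfl
      · exact hx.2.2 rfl
    · rcases hu1 x hadjax with rfl | rfl
      · exact hx.1 rfl
      · exact hx.2.2 rfl
    · rcases hu2 x hadjax with rfl | rfl
      · exact hx.1 rfl
      · exact hx.2.1 rfl
  refine ⟨Fin.cons ({v, u1, u2} : Finset V)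
    (fun j => (f j).map (Function.Embedding.subtype (· ∈ W))), ?_, ?_, ?_, ?_⟩
  · intro i
    induction i using Fin.cases with
    | zero =>
      rw [Fin.cons_zero]
      rw [Finset.card_insert_of_notMem (by simp [hne1, hne2]),
        Finset.card_insert_of_notMem (by simp [hne3]), Finset.card_singleton]
    | succ j => rw [Fin.cons_succ, Finset.card_map]; exact hcard j
  · intro i j hij
    induction i using Fin.cases with
    | zero =>
      induction j using Fin.cases with
      | zero => exact absurd rfl hij
      | succ j' =>
        rw [Fin.cons_zero, Fin.cons_succ]
        rw [Finset.disjoint_left]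
        intro x hx hx'
        have hxW := hmapmem j' x hx'
        rw [hW] at hxW
        simp only [Finset.mem_insert, Finset.mem_singleton] at hx
        rcases hx with rfl | rfl | rfl
        · exact hxW.1 rfl
        · exact hxW.2.1 rfl
        · exact hxW.2.2 rfl
    | succ i' =>
      induction j using Fin.cases with
      | zero =>
        rw [Fin.cons_zero, Fin.cons_succ]
        rw [Finset.disjoint_right]
        intro x hx hx'
        have hxW := hmapmem i' x hx'
        rw [hW] at hxW
        simp only [Finset.mem_insert, Finset.mem_singleton] at hx
        rcases hx with rfl | rfl | rfl
        · exact hxW.1 rfl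
        · exact hxW.2.1 rfl
        · exact hxW.2.2 rfl
      | succ j' =>
        rw [Fin.cons_succ, Fin.cons_succ]
        refine (Finset.disjoint_map _).2 (hdisj i' j' ?_)
        intro hsucc
        exact hij (by rw [hsucc])
  · intro i
    induction i using Fin.cases with
    | zero => rw [Fin.cons_zero]; exact htri
    | succ j =>
      rw [Fin.cons_succ]
      intro a ha b hb hab
      simp only [Finset.mem_map, Function.Embedding.coe_subtype] at ha hb
      obtain ⟨a', ha', rfl⟩ := ha; obtain ⟨b', hb', rfl⟩ := hb
      have hab' : a' ≠ b' := fun h => hab (by rw [h])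
      simpa using hadj j a' ha' b' hb' hab'
  · intro i j hij a ha b hb
    induction i using Fin.cases with
    | zero =>
      induction j using Fin.cases with
      | zero => exact absurd rfl hij
      | succ j' =>
        rw [Fin.cons_zero] at ha
        rw [Fin.cons_succ] at hb
        exact hnadjtri a ha b (hmapmem j' b hb)
    | succ i' =>
      induction j using Fin.cases with
      | zero =>
        rw [Fin.cons_succ] at ha
        rw [Fin.cons_zero] at hb
        intro hadj'
        exact hnadjtri b hb a (hmapmem i' a ha) hadj'.symm
      | succ j' =>
        rw [Fin.cons_succ] at ha hb
        simp only [Finset.mem_map, Function.Embedding.coe_subtype] at ha hb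
        obtain ⟨a', ha', rfl⟩ := ha; obtain ⟨b', hb', rfl⟩ := hb
        intro hadj'
        refine hnadj i' j' (fun h => hij (by rw [h])) a' ha' b' hb' ?_
        simpa using hadj'


theorem upper_bound (N : ℕ) : ∀ (V : Type) [Finite V] (G : SimpleGraph V) (t : ℕ),
    Nat.card V ≤ N → ¬ HasInducedTriangleMatching G (t + 1) →
    (mis G) ^ 2 * 8 ^ t ≤ 9 ^ t * 2 ^ (Nat.card V) := by
  induction N with
  | zero =>
    intro V _ G t hcard _
    have h0 : Nat.card V = 0 := Nat.le_zero.1 hcard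
    have hE : IsEmpty V := by
      rcases Nat.card_eq_zero.1 h0 with h | h
      · exact h
      · exact absurd ‹Finite V› (by rw [← not_infinite_iff_finite]; exact fun hf => hf h)
    rw [mis_eq_one_of_isEmpty, h0]
    simpa using Nat.pow_le_pow_left (by norm_num : (8:ℕ) ≤ 9) t
  | succ N IH =>
    intro V _ G t hcard hITM
    classical
    by_cases hE : IsEmpty V
    · rw [mis_eq_one_of_isEmpty]
      have h1 : (8:ℕ) ^ t ≤ 9 ^ t := Nat.pow_le_pow_left (by norm_num) t
      have h2 : (1:ℕ) ≤ 2 ^ (Nat.card V) := Nat.one_le_two_pow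
      calc (1:ℕ) ^ 2 * 8 ^ t = 8 ^ t * 1 := by ring
        _ ≤ 9 ^ t * 2 ^ (Nat.card V) := Nat.mul_le_mul h1 h2
    have hne : Nonempty V := not_isEmpty_iff.1 hE
    set n := Nat.card V with hn
    have hITMW : ∀ (W : Set V), ¬ HasInducedTriangleMatching (G.induce W) (t + 1) :=
      fun W h => hITM (hasITM_of_induce h)
    by_cases h3 : ∃ u a b c, G.Adj u a ∧ G.Adj u b ∧ G.Adj u c ∧ a ≠ b ∧ a ≠ c ∧ b ≠ c
    · -- a vertex of degree at least 3
      obtain ⟨u, a, b, c, hua, hub, huc, hab, hac, hbc⟩ := h3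
      have hneua : u ≠ a := G.ne_of_adj hua
      have hneub : u ≠ b := G.ne_of_adj hub
      have hneuc : u ≠ c := G.ne_of_adj huc
      have hcover := misSet_cover2 G
        {S : Finset V | IsMaxIndepFinset G S ∧ (∅ : Finset V) ⊆ S ∧ ∀ y ∈ ({u} : Finset V), y ∉ S}
        {S : Finset V | IsMaxIndepFinset G S ∧ ({u} : Finset V) ⊆ S ∧ ∀ y ∈ (∅ : Finset V), y ∉ S}
        (by
          intro S hS
          by_cases hu : u ∈ S
          · exact Or.inr ⟨hS, Finset.singleton_subset_iff.2 hu, by simp⟩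
          · exact Or.inl ⟨hS, Finset.empty_subset S, by simpa using hu⟩)
      have hB := step_bound G N hcard IH ∅ {u}
        (fun x hx => absurd hx (Finset.notMem_empty x))
        {w : V | w ≠ u} (by intro w; simp) {u}
        (by intro z hz; rw [Finset.mem_singleton] at hz; subst hz; simp) (by simp)
        t (hITMW _)
      have hA := step_bound G N hcard IH {u} ∅
        (by intro x hx y hy; rw [Finset.mem_singleton] at hx hy; subst hx; subst hy
            exact fun h => G.irrefl h)
        {w : V | w ≠ u ∧ ¬ G.Adj u w} (by intro w; simp) {u, a, b, c}
        (by
          intro z hz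
          simp only [Finset.mem_insert, Finset.mem_singleton] at hz
          rcases hz with rfl | rfl | rfl | rfl
          · simp [Set.mem_setOf_eq]
          · simp [Set.mem_setOf_eq, hua]
          · simp [Set.mem_setOf_eq, hub]
          · simp [Set.mem_setOf_eq, huc])
        (by simp) t (hITMW _)
      rw [show ({u, a, b, c} : Finset V).card = 4 from by
        rw [Finset.card_insert_of_notMem (by simp [hneua, hneub, hneuc]),
          Finset.card_insert_of_notMem (by simp [hab, hac]),
          Finset.card_insert_of_notMem (by simp [hbc]), Finset.card_singleton]] at hA
      rw [Finset.card_singleton, pow_one] at hB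
      rw [show (2:ℕ) ^ 4 = 16 by norm_num] at hA
      exact arith_deg3 (mis G) _ _ (8 ^ t) (9 ^ t * 2 ^ n) hcover hB hA
    by_cases h0 : ∃ v, ∀ w, ¬ G.Adj v w
    · -- a vertex of degree 0
      obtain ⟨v, hv⟩ := h0
      have hcov : mis G ≤
          ({S : Finset V | IsMaxIndepFinset G S ∧ ({v} : Finset V) ⊆ S ∧
            ∀ y ∈ (∅ : Finset V), y ∉ S}).ncard := by
        apply Set.ncard_le_ncard _ (Set.toFinite _)
        intro S hS
        have hvS : v ∈ S := by
          by_contra hvn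
          obtain ⟨w, _, hw⟩ := mis_dominates hS hvn
          exact hv w hw
        exact ⟨hS, Finset.singleton_subset_iff.2 hvS, by simp⟩
      have hA := step_bound G N hcard IH {v} ∅
        (by intro x hx y hy; rw [Finset.mem_singleton] at hx hy; subst hx; subst hy
            exact fun h => G.irrefl h)
        {w : V | w ≠ v} (by intro w; simp [hv]) {v}
        (by intro z hz; rw [Finset.mem_singleton] at hz; subst hz; simp) (by simp)
        t (hITMW _)
      rw [Finset.card_singleton, pow_one] at hA
      calc (mis G) ^ 2 * 8 ^ t
          ≤ (mis G) ^ 2 * 8 ^ t * 2 := Nat.le_mul_of_pos_right _ (by norm_num)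
        _ ≤ _ := by
            refine le_trans ?_ hA
            have := Nat.pow_le_pow_left hcov 2
            exact Nat.mul_le_mul_right _ (Nat.mul_le_mul_right _ this)
    by_cases h1 : ∃ v w, G.Adj v w ∧ ∀ x, G.Adj v x → x = w
    · -- a vertex of degree 1
      obtain ⟨v, w, hvw, hchar⟩ := h1
      have hnevw : v ≠ w := G.ne_of_adj hvw
      have hcover := misSet_cover2 G
        {S : Finset V | IsMaxIndepFinset G S ∧ ({v} : Finset V) ⊆ S ∧ ∀ y ∈ (∅ : Finset V), y ∉ S}
        {S : Finset V | IsMaxIndepFinset G S ∧ ({w} : Finset V) ⊆ S ∧ ∀ y ∈ (∅ : Finset V), y ∉ S}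
        (by
          intro S hS
          by_cases hv : v ∈ S
          · exact Or.inl ⟨hS, Finset.singleton_subset_iff.2 hv, by simp⟩
          · obtain ⟨x, hxS, hx⟩ := mis_dominates hS hv
            rw [hchar x hx] at hxS
            exact Or.inr ⟨hS, Finset.singleton_subset_iff.2 hxS, by simp⟩)
      have hA := step_bound G N hcard IH {v} ∅
        (by intro x hx y hy; rw [Finset.mem_singleton] at hx hy; subst hx; subst hy
            exact fun h => G.irrefl h)
        {z : V | z ≠ v ∧ ¬ G.Adj v z} (by intro z; simp) {v, w}
        (by
          intro z hz
          simp only [Finset.mem_insert, Finset.mem_singleton] at hz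
          rcases hz with rfl | rfl
          · simp [Set.mem_setOf_eq]
          · simp [Set.mem_setOf_eq, hvw])
        (by simp) t (hITMW _)
      have hB := step_bound G N hcard IH {w} ∅
        (by intro x hx y hy; rw [Finset.mem_singleton] at hx hy; subst hx; subst hy
            exact fun h => G.irrefl h)
        {z : V | z ≠ w ∧ ¬ G.Adj w z} (by intro z; simp) {w, v}
        (by
          intro z hz
          simp only [Finset.mem_insert, Finset.mem_singleton] at hz
          rcases hz with rfl | rfl
          · simp [Set.mem_setOf_eq]
          · simp [Set.mem_setOf_eq, hvw.symm])
        (by simp) t (hITMW _)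
      rw [show ({v, w} : Finset V).card = 2 from by
        rw [Finset.card_insert_of_notMem (by simp [hnevw]), Finset.card_singleton]] at hA
      rw [show ({w, v} : Finset V).card = 2 from by
        rw [Finset.card_insert_of_notMem (by simp [hnevw.symm]), Finset.card_singleton]] at hB
      rw [show (2:ℕ) ^ 2 = 4 by norm_num] at hA hB
      exact arith_two_nbr (mis G) _ _ (8 ^ t) (9 ^ t * 2 ^ n) hcover hA hB
    · -- all degrees are exactly 2
      push_neg at h3 h0 h1
      have hsing : ∀ x : V, IsIndepFinset G {x} := by
        intro x a ha b hb
        rw [Finset.mem_singleton] at ha hb; subst ha; subst hb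
        exact fun h => G.irrefl h
      have hreg : ∀ v : V, ∃ u1 u2, G.Adj v u1 ∧ G.Adj v u2 ∧ u1 ≠ u2 ∧
          ∀ x, G.Adj v x → x = u1 ∨ x = u2 := by
        intro v
        obtain ⟨u1, hu1⟩ := h0 v
        obtain ⟨u2, hu2, hne⟩ := h1 v u1 hu1
        refine ⟨u1, u2, hu1, hu2, Ne.symm hne, ?_⟩
        intro x hx
        by_contra hc
        push_neg at hc
        exact hc.2 (h3 v u1 u2 x hu1 hu2 hx hne.symm (Ne.symm hc.1)).symm
      obtain ⟨v⟩ := hne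
      obtain ⟨u1, u2, h12, h13, hne12, hvchar⟩ := hreg v
      have hnev1 : v ≠ u1 := G.ne_of_adj h12
      have hnev2 : v ≠ u2 := G.ne_of_adj h13
      by_cases h23 : G.Adj u1 u2
      · -- {v, u1, u2} is a triangle component
        have hu1char : ∀ x, G.Adj u1 x → x = v ∨ x = u2 :=
          two_nbrs_char (hreg u1) h12.symm h23 hnev2
        have hu2char : ∀ x, G.Adj u2 x → x = v ∨ x = u1 :=
          two_nbrs_char (hreg u2) h13.symm h23.symm hnev1
        set W : Set V := {w | w ≠ v ∧ w ≠ u1 ∧ w ≠ u2} with hWdef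
        have hWmem : ∀ w, w ∈ W ↔ w ≠ v ∧ w ≠ u1 ∧ w ≠ u2 := fun w => Iff.rfl
        have hWv : ∀ z, z ∈ W ↔ (z ∉ ({v} : Finset V) ∧ ∀ x ∈ ({v} : Finset V), ¬ G.Adj x z)
            ∧ z ∉ (∅ : Finset V) := by
          intro z
          rw [hWmem z]
          constructor
          · rintro ⟨hzv, hz1, hz2⟩
            refine ⟨⟨by simpa using hzv, ?_⟩, by simp⟩
            intro x hx
            rw [Finset.mem_singleton] at hx; subst hx
            intro h
            rcases hvchar z h with rfl | rfl
            · exact hz1 rfl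
            · exact hz2 rfl
          · rintro ⟨⟨hzv, hnadj⟩, -⟩
            have hnadjv : ¬ G.Adj v z := hnadj v (Finset.mem_singleton_self v)
            refine ⟨by simpa using hzv, ?_, ?_⟩
            · rintro rfl; exact hnadjv h12
            · rintro rfl; exact hnadjv h13
        have hWu1 : ∀ z, z ∈ W ↔ (z ∉ ({u1} : Finset V) ∧ ∀ x ∈ ({u1} : Finset V), ¬ G.Adj x z)
            ∧ z ∉ (∅ : Finset V) := by
          intro z
          rw [hWmem z]
          constructor
          · rintro ⟨hzv, hz1, hz2⟩
            refine ⟨⟨by simpa using hz1, ?_⟩, by simp⟩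
            intro x hx
            rw [Finset.mem_singleton] at hx; subst hx
            intro h
            rcases hu1char z h with rfl | rfl
            · exact hzv rfl
            · exact hz2 rfl
          · rintro ⟨⟨hzu1, hnadj⟩, -⟩
            have hnadj1 : ¬ G.Adj u1 z := hnadj u1 (Finset.mem_singleton_self u1)
            refine ⟨?_, by simpa using hzu1, ?_⟩
            · rintro rfl; exact hnadj1 h12.symm
            · rintro rfl; exact hnadj1 h23
        have hWu2 : ∀ z, z ∈ W ↔ (z ∉ ({u2} : Finset V) ∧ ∀ x ∈ ({u2} : Finset V), ¬ G.Adj x z)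
            ∧ z ∉ (∅ : Finset V) := by
          intro z
          rw [hWmem z]
          constructor
          · rintro ⟨hzv, hz1, hz2⟩
            refine ⟨⟨by simpa using hz2, ?_⟩, by simp⟩
            intro x hx
            rw [Finset.mem_singleton] at hx; subst hx
            intro h
            rcases hu2char z h with rfl | rfl
            · exact hzv rfl
            · exact hz1 rfl
          · rintro ⟨⟨hzu2, hnadj⟩, -⟩
            have hnadj2 : ¬ G.Adj u2 z := hnadj u2 (Finset.mem_singleton_self u2)
            refine ⟨?_, ?_, by simpa using hzu2⟩
            · rintro rfl; exact hnadj2 h13.symm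
            · rintro rfl; exact hnadj2 h23.symm
        have hZsub : ∀ z ∈ ({v, u1, u2} : Finset V), z ∉ W := by
          intro z hz hzW
          rw [hWmem z] at hzW
          simp only [Finset.mem_insert, Finset.mem_singleton] at hz
          rcases hz with rfl | rfl | rfl
          · exact hzW.1 rfl
          · exact hzW.2.1 rfl
          · exact hzW.2.2 rfl
        have hZcard : ({v, u1, u2} : Finset V).card = 3 := by
          rw [Finset.card_insert_of_notMem (by simp [hnev1, hnev2]),
            Finset.card_insert_of_notMem (by simp [hne12]), Finset.card_singleton]
        have hcov := misSet_cover3 G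
          {S : Finset V | IsMaxIndepFinset G S ∧ ({v} : Finset V) ⊆ S ∧ ∀ y ∈ (∅ : Finset V), y ∉ S}
          {S : Finset V | IsMaxIndepFinset G S ∧ ({u1} : Finset V) ⊆ S ∧ ∀ y ∈ (∅ : Finset V), y ∉ S}
          {S : Finset V | IsMaxIndepFinset G S ∧ ({u2} : Finset V) ⊆ S ∧ ∀ y ∈ (∅ : Finset V), y ∉ S}
          (by
            intro S hS
            by_cases hvS : v ∈ S
            · exact Or.inl ⟨hS, Finset.singleton_subset_iff.2 hvS, by simp⟩
            by_cases h1S : u1 ∈ S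
            · exact Or.inr (Or.inl ⟨hS, Finset.singleton_subset_iff.2 h1S, by simp⟩)
            obtain ⟨x, hxS, hx⟩ := mis_dominates hS hvS
            rcases hvchar x hx with rfl | rfl
            · exact absurd hxS h1S
            · exact Or.inr (Or.inr ⟨hS, Finset.singleton_subset_iff.2 hxS, by simp⟩))
        rcases t with _ | t'
        · exfalso
          apply hITM
          refine hasITM_extend W hWmem h12 h13 h23 hvchar hu1char hu2char (k := 0) ?_
          exact ⟨Fin.elim0, fun i => i.elim0, fun i => i.elim0, fun i => i.elim0,
            fun i => i.elim0⟩
        · have hITMW' : ¬ HasInducedTriangleMatching (G.induce W) (t' + 1) :=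
            fun h => hITM (hasITM_extend W hWmem h12 h13 h23 hvchar hu1char hu2char h)
          have hA := step_bound G N hcard IH {v} ∅ (hsing v) W hWv {v, u1, u2} hZsub
            (by rw [hZcard]; norm_num) t' hITMW'
          have hB := step_bound G N hcard IH {u1} ∅ (hsing u1) W hWu1 {v, u1, u2} hZsub
            (by rw [hZcard]; norm_num) t' hITMW'
          have hC := step_bound G N hcard IH {u2} ∅ (hsing u2) W hWu2 {v, u1, u2} hZsub
            (by rw [hZcard]; norm_num) t' hITMW'
          rw [hZcard, show (2:ℕ) ^ 3 = 8 by norm_num] at hA hB hC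
          have harith := arith_tri (mis G) _ _ _ (8 ^ t') (9 ^ t' * 2 ^ n) hcov hA hB hC
          calc (mis G) ^ 2 * 8 ^ (t' + 1) = (mis G) ^ 2 * (8 * 8 ^ t') := by ring
            _ ≤ 9 * (9 ^ t' * 2 ^ n) := harith
            _ = 9 ^ (t' + 1) * 2 ^ n := by ring
      · -- v, u1, u2 with u1u2 not adjacent
        have hx1ex : ∃ x1, G.Adj u1 x1 ∧ x1 ≠ v := by
          obtain ⟨a, b, hxa, hxb, hneab, hch⟩ := hreg u1
          rcases hch v h12.symm with rfl | rfl
          · exact ⟨b, hxb, Ne.symm hneab⟩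
          · exact ⟨a, hxa, hneab⟩
        obtain ⟨x1, h1x1, hx1v⟩ := hx1ex
        have hu1char : ∀ x, G.Adj u1 x → x = v ∨ x = x1 :=
          two_nbrs_char (hreg u1) h12.symm h1x1 (Ne.symm hx1v)
        have hx1u2 : x1 ≠ u2 := by rintro rfl; exact h23 h1x1
        have hx1u1 : x1 ≠ u1 := (G.ne_of_adj h1x1).symm
        have hWvmem : ∀ z, z ∈ ({z : V | z ≠ v ∧ ¬ G.Adj v z} : Set V) ↔
            (z ∉ ({v} : Finset V) ∧ ∀ x ∈ ({v} : Finset V), ¬ G.Adj x z)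
            ∧ z ∉ (∅ : Finset V) := by intro z; simp [Set.mem_setOf_eq]
        have hWu1mem : ∀ z, z ∈ ({z : V | z ≠ u1 ∧ ¬ G.Adj u1 z} : Set V) ↔
            (z ∉ ({u1} : Finset V) ∧ ∀ x ∈ ({u1} : Finset V), ¬ G.Adj x z)
            ∧ z ∉ (∅ : Finset V) := by intro z; simp [Set.mem_setOf_eq]
        have hZsubv : ∀ z ∈ ({v, u1, u2} : Finset V), z ∉ ({z : V | z ≠ v ∧ ¬ G.Adj v z} : Set V) := by
          intro z hz hzW
          simp only [Finset.mem_insert, Finset.mem_singleton] at hz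
          rcases hz with rfl | rfl | rfl
          · exact hzW.1 rfl
          · exact hzW.2 h12
          · exact hzW.2 h13
        have hZsubu1 : ∀ z ∈ ({u1, v, x1} : Finset V),
            z ∉ ({z : V | z ≠ u1 ∧ ¬ G.Adj u1 z} : Set V) := by
          intro z hz hzW
          simp only [Finset.mem_insert, Finset.mem_singleton] at hz
          rcases hz with rfl | rfl | rfl
          · exact hzW.1 rfl
          · exact hzW.2 h12.symm
          · exact hzW.2 h1x1
        have hZvcard : ({v, u1, u2} : Finset V).card = 3 := by
          rw [Finset.card_insert_of_notMem (by simp [hnev1, hnev2]),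
            Finset.card_insert_of_notMem (by simp [hne12]), Finset.card_singleton]
        have hZu1card : ({u1, v, x1} : Finset V).card = 3 := by
          rw [Finset.card_insert_of_notMem (by simp [hnev1.symm, hx1u1.symm]),
            Finset.card_insert_of_notMem (by simp [hx1v.symm]), Finset.card_singleton]
        have hA := step_bound G N hcard IH {v} ∅ (hsing v) _ hWvmem {v, u1, u2} hZsubv
          (by rw [hZvcard]; norm_num) t (hITMW _)
        have hB := step_bound G N hcard IH {u1} ∅ (hsing u1) _ hWu1mem {u1, v, x1} hZsubu1
          (by rw [hZu1card]; norm_num) t (hITMW _)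
        rw [hZvcard, show (2:ℕ) ^ 3 = 8 by norm_num] at hA
        rw [hZu1card, show (2:ℕ) ^ 3 = 8 by norm_num] at hB
        by_cases hax : G.Adj u2 x1
        · -- classes for v and u1 suffice
          have hcov := misSet_cover2 G
            {S : Finset V | IsMaxIndepFinset G S ∧ ({v} : Finset V) ⊆ S ∧ ∀ y ∈ (∅ : Finset V), y ∉ S}
            {S : Finset V | IsMaxIndepFinset G S ∧ ({u1} : Finset V) ⊆ S ∧ ∀ y ∈ (∅ : Finset V), y ∉ S}
            (by
              intro S hS
              by_cases hvS : v ∈ S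
              · exact Or.inl ⟨hS, Finset.singleton_subset_iff.2 hvS, by simp⟩
              by_cases h1S : u1 ∈ S
              · exact Or.inr ⟨hS, Finset.singleton_subset_iff.2 h1S, by simp⟩
              exfalso
              obtain ⟨x, hxS, hx⟩ := mis_dominates hS hvS
              rcases hvchar x hx with rfl | rfl
              · exact h1S hxS
              obtain ⟨z, hzS, hz⟩ := mis_dominates hS h1S
              rcases hu1char z hz with rfl | rfl
              · exact hvS hzS
              · exact hS.1 hxS hzS hax)
          exact arith_cyc (mis G) _ _ 0 (8 ^ t) (9 ^ t * 2 ^ n)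
            (by simpa using hcov) hA hB (by simp)
        · -- third class {u2, x1}
          have hyex : ∃ y, G.Adj u2 y ∧ y ≠ v := by
            obtain ⟨a, b, hxa, hxb, hneab, hch⟩ := hreg u2
            rcases hch v h13.symm with rfl | rfl
            · exact ⟨b, hxb, Ne.symm hneab⟩
            · exact ⟨a, hxa, hneab⟩
          obtain ⟨y, h2y, hyv⟩ := hyex
          have hu2char : ∀ x, G.Adj u2 x → x = v ∨ x = y :=
            two_nbrs_char (hreg u2) h13.symm h2y (Ne.symm hyv)
          have hyx1 : y ≠ x1 := by rintro rfl; exact hax h2y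
          have hyu1 : y ≠ u1 := by rintro rfl; exact h23 h2y.symm
          have hyu2 : y ≠ u2 := (G.ne_of_adj h2y).symm
          have hXC : IsIndepFinset G {u2, x1} := by
            intro a ha b hb
            simp only [Finset.mem_insert, Finset.mem_singleton] at ha hb
            rcases ha with rfl | rfl <;> rcases hb with rfl | rfl
            · exact fun h => G.irrefl h
            · exact hax
            · exact fun h => hax h.symm
            · exact fun h => G.irrefl h
          have hWCmem : ∀ z, z ∈ ({z : V | (z ≠ u2 ∧ z ≠ x1) ∧ ¬ G.Adj u2 z ∧ ¬ G.Adj x1 z} : Set V) ↔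
              (z ∉ ({u2, x1} : Finset V) ∧ ∀ x ∈ ({u2, x1} : Finset V), ¬ G.Adj x z)
              ∧ z ∉ (∅ : Finset V) := by
            intro z
            simp only [Set.mem_setOf_eq, Finset.mem_insert, Finset.mem_singleton,
              Finset.notMem_empty, not_false_iff, and_true]
            constructor
            · rintro ⟨⟨hz1, hz2⟩, hz3, hz4⟩
              refine ⟨fun h => ?_, ?_⟩
              · rcases h with rfl | rfl
                · exact hz1 rfl
                · exact hz2 rfl
              · intro x hx
                rcases hx with rfl | rfl
                · exact hz3
                · exact hz4
            · rintro ⟨hne', hforall⟩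
              exact ⟨⟨fun h => hne' (Or.inl h), fun h => hne' (Or.inr h)⟩,
                hforall u2 (Or.inl rfl), hforall x1 (Or.inr rfl)⟩
          have hZsubC : ∀ z ∈ ({u2, x1, v, u1, y} : Finset V),
              z ∉ ({z : V | (z ≠ u2 ∧ z ≠ x1) ∧ ¬ G.Adj u2 z ∧ ¬ G.Adj x1 z} : Set V) := by
            intro z hz hzW
            simp only [Finset.mem_insert, Finset.mem_singleton] at hz
            rcases hz with rfl | rfl | rfl | rfl | rfl
            · exact hzW.1.1 rfl
            · exact hzW.1.2 rfl
            · exact hzW.2.1 h13.symm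
            · exact hzW.2.2 h1x1.symm
            · exact hzW.2.1 h2y
          have hZCcard : ({u2, x1, v, u1, y} : Finset V).card = 5 := by
            rw [Finset.card_insert_of_notMem
                (by simp [hx1u2.symm, hnev2.symm, hne12.symm, hyu2.symm]),
              Finset.card_insert_of_notMem (by simp [hx1v, hx1u1, hyx1.symm]),
              Finset.card_insert_of_notMem (by simp [hnev1, hyv.symm]),
              Finset.card_insert_of_notMem (by simp [hyu1.symm]), Finset.card_singleton]
          have hC := step_bound G N hcard IH {u2, x1} ∅ hXC _ hWCmem {u2, x1, v, u1, y} hZsubC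
            (by rw [hZCcard]; norm_num) t (hITMW _)
          rw [hZCcard, show (2:ℕ) ^ 5 = 32 by norm_num] at hC
          have hcov := misSet_cover3 G
            {S : Finset V | IsMaxIndepFinset G S ∧ ({v} : Finset V) ⊆ S ∧ ∀ y ∈ (∅ : Finset V), y ∉ S}
            {S : Finset V | IsMaxIndepFinset G S ∧ ({u1} : Finset V) ⊆ S ∧ ∀ y ∈ (∅ : Finset V), y ∉ S}
            {S : Finset V | IsMaxIndepFinset G S ∧ ({u2, x1} : Finset V) ⊆ S ∧ ∀ y ∈ (∅ : Finset V), y ∉ S}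
            (by
              intro S hS
              by_cases hvS : v ∈ S
              · exact Or.inl ⟨hS, Finset.singleton_subset_iff.2 hvS, by simp⟩
              by_cases h1S : u1 ∈ S
              · exact Or.inr (Or.inl ⟨hS, Finset.singleton_subset_iff.2 h1S, by simp⟩)
              obtain ⟨x, hxS, hx⟩ := mis_dominates hS hvS
              rcases hvchar x hx with rfl | rfl
              · exact absurd hxS h1S
              obtain ⟨z, hzS, hz⟩ := mis_dominates hS h1S
              rcases hu1char z hz with rfl | rfl
              · exact absurd hzS hvS
              refine Or.inr (Or.inr ⟨hS, ?_, by simp⟩)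
              rw [Finset.insert_subset_iff]
              exact ⟨hxS, Finset.singleton_subset_iff.2 hzS⟩)
          exact arith_cyc (mis G) _ _ _ (8 ^ t) (9 ^ t * 2 ^ n) hcov hA hB hC


/-! ### Construction of the extremal graph -/

/-- The cluster graph of a block function: two vertices adjacent iff distinct and in
the same block. -/
def clusterGraph {I : Type} (β : V → I) : SimpleGraph V where
  Adj a b := a ≠ b ∧ β a = β b
  symm := ⟨by rintro a b ⟨h1, h2⟩; exact ⟨h1.symm, h2.symm⟩⟩
  loopless := ⟨fun a h => h.1 rfl⟩

lemma clusterGraph_mis [Finite V] {I : Type} [Fintype I] (β : V → I)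
    (hsurj : ∀ i, ∃ v, β v = i) :
    mis (clusterGraph β) = ∏ i : I, Nat.card {v // β v = i} := by
  classical
  have hfV := Fintype.ofFinite V
  set Φ : (∀ i : I, {v // β v = i}) → Finset V :=
    fun g => Finset.univ.image (fun i => (g i : V)) with hΦ
  have hinj : Function.Injective Φ := by
    intro g g' h
    funext i
    have hgi : (g i : V) ∈ Φ g := Finset.mem_image.2 ⟨i, Finset.mem_univ _, rfl⟩
    rw [h] at hgi
    obtain ⟨jj, _, hj⟩ := Finset.mem_image.1 hgi
    have hβ : β (g' jj : V) = jj := (g' jj).2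
    rw [hj] at hβ
    have hji : jj = i := by rw [← hβ, (g i).2]
    subst hji
    exact (Subtype.ext hj).symm
  have hrange : Set.range Φ = {S : Finset V | IsMaxIndepFinset (clusterGraph β) S} := by
    ext S
    simp only [Set.mem_setOf_eq, Set.mem_range]
    constructor
    · rintro ⟨g, rfl⟩
      refine ⟨?_, ?_⟩
      · intro a ha b hb hadj
        obtain ⟨i, _, rfl⟩ := Finset.mem_image.1 ha
        obtain ⟨j, _, rfl⟩ := Finset.mem_image.1 hb
        have hij : i = j := by rw [← (g i).2, ← (g j).2, hadj.2]
        subst hij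
        exact hadj.1 rfl
      · intro T hT hsub
        apply Finset.Subset.antisymm hsub
        intro x hxT
        have hgi : (g (β x) : V) ∈ Φ g := Finset.mem_image.2 ⟨β x, Finset.mem_univ _, rfl⟩
        by_cases hx : x = (g (β x) : V)
        · rw [hx]; exact hgi
        · exact absurd ⟨hx, (g (β x)).2.symm⟩ (hT hxT (hsub hgi))
    · intro hS
      have hex : ∀ i : I, ∃ v, v ∈ S ∧ β v = i := by
        intro i
        obtain ⟨v0, hv0⟩ := hsurj i
        by_cases hv0S : v0 ∈ S
        · exact ⟨v0, hv0S, hv0⟩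
        · obtain ⟨w, hwS, hw⟩ := mis_dominates hS hv0S
          exact ⟨w, hwS, by rw [← hw.2, hv0]⟩
      choose g hgS hgβ using hex
      refine ⟨fun i => ⟨g i, hgβ i⟩, ?_⟩
      apply Finset.Subset.antisymm
      · intro x hx
        obtain ⟨i, _, rfl⟩ := Finset.mem_image.1 hx
        exact hgS i
      · intro x hxS
        have hgx : g (β x) ∈ S := hgS (β x)
        have hxeq : x = g (β x) := by
          by_contra hne'
          exact hS.1 hxS hgx ⟨hne', (hgβ (β x)).symm⟩
        refine Finset.mem_image.2 ⟨β x, Finset.mem_univ _, ?_⟩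
        exact hxeq.symm
  calc mis (clusterGraph β) = (Set.range Φ).ncard := by rw [mis, hrange]
    _ = Nat.card ↥(Set.range Φ) := (Nat.card_coe_set_eq _).symm
    _ = Nat.card (∀ i : I, {v // β v = i}) := Nat.card_range_of_injective hinj
    _ = ∏ i : I, Nat.card {v // β v = i} := by
        rw [Nat.card_eq_fintype_card, Fintype.card_pi]
        exact Finset.prod_congr rfl (fun i _ => (Nat.card_eq_fintype_card).symm)

lemma isMaxIndep_map_of_comap {V' : Type} (e : V' ≃ V) (H : SimpleGraph V) (S : Finset V')
    (hS : IsMaxIndepFinset (H.comap ⇑e) S) : IsMaxIndepFinset H (S.map e.toEmbedding) := by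
  classical
  constructor
  · intro a ha b hb
    rw [Finset.mem_map] at ha hb
    obtain ⟨a', ha', rfl⟩ := ha
    obtain ⟨b', hb', rfl⟩ := hb
    exact hS.1 ha' hb'
  · intro T hT hsub
    have hT'indep : IsIndepFinset (H.comap ⇑e) (T.map e.symm.toEmbedding) := by
      intro a ha b hb
      rw [Finset.mem_map] at ha hb
      obtain ⟨a', ha', rfl⟩ := ha
      obtain ⟨b', hb', rfl⟩ := hb
      intro hadj
      apply hT ha' hb'
      simpa using hadj
    have hsub' : S ⊆ T.map e.symm.toEmbedding := by
      intro s hs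
      have hes : e s ∈ T := hsub (Finset.mem_map_of_mem _ hs)
      rw [Finset.mem_map]
      exact ⟨e s, hes, by simp⟩
    have heq : S = T.map e.symm.toEmbedding := hS.2 _ hT'indep hsub'
    apply Finset.Subset.antisymm hsub
    intro x hxT
    have hx' : e.symm x ∈ T.map e.symm.toEmbedding := Finset.mem_map_of_mem _ hxT
    rw [← heq] at hx'
    rw [Finset.mem_map]
    exact ⟨e.symm x, hx', by simp⟩

lemma mis_comap_le {V' : Type} [Finite V] (e : V' ≃ V) (H : SimpleGraph V) :
    mis (H.comap ⇑e) ≤ mis H := by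
  apply Set.ncard_le_ncard_of_injOn (fun S => S.map e.toEmbedding)
  · exact fun S hS => isMaxIndep_map_of_comap e H S hS
  · exact fun S1 _ S2 _ h => Finset.map_injective _ h

lemma mis_comap_eq {V' : Type} [Finite V] (e : V' ≃ V) (H : SimpleGraph V) :
    mis (H.comap ⇑e) = mis H := by
  have hV' : Finite V' := Finite.of_equiv V e.symm
  have h1 := mis_comap_le e H
  have h2 := mis_comap_le e.symm (H.comap ⇑e)
  have hgr : (H.comap ⇑e).comap ⇑e.symm = H := by
    ext a b
    simp [SimpleGraph.comap_adj]
  rw [hgr] at h2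
  exact le_antisymm h1 h2

lemma hasITM_comap {V' : Type} (e : V' ≃ V) (H : SimpleGraph V) {k : ℕ}
    (h : HasInducedTriangleMatching (H.comap ⇑e) k) : HasInducedTriangleMatching H k := by
  obtain ⟨f, hcard, hdisj, hadj, hnadj⟩ := h
  refine ⟨fun i => (f i).map e.toEmbedding, ?_, ?_, ?_, ?_⟩
  · intro i; rw [Finset.card_map]; exact hcard i
  · intro i j hij; exact (Finset.disjoint_map _).2 (hdisj i j hij)
  · intro i a ha b hb hab
    rw [Finset.mem_map] at ha hb
    obtain ⟨a', ha', rfl⟩ := ha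
    obtain ⟨b', hb', rfl⟩ := hb
    have hab' : a' ≠ b' := fun h => hab (by rw [h])
    exact hadj i a' ha' b' hb' hab'
  · intro i j hij a ha b hb
    rw [Finset.mem_map] at ha hb
    obtain ⟨a', ha', rfl⟩ := ha
    obtain ⟨b', hb', rfl⟩ := hb
    exact hnadj i j hij a' ha' b' hb'


lemma exists_extremal (n t m2 : ℕ) (hn : n = 3 * t + 2 * m2) :
    ∃ G : SimpleGraph (Fin n), ¬ HasInducedTriangleMatching G (t + 1) ∧
      mis G = 3 ^ t * 2 ^ m2 := by
  classical
  set β : (Fin t × Fin 3) ⊕ (Fin m2 × Fin 2) → Fin t ⊕ Fin m2 :=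
    Sum.map Prod.fst Prod.fst with hβ
  have hcards : Fintype.card (Fin n) =
      Fintype.card ((Fin t × Fin 3) ⊕ (Fin m2 × Fin 2)) := by
    simp only [Fintype.card_sum, Fintype.card_prod, Fintype.card_fin]
    omega
  obtain e := Fintype.equivOfCardEq hcards
  set H := clusterGraph β with hH
  have hfib3 : ∀ j : Fin t,
      (Finset.univ.filter (fun v => β v = Sum.inl j)).card = 3 := by
    intro j
    have himg : Finset.univ.filter (fun v => β v = Sum.inl j) =
        (Finset.univ : Finset (Fin 3)).image (fun x => Sum.inl (j, x)) := by
      ext v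
      simp only [Finset.mem_filter, Finset.mem_univ, true_and, Finset.mem_image]
      constructor
      · intro hv
        cases v with
        | inl p =>
          have hpj : p.1 = j := by simpa [hβ] using hv
          exact ⟨p.2, by rw [← hpj]⟩
        | inr p => simp [hβ] at hv
      · rintro ⟨x, rfl⟩
        simp [hβ]
    rw [himg, Finset.card_image_of_injective _ (fun x y h => by simpa using h)]
    simp
  have hfib2 : ∀ j : Fin m2,
      (Finset.univ.filter (fun v => β v = Sum.inr j)).card = 2 := by
    intro j
    have himg : Finset.univ.filter (fun v => β v = Sum.inr j) =
        (Finset.univ : Finset (Fin 2)).image (fun x => Sum.inr (j, x)) := by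
      ext v
      simp only [Finset.mem_filter, Finset.mem_univ, true_and, Finset.mem_image]
      constructor
      · intro hv
        cases v with
        | inr p =>
          have hpj : p.1 = j := by simpa [hβ] using hv
          exact ⟨p.2, by rw [← hpj]⟩
        | inl p => simp [hβ] at hv
      · rintro ⟨x, rfl⟩
        simp [hβ]
    rw [himg, Finset.card_image_of_injective _ (fun x y h => by simpa using h)]
    simp
  refine ⟨H.comap ⇑e, ?_, ?_⟩
  · intro hG
    obtain ⟨f, hcard, hdisj, hadj, hnadj⟩ := hasITM_comap e H hG
    have hblocka : ∀ k : Fin (t + 1), ∃ a, a ∈ f k := by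
      intro k
      apply Finset.card_pos.1
      rw [hcard k]; norm_num
    choose a ha using hblocka
    have hsame : ∀ k, ∀ b ∈ f k, β b = β (a k) := by
      intro k b hb
      by_cases hba : b = a k
      · rw [hba]
      · exact (hadj k b hb (a k) (ha k) hba).2
    have hinl : ∀ k : Fin (t + 1), ∃ j : Fin t, β (a k) = Sum.inl j := by
      intro k
      cases hβa : β (a k) with
      | inl j => exact ⟨j, rfl⟩
      | inr j =>
        exfalso
        have hsub : f k ⊆ Finset.univ.filter (fun v => β v = Sum.inr j) := by
          intro b hb
          rw [Finset.mem_filter]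
          exact ⟨Finset.mem_univ _, by rw [hsame k b hb, hβa]⟩
        have hle := Finset.card_le_card hsub
        rw [hcard k, hfib2 j] at hle
        omega
    choose jj hjj using hinl
    have hjinj : Function.Injective jj := by
      intro k k' hkk
      by_contra hne'
      have hsub : f k ∪ f k' ⊆ Finset.univ.filter (fun v => β v = Sum.inl (jj k)) := by
        intro b hb
        rw [Finset.mem_filter]
        refine ⟨Finset.mem_univ _, ?_⟩
        rcases Finset.mem_union.1 hb with hb | hb
        · rw [hsame k b hb, hjj k]
        · rw [hsame k' b hb, hjj k', ← hkk]
      have hle := Finset.card_le_card hsub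
      rw [Finset.card_union_of_disjoint (hdisj k k' hne'), hcard k, hcard k',
        hfib3 (jj k)] at hle
      omega
    have hcle := Fintype.card_le_of_injective jj hjinj
    simp only [Fintype.card_fin] at hcle
    omega
  · have hsurj : ∀ i : Fin t ⊕ Fin m2, ∃ v, β v = i := by
      rintro (j | j)
      · exact ⟨Sum.inl (j, 0), by simp [hβ]⟩
      · exact ⟨Sum.inr (j, 0), by simp [hβ]⟩
    rw [mis_comap_eq e H, hH, clusterGraph_mis β hsurj, Fintype.prod_sum_type]
    have h3 : ∀ j : Fin t, Nat.card {v // β v = Sum.inl j} = 3 := by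
      intro j
      rw [Nat.card_eq_fintype_card, Fintype.card_subtype, hfib3 j]
    have h2 : ∀ j : Fin m2, Nat.card {v // β v = Sum.inr j} = 2 := by
      intro j
      rw [Nat.card_eq_fintype_card, Fintype.card_subtype, hfib2 j]
    simp only [h3, h2]
    simp [Finset.prod_const, Finset.card_univ]

end MISAux

theorem mis_max_no_induced_triangle_matching_even (n t : ℕ) (ht : 3 * t ≤ n)
    (m : ℕ) (hm : m = n - 3 * t) (hme : Even m) :
    (∀ G : SimpleGraph (Fin n), ¬ HasInducedTriangleMatching G (t + 1) →
      mis G ≤ 3 ^ t * 2 ^ (m / 2)) ∧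
    (∃ G : SimpleGraph (Fin n), ¬ HasInducedTriangleMatching G (t + 1) ∧
      mis G = 3 ^ t * 2 ^ (m / 2)) := by
  constructor
  · intro G hITM
    have hup := MISAux.upper_bound n (Fin n) G t
      (by rw [Nat.card_eq_fintype_card, Fintype.card_fin]) hITM
    rw [Nat.card_eq_fintype_card, Fintype.card_fin] at hup
    have hn3 : n = 3 * t + m := by omega
    have h8 : (2:ℕ) ^ n = 8 ^ t * 2 ^ m := by
      rw [hn3, pow_add, pow_mul]
      norm_num
    have hkey : mis G ^ 2 * 8 ^ t ≤ (9 ^ t * 2 ^ m) * 8 ^ t := by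
      calc mis G ^ 2 * 8 ^ t ≤ 9 ^ t * 2 ^ n := hup
        _ = (9 ^ t * 2 ^ m) * 8 ^ t := by rw [h8]; ring
    have hkey2 : mis G ^ 2 ≤ 9 ^ t * 2 ^ m :=
      Nat.le_of_mul_le_mul_right hkey (by positivity)
    have hsq : (3 ^ t * 2 ^ (m / 2)) ^ 2 = 9 ^ t * 2 ^ m := by
      have hm2 : m / 2 * 2 = m := Nat.div_two_mul_two_of_even hme
      rw [mul_pow, ← pow_mul, ← pow_mul, hm2, mul_comm t 2, pow_mul]
      norm_num
    rw [← Nat.pow_le_pow_iff_left (two_ne_zero), hsq]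
    exact hkey2
  · obtain ⟨r, hr⟩ := hme
    have hn2 : n = 3 * t + 2 * r := by omega
    obtain ⟨G, hG1, hG2⟩ := MISAux.exists_extremal n t r hn2
    exact ⟨G, hG1, by rw [hG2, show m / 2 = r from by omega]⟩
end

section
/- Let n ≥ 5 be an odd integer. Then the maximum of mis(G) over all simple graphs G on n vertices that contain no induced triangle matching of size 1 (equivalently, over all triangle-free graphs on n vertices) equals 5 · 2^{(n−5)/2}; that is, every such graph G satisfies mis(G) ≤ 5 · 2^{(n−5)/2}, and some such graph attains this value. -/
namespace HT



def B : ℕ → ℕ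
  | 0 => 1
  | 1 => 1
  | 2 => 2
  | 3 => 2
  | 4 => 4
  | 5 => 5
  | (n+6) => 2 * B (n+4)

lemma B_add_six (n : ℕ) : B (n+6) = 2 * B (n+4) := rfl

lemma B_pos : ∀ n, 0 < B n
  | 0 => by decide
  | 1 => by decide
  | 2 => by decide
  | 3 => by decide
  | 4 => by decide
  | 5 => by decide
  | (n+6) => by rw [B]; have := B_pos (n+4); omega

lemma B_le_succ : ∀ n, B n ≤ B (n+1)
  | 0 => by decide
  | 1 => by decide
  | 2 => by decide
  | 3 => by decide
  | 4 => by decide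
  | 5 => by show B 5 ≤ 2 * B 4; decide
  | (n+6) => by
      have h1 : B (n+6) = 2 * B (n+4) := rfl
      have h2 : B (n+6+1) = 2 * B (n+5) := rfl
      have h3 : B (n+4) ≤ B (n+4+1) := B_le_succ (n+4)
      have h4 : n+4+1 = n+5 := rfl
      rw [h1, h2]; rw [h4] at h3; omega

lemma B_mono : Monotone B := monotone_nat_of_le_succ B_le_succ

lemma B_double : ∀ n, 2 * B n ≤ B (n+2)
  | 0 => by decide
  | 1 => by decide
  | 2 => by decide
  | 3 => by decide
  | (n+4) => by
      have : B (n+4+2) = 2 * B (n+4) := rfl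
      rw [this]

/-- L1: `B (m+1) + B m ≤ B (m+3)`. -/
lemma B_consec : ∀ m, B (m+1) + B m ≤ B (m+3)
  | 0 => by decide
  | 1 => by decide
  | 2 => by decide
  | 3 => by decide
  | 4 => by show B 5 + B 4 ≤ 2 * B 5; decide
  | 5 => by show 2 * B 4 + B 5 ≤ 2 * (2 * B 4); decide
  | (m+6) => by
      have h1 : B (m+6+1) = 2 * B (m+5) := rfl
      have h2 : B (m+6) = 2 * B (m+4) := rfl
      have h3 : B (m+6+3) = 2 * B (m+4+3) := rfl
      have h4 : B (m+4+1) + B (m+4) ≤ B (m+4+3) := B_consec (m+4)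
      have h5 : m+4+1 = m+5 := rfl
      rw [h1, h2, h3]; rw [h5] at h4; omega

/-- `T m = ∑_{j ≤ m} B j`. -/
def T (m : ℕ) : ℕ := ∑ j ∈ Finset.range (m+1), B j

lemma T_succ (m : ℕ) : T (m+1) = T m + B (m+1) := by
  simp [T, Finset.sum_range_succ]

/-- L2: `T m ≤ B (m+4)`. -/
lemma T_le : ∀ m, T m ≤ B (m+4)
  | 0 => by simp [T, B]
  | 1 => by simp [T, Finset.sum_range_succ]; decide
  | (m+2) => by
      have h1 : T (m+2) = T m + B (m+1) + B (m+2) := by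
        have : T (m+2) = T (m+1) + B (m+2) := T_succ (m+1)
        rw [this, T_succ]
      have h2 : T m ≤ B (m+4) := T_le m
      have h3 : B (m+1+1) + B (m+1) ≤ B (m+1+3) := B_consec (m+1)
      have h4 : B (m+2+4) = 2 * B (m+4) := rfl
      have h5 : m+1+1 = m+2 := rfl
      have h6 : m+1+3 = m+4 := rfl
      rw [h5, h6] at h3
      rw [h1, h4]; omega


lemma B_two_le (m : ℕ) : B m + B m ≤ B (m+2) := by have := B_double m; omega

lemma N3' (m : ℕ) : B (m+1) + B m + B m ≤ B (m+4) := by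
  have h1 : B (m+1) ≤ B (m+2) := B_le_succ _
  have h2 : B m + B m ≤ B (m+2) := B_two_le m
  have h3 : B (m+2) + B (m+2) ≤ B (m+4) := by
    have := B_two_le (m+2); have h : m+2+2 = m+4 := rfl; rwa [h] at this
  omega

lemma N5' : ∀ m, 5 * B m ≤ B (m+5)
  | 0 => by decide
  | 1 => by decide
  | 2 => by decide
  | 3 => by decide
  | 4 => by decide
  | 5 => by decide
  | (m+6) => by
      have h1 : B (m+6) = 2 * B (m+4) := rfl
      have h2 : B (m+6+5) = 2 * B (m+4+5) := rfl
      have h3 := N5' (m+4)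
      rw [h1, h2]; omega

lemma N6' : ∀ m, B (m+3) + B (m+2) + B (m+1) + B m ≤ B (m+6)
  | 0 => by decide
  | 1 => by decide
  | 2 => by decide
  | 3 => by decide
  | 4 => by decide
  | 5 => by decide
  | (m+6) => by
      show 2 * B (m+7) + (2 * B (m+6)) + (2 * B (m+5)) + (2 * B (m+4)) ≤ 2 * B (m+10)
      have h : B (m+7) + B (m+6) + B (m+5) + B (m+4) ≤ B (m+10) := N6' (m+4)
      omega

lemma N7 (n δ : ℕ) (h3 : 3 ≤ δ) (hn : 2*δ ≤ n) :
    B (n-(δ+1)) + ∑ i ∈ Finset.range δ, B (n-(δ+1+i)) ≤ B n := by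
  rcases eq_or_lt_of_le h3 with h | h4
  · -- δ = 3
    subst h
    obtain ⟨m, rfl⟩ : ∃ m, n = m + 6 := ⟨n - 6, by omega⟩
    have e0 : m+6-(3+1) = m+2 := by omega
    have e1 : m+6-(3+1+0) = m+2 := by omega
    have e2 : m+6-(3+1+1) = m+1 := by omega
    have e3 : m+6-(3+1+2) = m := by omega
    rw [Finset.sum_range_succ, Finset.sum_range_succ, Finset.sum_range_one,
      e0, e2, e3]
    have h5 := N6' m
    have h6 : B (m+2) ≤ B (m+3) := B_le_succ _
    omega
  · -- δ ≥ 4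
    have h4' : 4 ≤ δ := h4
    have hsum : ∑ i ∈ Finset.range δ, B (n-(δ+1+i)) ≤ T (n-5) := by
      have himg : ∑ j ∈ (Finset.range δ).image (fun i => n-(δ+1+i)), B j
          = ∑ i ∈ Finset.range δ, B (n-(δ+1+i)) :=
        Finset.sum_image (by
          intro x hx y hy hxy
          simp only [Finset.mem_coe, Finset.mem_range] at hx hy hxy
          omega)
      rw [← himg]
      have hsub : (Finset.range δ).image (fun i => n-(δ+1+i)) ⊆ Finset.range (n-5+1) := by
        intro j hj
        simp only [Finset.mem_image, Finset.mem_range] at hj ⊢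
        obtain ⟨i, hi, rfl⟩ := hj
        omega
      calc ∑ j ∈ (Finset.range δ).image (fun i => n-(δ+1+i)), B j
          ≤ ∑ j ∈ Finset.range (n-5+1), B j := Finset.sum_le_sum_of_subset hsub
        _ = T (n-5) := rfl
    have h1 : B (n-(δ+1)) ≤ B (n-5) := B_mono (by omega)
    have h2 : T (n-5) + B (n-5+1) = T (n-5+1) := (T_succ _).symm
    have h3' : B (n-5) ≤ B (n-5+1) := B_le_succ _
    have h4'' : T (n-5+1) ≤ B (n-5+1+4) := T_le _
    have h5 : n-5+1+4 = n := by omega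
    rw [h5] at h4''
    omega

/-- `B` at odd values `≥ 5`. -/
lemma B_odd : ∀ k, B (5 + 2*k) = 5 * 2^k
  | 0 => by decide
  | (k+1) => by
      have e : 5 + 2*(k+1) = (2*k+1) + 6 := by omega
      rw [e, B_add_six]
      have e2 : 2*k+1+4 = 5 + 2*k := by omega
      rw [e2, B_odd k]
      ring



variable {V : Type} [Fintype V] [DecidableEq V]

lemma indep_insert (G : SimpleGraph V) {S : Finset V} (hS : IsIndepFinset G S)
    {x : V} (hx : ∀ s ∈ S, ¬ G.Adj x s) : IsIndepFinset G (insert x S) := by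
  intro a ha b hb hab
  rcases Finset.mem_insert.1 ha with rfl | ha'
  · rcases Finset.mem_insert.1 hb with rfl | hb'
    · exact G.irrefl hab
    · exact hx b hb' hab
  · rcases Finset.mem_insert.1 hb with rfl | hb'
    · exact hx a ha' hab.symm
    · exact hS ha' hb' hab

lemma mem_or_adj (G : SimpleGraph V) {S : Finset V} (hS : IsMaxIndepFinset G S) (x : V) :
    x ∈ S ∨ ∃ s ∈ S, G.Adj x s := by
  by_contra h
  push_neg at h
  obtain ⟨hx, hadj⟩ := h
  have : S = insert x S :=
    hS.2 _ (indep_insert G hS.1 hadj) (Finset.subset_insert _ _)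
  exact hx (this ▸ Finset.mem_insert_self x S)

/-- Key injection: MIS's of `G` containing `T` and avoiding `X` inject into
MIS's of the graph induced outside `R`, when `R` contains `T` and all its
neighbours, and everything in `R` is in `T`, in `X`, or adjacent to `T`. -/
lemma classCount (G : SimpleGraph V) (T X R : Finset V)
    (hTR : T ⊆ R)
    (hnbr : ∀ t ∈ T, ∀ y, G.Adj t y → y ∈ R)
    (hcov : ∀ r ∈ R, r ∈ T ∨ r ∈ X ∨ ∃ t ∈ T, G.Adj t r) :
    {S : Finset V | IsMaxIndepFinset G S ∧ T ⊆ S ∧ ∀ x ∈ X, x ∉ S}.ncard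
      ≤ mis (G.induce {x : V | x ∉ R}) := by
  classical
  set C := {S : Finset V | IsMaxIndepFinset G S ∧ T ⊆ S ∧ ∀ x ∈ X, x ∉ S} with hC
  have htrace : ∀ S ∈ C, ∀ r ∈ S, r ∈ R → r ∈ T := by
    intro S hS r hrS hrR
    rcases hcov r hrR with h | h | ⟨t, ht, hadj⟩
    · exact h
    · exact absurd hrS (hS.2.2 r h)
    · exact absurd hadj (hS.1.1 (hS.2.1 ht) hrS)
  let φ : Finset V → Finset {x : V // x ∈ {x : V | x ∉ R}} :=
    fun S => S.subtype _
  have hmemφ : ∀ (S : Finset V) (u : {x : V // x ∈ {x : V | x ∉ R}}),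
      u ∈ φ S ↔ u.1 ∈ S := by
    intro S u; exact Finset.mem_subtype
  have hφmax : ∀ S ∈ C, IsMaxIndepFinset (G.induce {x : V | x ∉ R}) (φ S) := by
    intro S hS
    constructor
    · intro a ha b hb hab
      exact hS.1.1 ((hmemφ S a).1 ha) ((hmemφ S b).1 hb) hab
    · intro t ht hsub
      refine Finset.Subset.antisymm hsub ?_
      set t' : Finset V := T ∪ t.map (Function.Embedding.subtype _) with ht'
      have htmem : ∀ x : V, x ∈ t' ↔ x ∈ T ∨ ∃ u ∈ t, (u : V) = x := by
        intro x
        simp [ht', Function.Embedding.subtype]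
      have htind : IsIndepFinset G t' := by
        intro a ha b hb hab
        rcases (htmem a).1 ha with haT | ⟨a', ha', rfl⟩
        · rcases (htmem b).1 hb with hbT | ⟨b', hb', rfl⟩
          · exact hS.1.1 (hS.2.1 haT) (hS.2.1 hbT) hab
          · exact b'.2 (hnbr a haT _ hab)
        · rcases (htmem b).1 hb with hbT | ⟨b', hb', rfl⟩
          · exact a'.2 (hnbr b hbT _ hab.symm)
          · exact ht ha' hb' hab
      have hSt' : S ⊆ t' := by
        intro s hsS
        by_cases hR : s ∈ R
        · exact (htmem s).2 (Or.inl (htrace S hS s hsS hR))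
        · refine (htmem s).2 (Or.inr ⟨⟨s, hR⟩, hsub ((hmemφ S _).2 hsS), rfl⟩)
      have hEq : S = t' := hS.1.2 t' htind hSt'
      intro u hu
      have hu' : (u : V) ∈ t' := (htmem u).2 (Or.inr ⟨u, hu, rfl⟩)
      exact (hmemφ S u).2 (hEq ▸ hu')
  have hφinj : Set.InjOn φ C := by
    have key : ∀ S₁ ∈ C, ∀ S₂ ∈ C, φ S₁ = φ S₂ → S₁ ⊆ S₂ := by
      intro S₁ h₁ S₂ h₂ hφ x hx
      by_cases hR : x ∈ R
      · exact h₂.2.1 (htrace S₁ h₁ x hx hR)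
      · have : (⟨x, hR⟩ : {x : V // x ∈ {x : V | x ∉ R}}) ∈ φ S₂ := by
          rw [← hφ]; exact (hmemφ S₁ _).2 hx
        exact (hmemφ S₂ _).1 this
    intro S₁ h₁ S₂ h₂ hφ
    exact Finset.Subset.antisymm (key S₁ h₁ S₂ h₂ hφ) (key S₂ h₂ S₁ h₁ hφ.symm)
  calc C.ncard = (φ '' C).ncard := (Set.ncard_image_of_injOn hφinj).symm
    _ ≤ mis (G.induce {x : V | x ∉ R}) := by
        refine Set.ncard_le_ncard ?_ (Set.toFinite _)
        rintro y ⟨S, hS, rfl⟩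
        exact hφmax S hS



variable {V : Type} [Fintype V] [DecidableEq V]

/-- mis is monotone along graph isomorphisms (one direction suffices, applied twice). -/
lemma mis_le_of_iso {W : Type} [Fintype W] [DecidableEq W]
    {G : SimpleGraph V} {H : SimpleGraph W} (e : G ≃g H) : mis G ≤ mis H := by
  classical
  set F : Finset V → Finset W := fun S => S.image e with hF
  have hmem : ∀ (S : Finset V) (w : W), w ∈ F S ↔ e.symm w ∈ S := by
    intro S w
    simp only [hF, Finset.mem_image]
    constructor
    · rintro ⟨x, hx, rfl⟩; simpa using hx
    · intro h; exact ⟨e.symm w, h, by simp⟩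
  have hmax : ∀ S : Finset V, IsMaxIndepFinset G S → IsMaxIndepFinset H (F S) := by
    intro S hS
    constructor
    · intro a ha b hb hab
      rw [hmem] at ha hb
      have : G.Adj (e.symm a) (e.symm b) := by
        have := e.symm.map_adj_iff.2 hab
        simpa using this
      exact hS.1 ha hb this
    · intro t ht hsub
      set t' : Finset V := t.image e.symm with ht'
      have htm : ∀ v : V, v ∈ t' ↔ e v ∈ t := by
        intro v
        simp only [ht', Finset.mem_image]
        constructor
        · rintro ⟨x, hx, rfl⟩; simpa using hx
        · intro h; exact ⟨e v, h, by simp⟩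
      have ht'ind : IsIndepFinset G t' := by
        intro a ha b hb hab
        exact ht ((htm a).1 ha) ((htm b).1 hb) (e.map_adj_iff.2 hab)
      have hSt' : S ⊆ t' := by
        intro s hs
        exact (htm s).2 (hsub ((hmem S _).2 (by simpa using hs)))
      have hEq : S = t' := hS.2 t' ht'ind hSt'
      refine Finset.Subset.antisymm hsub ?_
      intro u hu
      have : e.symm u ∈ t' := (htm _).2 (by simpa using hu)
      rw [← hEq] at this
      exact (hmem S u).2 this
  have hinj : Set.InjOn F {s : Finset V | IsMaxIndepFinset G s} := by
    intro s₁ _ s₂ _ h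
    ext x
    have := congrArg (fun t => e x ∈ t) h
    simpa [hmem] using this
  calc mis G = (F '' {s : Finset V | IsMaxIndepFinset G s}).ncard :=
        (Set.ncard_image_of_injOn hinj).symm
    _ ≤ mis H := by
        refine Set.ncard_le_ncard ?_ (Set.toFinite _)
        rintro y ⟨S, hS, rfl⟩
        exact hmax S hS

lemma mis_eq_of_iso {W : Type} [Fintype W] [DecidableEq W]
    {G : SimpleGraph V} {H : SimpleGraph W} (e : G ≃g H) : mis G = mis H :=
  le_antisymm (mis_le_of_iso e) (mis_le_of_iso e.symm)


/-- Exact version of `classCount` (with `X = ∅`): when additionally no edges leave `R`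
and `T` dominates `R`, the count is exactly `mis` of the graph outside `R`. -/
lemma classCountExact (G : SimpleGraph V) (T R : Finset V)
    (hTind : IsIndepFinset G T)
    (hTR : T ⊆ R)
    (hnbr : ∀ t ∈ T, ∀ y, G.Adj t y → y ∈ R)
    (hmaxT : ∀ r ∈ R, r ∉ T → ∃ t ∈ T, G.Adj t r) :
    {S : Finset V | IsMaxIndepFinset G S ∧ T ⊆ S}.ncard
      = mis (G.induce {x : V | x ∉ R}) := by
  classical
  refine le_antisymm ?_ ?_
  · refine le_trans (Set.ncard_le_ncard ?_ (Set.toFinite _))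
      (classCount G T ∅ R hTR hnbr ?_)
    · intro S hS; exact ⟨hS.1, hS.2, by simp⟩
    · intro r hr
      by_cases hT : r ∈ T
      · exact Or.inl hT
      · exact Or.inr (Or.inr (hmaxT r hr hT))
  · set Ψ : Finset {x : V // x ∈ {x : V | x ∉ R}} → Finset V :=
      fun M => T ∪ M.map (Function.Embedding.subtype _) with hΨ
    have hΨmem : ∀ (M : Finset {x : V // x ∈ {x : V | x ∉ R}}) (x : V),
        x ∈ Ψ M ↔ x ∈ T ∨ ∃ u ∈ M, (u : V) = x := by
      intro M x; simp [hΨ, Function.Embedding.subtype]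
    have hMIS : ∀ M, IsMaxIndepFinset (G.induce {x : V | x ∉ R}) M →
        IsMaxIndepFinset G (Ψ M) ∧ T ⊆ Ψ M := by
      intro M hM
      have hind : IsIndepFinset G (Ψ M) := by
        intro a ha b hb hab
        rcases (hΨmem M a).1 ha with haT | ⟨a', ha', rfl⟩
        · rcases (hΨmem M b).1 hb with hbT | ⟨b', hb', rfl⟩
          · exact hTind haT hbT hab
          · exact b'.2 (hnbr a haT _ hab)
        · rcases (hΨmem M b).1 hb with hbT | ⟨b', hb', rfl⟩
          · exact a'.2 (hnbr b hbT _ hab.symm)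
          · exact hM.1 ha' hb' hab
      refine ⟨⟨hind, ?_⟩, Finset.subset_union_left⟩
      intro t ht hsub
      refine Finset.Subset.antisymm hsub ?_
      intro x hx
      by_cases hR : x ∈ R
      · by_cases hT : x ∈ T
        · exact (hΨmem M x).2 (Or.inl hT)
        · obtain ⟨t₀, ht₀, hadj⟩ := hmaxT x hR hT
          exact absurd hadj (ht (hsub ((hΨmem M t₀).2 (Or.inl ht₀))) hx)
      · have hxM : (⟨x, hR⟩ : {x : V // x ∈ {x : V | x ∉ R}}) ∈ M := by
          have hins : IsIndepFinset (G.induce {x : V | x ∉ R})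
              (insert ⟨x, hR⟩ M) := by
            refine indep_insert _ hM.1 ?_
            intro m hm hadj
            have hmt : (m : V) ∈ t := hsub ((hΨmem M m).2 (Or.inr ⟨m, hm, rfl⟩))
            exact ht hx hmt hadj
          have := hM.2 _ hins (Finset.subset_insert _ _)
          rw [this]; exact Finset.mem_insert_self _ _
        exact (hΨmem M x).2 (Or.inr ⟨⟨x, hR⟩, hxM, rfl⟩)
    have hinj : Set.InjOn Ψ
        {M : Finset {x : V // x ∈ {x : V | x ∉ R}} |
          IsMaxIndepFinset (G.induce {x : V | x ∉ R}) M} := by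
      have key : ∀ M₁ M₂ : Finset {x : V // x ∈ {x : V | x ∉ R}},
          Ψ M₁ = Ψ M₂ → M₁ ⊆ M₂ := by
        intro M₁ M₂ h u hu
        have h1 : (u : V) ∈ Ψ M₂ := by
          rw [← h]; exact (hΨmem M₁ _).2 (Or.inr ⟨u, hu, rfl⟩)
        rcases (hΨmem M₂ _).1 h1 with hT | ⟨u', hu', he⟩
        · exact absurd (hTR hT) u.2
        · rwa [← Subtype.ext he]
      intro M₁ _ M₂ _ h
      exact Finset.Subset.antisymm (key M₁ M₂ h) (key M₂ M₁ h.symm)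
    calc mis (G.induce {x : V | x ∉ R})
        = (Ψ '' {M : Finset {x : V // x ∈ {x : V | x ∉ R}} |
            IsMaxIndepFinset (G.induce {x : V | x ∉ R}) M}).ncard :=
          (Set.ncard_image_of_injOn hinj).symm
      _ ≤ {S : Finset V | IsMaxIndepFinset G S ∧ T ⊆ S}.ncard := by
          refine Set.ncard_le_ncard ?_ (Set.toFinite _)
          rintro y ⟨M, hM, rfl⟩
          exact hMIS M hM

/-- Triangle-freeness. -/
def TFree {W : Type*} (G : SimpleGraph W) : Prop :=
  ∀ a b c, G.Adj a b → G.Adj a c → G.Adj b c → False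

lemma ncard_biUnion_le {ι : Type} [DecidableEq ι] (s : Finset ι) (f : ι → Set (Finset V)) :
    (⋃ i ∈ (s : Set ι), f i).ncard ≤ ∑ i ∈ s, (f i).ncard := by
  classical
  induction s using Finset.induction with
  | empty => simp
  | @insert a s ha ih =>
      rw [Finset.sum_insert ha]
      push_cast
      rw [Set.biUnion_insert]
      exact le_trans (Set.ncard_union_le _ _) (by omega)

lemma deg_two_adj_iff (G : SimpleGraph V) [DecidableRel G.Adj] {x a b : V}
    (h : G.neighborFinset x = {a, b}) : ∀ y, G.Adj x y ↔ (y = a ∨ y = b) := by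
  intro y
  rw [← SimpleGraph.mem_neighborFinset, h]
  simp

lemma other_nbr (G : SimpleGraph V) [DecidableRel G.Adj] {x y : V}
    (hdeg : G.degree x = 2) (hadj : G.Adj x y) :
    ∃ z, z ≠ y ∧ G.Adj x z ∧ G.neighborFinset x = {y, z} := by
  rw [SimpleGraph.degree, Finset.card_eq_two] at hdeg
  obtain ⟨u, v, huv, huvs⟩ := hdeg
  have hy : y ∈ G.neighborFinset x := (SimpleGraph.mem_neighborFinset _ _ _).2 hadj
  rw [huvs] at hy
  rcases Finset.mem_insert.1 hy with rfl | hy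
  · exact ⟨v, fun h => huv h.symm, by
      rw [← SimpleGraph.mem_neighborFinset, huvs]; simp, huvs⟩
  · rcases Finset.mem_singleton.1 hy with rfl
    exact ⟨u, fun h => huv h, by
      rw [← SimpleGraph.mem_neighborFinset, huvs]; simp, by rw [huvs, Finset.pair_comm]⟩

lemma card4 {a b c d : V} (h1 : a ≠ b) (h2 : a ≠ c) (h3 : a ≠ d)
    (h4 : b ≠ c) (h5 : b ≠ d) (h6 : c ≠ d) : ({a, b, c, d} : Finset V).card = 4 := by
  rw [Finset.card_insert_of_notMem (by simp [h1, h2, h3]),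
    Finset.card_insert_of_notMem (by simp [h4, h5]),
    Finset.card_insert_of_notMem (by simp [h6]), Finset.card_singleton]

lemma card5 {a b c d e : V} (h1 : a ≠ b) (h2 : a ≠ c) (h3 : a ≠ d) (h4 : a ≠ e)
    (h5 : b ≠ c) (h6 : b ≠ d) (h7 : b ≠ e) (h8 : c ≠ d) (h9 : c ≠ e) (h10 : d ≠ e) :
    ({a, b, c, d, e} : Finset V).card = 5 := by
  rw [Finset.card_insert_of_notMem (by simp [h1, h2, h3, h4]),
    Finset.card_insert_of_notMem (by simp [h5, h6, h7]),
    Finset.card_insert_of_notMem (by simp [h8, h9]),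
    Finset.card_insert_of_notMem (by simp [h10]), Finset.card_singleton]

lemma card6 {a b c d e f : V} (h1 : a ≠ b) (h2 : a ≠ c) (h3 : a ≠ d) (h4 : a ≠ e)
    (h5 : a ≠ f) (h6 : b ≠ c) (h7 : b ≠ d) (h8 : b ≠ e) (h9 : b ≠ f)
    (h10 : c ≠ d) (h11 : c ≠ e) (h12 : c ≠ f) (h13 : d ≠ e) (h14 : d ≠ f) (h15 : e ≠ f) :
    ({a, b, c, d, e, f} : Finset V).card = 6 := by
  rw [Finset.card_insert_of_notMem (by simp [h1, h2, h3, h4, h5]),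
    Finset.card_insert_of_notMem (by simp [h6, h7, h8, h9]),
    Finset.card_insert_of_notMem (by simp [h10, h11, h12]),
    Finset.card_insert_of_notMem (by simp [h13, h14]),
    Finset.card_insert_of_notMem (by simp [h15]), Finset.card_singleton]

theorem mis_le_B (n : ℕ) : ∀ (V : Type) [Fintype V] [DecidableEq V] (G : SimpleGraph V),
    TFree G → Fintype.card V = n → mis G ≤ B n := by
  induction n using Nat.strong_induction_on with
  | _ n IH =>
  intro V _ _ G hTF hcard
  classical
  -- the key step lemma
  have key : ∀ (T X R : Finset V) (c : ℕ), R.Nonempty →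
      T ⊆ R → (∀ t ∈ T, ∀ y, G.Adj t y → y ∈ R) →
      (∀ r ∈ R, r ∈ T ∨ r ∈ X ∨ ∃ t ∈ T, G.Adj t r) →
      c ≤ R.card →
      {S : Finset V | IsMaxIndepFinset G S ∧ T ⊆ S ∧ ∀ x ∈ X, x ∉ S}.ncard
        ≤ B (n - c) := by
    intro T X R c hne hTR hnbr hcov hc
    have h1 := classCount G T X R hTR hnbr hcov
    have hRn : R.card ≤ n := by rw [← hcard]; exact Finset.card_le_univ R
    have hRpos : 0 < R.card := Finset.card_pos.2 hne
    have hcard2 : Fintype.card {x : V | x ∉ R} = n - R.card := by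
      simp [Set.toFinset_card, hcard, Finset.filter_not, Finset.card_sdiff]
    have hTF' : TFree (G.induce {x : V | x ∉ R}) := by
      intro a b c hab hac hbc
      exact hTF a.1 b.1 c.1 hab hac hbc
    have h2 : mis (G.induce {x : V | x ∉ R}) ≤ B (n - R.card) :=
      IH (n - R.card) (by omega) _ _ hTF' hcard2
    exact le_trans h1 (le_trans h2 (B_mono (by omega)))
  -- trivial case n = 0
  rcases Nat.eq_zero_or_pos n with rfl | hn0
  · have hV : IsEmpty V := Fintype.card_eq_zero_iff.1 hcard
    have hsub : {s : Finset V | IsMaxIndepFinset G s} ⊆ {(∅ : Finset V)} := by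
      intro s _
      simp only [Set.mem_singleton_iff]
      exact Finset.eq_empty_of_isEmpty s
    calc mis G ≤ ({(∅ : Finset V)} : Set (Finset V)).ncard :=
          Set.ncard_le_ncard hsub (Set.toFinite _)
      _ = 1 := Set.ncard_singleton _
      _ ≤ B 0 := by decide
  have hV : Nonempty V := Fintype.card_pos_iff.1 (by omega)
  -- v₀ of minimum degree
  obtain ⟨v₀, -, hmin⟩ := Finset.exists_min_image Finset.univ (fun x => G.degree x)
    ⟨hV.some, Finset.mem_univ _⟩
  have hmin' : ∀ x : V, G.degree v₀ ≤ G.degree x := fun x => hmin x (Finset.mem_univ x)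
  set d := G.degree v₀ with hd
  have hNv : (insert v₀ (G.neighborFinset v₀)).card = d + 1 := by
    rw [Finset.card_insert_of_notMem (by simp), hd, SimpleGraph.degree]
  have hRv_nbr : ∀ t ∈ ({v₀} : Finset V), ∀ y, G.Adj t y → y ∈ insert v₀ (G.neighborFinset v₀) := by
    intro t ht y hadj
    rcases Finset.mem_singleton.1 ht with rfl
    exact Finset.mem_insert_of_mem ((SimpleGraph.mem_neighborFinset _ _ _).2 hadj)
  -- helper for singleton T
  have single : ∀ (w : V) (X : Finset V) (c : ℕ),
      c ≤ (X ∪ insert w (G.neighborFinset w)).card →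
      {S : Finset V | IsMaxIndepFinset G S ∧ ({w} : Finset V) ⊆ S ∧ ∀ x ∈ X, x ∉ S}.ncard
        ≤ B (n - c) := by
    intro w X c hc
    refine key {w} X (X ∪ insert w (G.neighborFinset w)) c
      ⟨w, by simp⟩ (by intro t ht; rcases Finset.mem_singleton.1 ht with rfl; simp) ?_ ?_ hc
    · intro t ht y hadj
      rcases Finset.mem_singleton.1 ht with rfl
      have : y ∈ G.neighborFinset t := (SimpleGraph.mem_neighborFinset _ _ _).2 hadj
      simp [this]
    · intro r hr
      rcases Finset.mem_union.1 hr with h | h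
      · exact Or.inr (Or.inl h)
      · rcases Finset.mem_insert.1 h with rfl | h
        · exact Or.inl (by simp)
        · exact Or.inr (Or.inr ⟨w, by simp, (SimpleGraph.mem_neighborFinset _ _ _).1 h⟩)
  -- helper for pair T
  have pair : ∀ (a b : V) (X : Finset V) (c : ℕ),
      c ≤ (X ∪ insert a (G.neighborFinset a) ∪ insert b (G.neighborFinset b)).card →
      {S : Finset V | IsMaxIndepFinset G S ∧ ({a, b} : Finset V) ⊆ S ∧ ∀ x ∈ X, x ∉ S}.ncard
        ≤ B (n - c) := by
    intro a b X c hc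
    refine key {a, b} X (X ∪ insert a (G.neighborFinset a) ∪ insert b (G.neighborFinset b)) c
      ⟨a, by simp⟩ ?_ ?_ ?_ hc
    · intro t ht
      rcases Finset.mem_insert.1 ht with rfl | ht
      · simp
      · rcases Finset.mem_singleton.1 ht with rfl
        simp
    · intro t ht y hadj
      have hy : y ∈ G.neighborFinset t := (SimpleGraph.mem_neighborFinset _ _ _).2 hadj
      rcases Finset.mem_insert.1 ht with rfl | ht
      · simp [hy]
      · rcases Finset.mem_singleton.1 ht with rfl
        simp [hy]
    · intro r hr
      rcases Finset.mem_union.1 hr with h | h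
      · rcases Finset.mem_union.1 h with h | h
        · exact Or.inr (Or.inl h)
        · rcases Finset.mem_insert.1 h with rfl | h
          · exact Or.inl (by simp)
          · exact Or.inr (Or.inr ⟨a, by simp, (SimpleGraph.mem_neighborFinset _ _ _).1 h⟩)
      · rcases Finset.mem_insert.1 h with rfl | h
        · exact Or.inl (by simp)
        · exact Or.inr (Or.inr ⟨b, by simp, (SimpleGraph.mem_neighborFinset _ _ _).1 h⟩)
  have hnn : n = Fintype.card V := hcard.symm
  -- case distinction on the minimum degree d
  rcases Nat.lt_or_ge d 1 with hd0 | hd1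
  -- d = 0
  · have hd0' : G.degree v₀ = 0 := by omega
    have hemp : G.neighborFinset v₀ = ∅ := Finset.card_eq_zero.1 hd0'
    have hsub : {S : Finset V | IsMaxIndepFinset G S} ⊆
        {S : Finset V | IsMaxIndepFinset G S ∧ ({v₀} : Finset V) ⊆ S ∧
          ∀ x ∈ (∅ : Finset V), x ∉ S} := by
      intro S hS
      refine ⟨hS, Finset.singleton_subset_iff.2 ?_, by simp⟩
      rcases mem_or_adj G hS v₀ with h | ⟨s, hs, hadj⟩
      · exact h
      · exact absurd ((SimpleGraph.mem_neighborFinset _ _ _).2 hadj) (by simp [hemp])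
    have h1 : n ≥ 1 := hn0
    calc mis G ≤ _ := Set.ncard_le_ncard hsub (Set.toFinite _)
      _ ≤ B (n - 1) := single v₀ ∅ 1 (by
            rw [Finset.empty_union]
            exact Finset.card_pos.2 ⟨v₀, Finset.mem_insert_self _ _⟩)
      _ ≤ B n := B_mono (by omega)
  rcases Nat.lt_or_ge d 2 with hd1' | hd2
  -- d = 1
  · have hd1'' : G.degree v₀ = 1 := by omega
    obtain ⟨u, hu⟩ := Finset.card_eq_one.1 hd1''
    have hadj_u : G.Adj v₀ u := by
      rw [← SimpleGraph.mem_neighborFinset, hu]; simp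
    have hn2 : 2 ≤ n := by
      rw [hnn]
      calc 2 = ({v₀, u} : Finset V).card := by
            rw [Finset.card_insert_of_notMem (by simp [hadj_u.ne]), Finset.card_singleton]
        _ ≤ Fintype.card V := Finset.card_le_univ _
    have hcov : {S : Finset V | IsMaxIndepFinset G S} ⊆
        {S : Finset V | IsMaxIndepFinset G S ∧ ({v₀} : Finset V) ⊆ S ∧
          ∀ x ∈ (∅ : Finset V), x ∉ S} ∪
        {S : Finset V | IsMaxIndepFinset G S ∧ ({u} : Finset V) ⊆ S ∧
          ∀ x ∈ (∅ : Finset V), x ∉ S} := by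
      intro S hS
      rcases mem_or_adj G hS v₀ with h | ⟨s, hs, hadj⟩
      · exact Or.inl ⟨hS, Finset.singleton_subset_iff.2 h, by simp⟩
      · have : s ∈ G.neighborFinset v₀ := (SimpleGraph.mem_neighborFinset _ _ _).2 hadj
        rw [hu, Finset.mem_singleton] at this
        subst this
        exact Or.inr ⟨hS, Finset.singleton_subset_iff.2 hs, by simp⟩
    have hb1 : {S : Finset V | IsMaxIndepFinset G S ∧ ({v₀} : Finset V) ⊆ S ∧
          ∀ x ∈ (∅ : Finset V), x ∉ S}.ncard ≤ B (n - 2) := by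
      refine single v₀ ∅ 2 ?_
      simp only [Finset.empty_union]
      rw [Finset.card_insert_of_notMem (by simp), hu]
      simp
    have hb2 : {S : Finset V | IsMaxIndepFinset G S ∧ ({u} : Finset V) ⊆ S ∧
          ∀ x ∈ (∅ : Finset V), x ∉ S}.ncard ≤ B (n - 2) := by
      refine single u ∅ 2 ?_
      simp only [Finset.empty_union]
      rw [Finset.card_insert_of_notMem (by simp)]
      have : v₀ ∈ G.neighborFinset u := (SimpleGraph.mem_neighborFinset _ _ _).2 hadj_u.symm
      have : 1 ≤ (G.neighborFinset u).card := Finset.card_pos.2 ⟨v₀, this⟩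
      omega
    have hnum : B (n - 2) + B (n - 2) ≤ B n := by
      have := B_two_le (n - 2)
      have e : n - 2 + 2 = n := by omega
      rwa [e] at this
    calc mis G ≤ _ := Set.ncard_le_ncard hcov (Set.toFinite _)
      _ ≤ _ := Set.ncard_union_le _ _
      _ ≤ B n := by omega
  -- now the minimum degree is ≥ 2
  have hall2 : ∀ x : V, 2 ≤ G.degree x := fun x => le_trans hd2 (hmin' x)
  have cardN : ∀ w : V, (insert w (G.neighborFinset w)).card = G.degree w + 1 :=
    fun w => by rw [Finset.card_insert_of_notMem (by simp), SimpleGraph.degree]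
  by_cases hA : ∃ v w : V, G.degree v = 2 ∧ G.Adj v w ∧ 3 ≤ G.degree w
  · -- mixed case: deg v = 2 with a neighbour of degree ≥ 3
    obtain ⟨v, w1, hv2, hvw1, hw13⟩ := hA
    obtain ⟨w2, hw2ne, hvw2, hnbv⟩ := other_nbr G hv2 hvw1
    have hnadj : ¬ G.Adj w1 w2 := fun h => hTF v w1 w2 hvw1 hvw2 h
    set C1 := {S : Finset V | IsMaxIndepFinset G S ∧ ({v} : Finset V) ⊆ S ∧
      ∀ x ∈ (∅ : Finset V), x ∉ S} with hC1
    set C2 := {S : Finset V | IsMaxIndepFinset G S ∧ ({w1} : Finset V) ⊆ S ∧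
      ∀ x ∈ (∅ : Finset V), x ∉ S} with hC2
    set C3 := {S : Finset V | IsMaxIndepFinset G S ∧ ({w2} : Finset V) ⊆ S ∧
      ∀ x ∈ ({w1} : Finset V), x ∉ S} with hC3
    have hn4 : 4 ≤ n := by
      rw [hnn]
      calc 4 ≤ G.degree w1 + 1 := by omega
        _ = (insert w1 (G.neighborFinset w1)).card := (cardN w1).symm
        _ ≤ Fintype.card V := Finset.card_le_univ _
    have hcov : {S : Finset V | IsMaxIndepFinset G S} ⊆ C1 ∪ C2 ∪ C3 := by
      intro S hS
      by_cases hvS : v ∈ S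
      · exact Or.inl (Or.inl ⟨hS, Finset.singleton_subset_iff.2 hvS, by simp⟩)
      by_cases hw1S : w1 ∈ S
      · exact Or.inl (Or.inr ⟨hS, Finset.singleton_subset_iff.2 hw1S, by simp⟩)
      rcases mem_or_adj G hS v with h | ⟨s, hs, hadj⟩
      · exact absurd h hvS
      · have : s ∈ G.neighborFinset v := (SimpleGraph.mem_neighborFinset _ _ _).2 hadj
        rw [hnbv] at this
        rcases Finset.mem_insert.1 this with rfl | hthis
        · exact absurd hs hw1S
        · rcases Finset.mem_singleton.1 hthis with rfl
          exact Or.inr ⟨hS, Finset.singleton_subset_iff.2 hs, by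
            intro x hx
            rcases Finset.mem_singleton.1 hx with rfl
            exact hw1S⟩
    have hb1 : C1.ncard ≤ B (n - 3) := by
      refine single v ∅ 3 ?_
      rw [Finset.empty_union, cardN, hv2]
    have hb2 : C2.ncard ≤ B (n - 4) := by
      refine single w1 ∅ 4 ?_
      rw [Finset.empty_union, cardN]
      omega
    have hb3 : C3.ncard ≤ B (n - 4) := by
      refine single w2 {w1} 4 ?_
      rw [Finset.card_union_of_disjoint, cardN]
      · have := hall2 w2
        simp only [Finset.card_singleton]
        omega
      · rw [Finset.disjoint_insert_right]
        refine ⟨by simp only [Finset.mem_singleton]; exact hw2ne, ?_⟩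
        rw [Finset.disjoint_left]
        intro a ha
        rcases Finset.mem_singleton.1 ha with rfl
        simp only [SimpleGraph.mem_neighborFinset]
        exact fun h => hnadj h.symm
    have hnum : B (n - 3) + B (n - 4) + B (n - 4) ≤ B n := by
      have := N3' (n - 4)
      have e1 : n - 4 + 1 = n - 3 := by omega
      have e2 : n - 4 + 4 = n := by omega
      rwa [e1, e2] at this
    calc mis G ≤ _ := Set.ncard_le_ncard hcov (Set.toFinite _)
      _ ≤ (C1 ∪ C2).ncard + C3.ncard := Set.ncard_union_le _ _
      _ ≤ C1.ncard + C2.ncard + C3.ncard := by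
          have := Set.ncard_union_le C1 C2
          omega
      _ ≤ B n := by omega
  -- no degree-2 vertex has a neighbour of degree ≥ 3
  rcases Nat.lt_or_ge d 3 with hd2e' | hd3
  · -- minimum degree exactly 2, locally 2-regular
    have hd2e : G.degree v₀ = 2 := by omega
    have hdeg_nbr : ∀ x y : V, G.degree x = 2 → G.Adj x y → G.degree y = 2 := by
      intro x y hx hxy
      by_contra h
      exact hA ⟨x, y, hx, hxy, by have := hall2 y; omega⟩
    obtain ⟨a1, w2, h1w, hnb0⟩ := Finset.card_eq_two.1 hd2e
    set a0 := v₀ with ha0def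
    have ha01 : G.Adj a0 a1 := by
      rw [← SimpleGraph.mem_neighborFinset, hnb0]; simp
    have ha0w : G.Adj a0 w2 := by
      rw [← SimpleGraph.mem_neighborFinset, hnb0]; simp
    have hdeg1 : G.degree a1 = 2 := hdeg_nbr a0 a1 hd2e ha01
    have hdegw : G.degree w2 = 2 := hdeg_nbr a0 w2 hd2e ha0w
    obtain ⟨a2, ha2ne, ha12, hnb1⟩ := other_nbr G hdeg1 ha01.symm
    have hdeg2 : G.degree a2 = 2 := hdeg_nbr a1 a2 hdeg1 ha12
    obtain ⟨a3, ha3ne, ha23, hnb2⟩ := other_nbr G hdeg2 ha12.symm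
    have hdeg3 : G.degree a3 = 2 := hdeg_nbr a2 a3 hdeg2 ha23
    obtain ⟨a4, ha4ne, ha34, hnb3⟩ := other_nbr G hdeg3 ha23.symm
    obtain ⟨t2, ht2ne, hwt2, hnbw⟩ := other_nbr G hdegw ha0w.symm
    -- distinctness and non-adjacency facts
    have ne01 : a0 ≠ a1 := ha01.ne
    have ne0w : a0 ≠ w2 := ha0w.ne
    have hnadj1w : ¬ G.Adj a1 w2 := fun h => hTF a0 a1 w2 ha01 ha0w h
    have ne20 : a2 ≠ a0 := ha2ne
    have ne21 : a2 ≠ a1 := ha12.ne'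
    have ne2w : a2 ≠ w2 := fun h => hnadj1w (h ▸ ha12)
    have ne31 : a3 ≠ a1 := ha3ne
    have ne32 : a3 ≠ a2 := ha23.ne'
    have ne30 : a3 ≠ a0 := by
      intro h
      have : a2 ∈ G.neighborFinset a0 := by
        rw [SimpleGraph.mem_neighborFinset]
        exact (h ▸ ha23).symm
      rw [hnb0] at this
      rcases Finset.mem_insert.1 this with h' | h'
      · exact ne21 h'
      · exact ne2w (Finset.mem_singleton.1 h')
    -- the additional facts about membership of neighborhoods, as adjacency iffs
    have hiff0 := deg_two_adj_iff G hnb0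
    have hiff1 := deg_two_adj_iff G hnb1
    have hiff2 := deg_two_adj_iff G hnb2
    have hiff3 := deg_two_adj_iff G hnb3
    have hiffw := deg_two_adj_iff G hnbw
    by_cases hc4 : a3 = w2
    · -- Case C4 : component {a0, a1, a2, w2}
      have ha40 : a4 = a0 := by
        have h' : G.Adj a3 a0 := by rw [hc4]; exact ha0w.symm
        rcases (hiff3 a0).1 h' with h | h
        · exact absurd h.symm ne20
        · exact h.symm
      have hiffw2 : ∀ y, G.Adj w2 y ↔ (y = a2 ∨ y = a0) := by
        intro y
        have h' := hiff3 y
        rw [ha40, hc4] at h'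
        exact h'
      have hadj2w : G.Adj a2 w2 := by rw [← hc4]; exact ha23
      have hnbF : G.neighborFinset w2 = {a2, a0} := by
        rw [← hc4, hnb3, ha40]
      set D1 := {S : Finset V | IsMaxIndepFinset G S ∧ ({a0, a2} : Finset V) ⊆ S ∧
        ∀ x ∈ (∅ : Finset V), x ∉ S} with hD1
      set D2 := {S : Finset V | IsMaxIndepFinset G S ∧ ({a1, w2} : Finset V) ⊆ S ∧
        ∀ x ∈ (∅ : Finset V), x ∉ S} with hD2
      have hsub1 : ({a0, a1, w2, a2} : Finset V) ⊆
          ∅ ∪ insert a0 (G.neighborFinset a0) ∪ insert a2 (G.neighborFinset a2) := by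
        intro x hx
        simp only [Finset.mem_insert, Finset.mem_singleton] at hx
        rcases hx with rfl | rfl | rfl | rfl <;> simp [hnb0] <;> simp [ha0def]
      have hsub2 : ({a0, a1, w2, a2} : Finset V) ⊆
          ∅ ∪ insert a1 (G.neighborFinset a1) ∪ insert w2 (G.neighborFinset w2) := by
        intro x hx
        simp only [Finset.mem_insert, Finset.mem_singleton] at hx
        rcases hx with rfl | rfl | rfl | rfl <;> simp [hnb1] <;> simp [ha0def]
      have hne2w' : a2 ≠ w2 := fun h => hnadj1w (h ▸ ha12)
      have hcardP : ({a0, a1, w2, a2} : Finset V).card = 4 :=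
        card4 ne01 ne0w ne20.symm h1w ne21.symm hne2w'.symm
      have hcard1 : 4 ≤ (∅ ∪ insert a0 (G.neighborFinset a0) ∪
          insert a2 (G.neighborFinset a2)).card := by
        rw [← hcardP]; exact Finset.card_le_card hsub1
      have hcard2 : 4 ≤ (∅ ∪ insert a1 (G.neighborFinset a1) ∪
          insert w2 (G.neighborFinset w2)).card := by
        rw [← hcardP]; exact Finset.card_le_card hsub2
      have hn4 : 4 ≤ n := by
        refine le_trans hcard1 ?_
        rw [hnn]; exact Finset.card_le_univ _
      have hb1 : D1.ncard ≤ B (n - 4) := pair a0 a2 ∅ 4 hcard1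
      have hb2 : D2.ncard ≤ B (n - 4) := pair a1 w2 ∅ 4 hcard2
      have hcov : {S : Finset V | IsMaxIndepFinset G S} ⊆ D1 ∪ D2 := by
        intro S hS
        by_cases h0 : a0 ∈ S
        · have h1' : a1 ∉ S := fun h => hS.1 h0 h ha01
          have hw' : w2 ∉ S := fun h => hS.1 h0 h ha0w
          have h2 : a2 ∈ S := by
            rcases mem_or_adj G hS a2 with h | ⟨s, hs, hadj⟩
            · exact h
            · rcases (hiff2 s).1 hadj with rfl | rfl
              · exact absurd hs h1'
              · exact absurd (hc4 ▸ hs) hw'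
          refine Or.inl ⟨hS, ?_, by simp⟩
          rw [Finset.insert_subset_iff, Finset.singleton_subset_iff]
          exact ⟨h0, h2⟩
        · by_cases h1 : a1 ∈ S
          · have hw : w2 ∈ S := by
              rcases mem_or_adj G hS w2 with h | ⟨s, hs, hadj⟩
              · exact h
              · rcases (hiffw2 s).1 hadj with rfl | rfl
                · exact absurd ha12 (hS.1 h1 hs)
                · exact absurd hs h0
            refine Or.inr ⟨hS, ?_, by simp⟩
            rw [Finset.insert_subset_iff, Finset.singleton_subset_iff]
            exact ⟨h1, hw⟩
          · exfalso
            have h2 : a2 ∈ S := by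
              rcases mem_or_adj G hS a1 with h | ⟨s, hs, hadj⟩
              · exact absurd h h1
              · rcases (hiff1 s).1 hadj with rfl | rfl
                · exact absurd hs h0
                · exact hs
            have hw : w2 ∈ S := by
              rcases mem_or_adj G hS a0 with h | ⟨s, hs, hadj⟩
              · exact absurd h h0
              · rcases (hiff0 s).1 hadj with rfl | rfl
                · exact absurd hs h1
                · exact hs
            exact hS.1 h2 hw hadj2w
      have hnum : B (n - 4) + B (n - 4) ≤ B n := by
        have h' := B_two_le (n - 4)
        have e : n - 4 + 2 = n - 2 := by omega
        rw [e] at h'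
        exact le_trans h' (B_mono (by omega))
      calc mis G ≤ _ := Set.ncard_le_ncard hcov (Set.toFinite _)
        _ ≤ D1.ncard + D2.ncard := Set.ncard_union_le _ _
        _ ≤ B n := by omega
    · by_cases hc5 : a4 = w2
      · -- Case C5 : component {a0, a1, a2, a3, w2}
        have hadj3w : G.Adj a3 w2 := by rw [← hc5]; exact ha34
        have ht23 : t2 = a3 := by
          rcases (hiffw a3).1 hadj3w.symm with h | h
          · exact absurd h ne30
          · exact h.symm
        have hnbw5 : G.neighborFinset w2 = {a0, a3} := by rw [hnbw, ht23]
        have hiffw5 := deg_two_adj_iff G hnbw5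
        have hiff3' : ∀ y, G.Adj a3 y ↔ (y = a2 ∨ y = w2) := by
          intro y
          have h' := hiff3 y
          rw [hc5] at h'
          exact h'
        have ne3w : a3 ≠ w2 := hc4
        set E1 := {S : Finset V | IsMaxIndepFinset G S ∧ ({a0, a2} : Finset V) ⊆ S ∧
          ∀ x ∈ (∅ : Finset V), x ∉ S} with hE1
        set E2 := {S : Finset V | IsMaxIndepFinset G S ∧ ({a0, a3} : Finset V) ⊆ S ∧
          ∀ x ∈ (∅ : Finset V), x ∉ S} with hE2
        set E3 := {S : Finset V | IsMaxIndepFinset G S ∧ ({a1, a3} : Finset V) ⊆ S ∧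
          ∀ x ∈ (∅ : Finset V), x ∉ S} with hE3
        set E4 := {S : Finset V | IsMaxIndepFinset G S ∧ ({a1, w2} : Finset V) ⊆ S ∧
          ∀ x ∈ (∅ : Finset V), x ∉ S} with hE4
        set E5 := {S : Finset V | IsMaxIndepFinset G S ∧ ({a2, w2} : Finset V) ⊆ S ∧
          ∀ x ∈ (∅ : Finset V), x ∉ S} with hE5
        have hcardP : ({a0, a1, w2, a2, a3} : Finset V).card = 5 :=
          card5 ne01 ne0w ne20.symm ne30.symm h1w ne21.symm ne31.symm
            ne2w.symm (fun h => hc4 h.symm) ne32.symm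
        have hs1 : ({a0, a1, w2, a2, a3} : Finset V) ⊆
            ∅ ∪ insert a0 (G.neighborFinset a0) ∪ insert a2 (G.neighborFinset a2) := by
          intro x hx
          simp only [Finset.mem_insert, Finset.mem_singleton] at hx
          rcases hx with rfl | rfl | rfl | rfl | rfl <;> simp [hnb0, hnb2] <;> simp [ha0def]
        have hs2 : ({a0, a1, w2, a2, a3} : Finset V) ⊆
            ∅ ∪ insert a0 (G.neighborFinset a0) ∪ insert a3 (G.neighborFinset a3) := by
          intro x hx
          simp only [Finset.mem_insert, Finset.mem_singleton] at hx
          rcases hx with rfl | rfl | rfl | rfl | rfl <;> simp [hnb0, hnb3] <;> simp [ha0def]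
        have hs3 : ({a0, a1, w2, a2, a3} : Finset V) ⊆
            ∅ ∪ insert a1 (G.neighborFinset a1) ∪ insert a3 (G.neighborFinset a3) := by
          intro x hx
          simp only [Finset.mem_insert, Finset.mem_singleton] at hx
          rcases hx with rfl | rfl | rfl | rfl | rfl <;> simp [hnb1, hnb3, hc5] <;> simp [ha0def]
        have hs4 : ({a0, a1, w2, a2, a3} : Finset V) ⊆
            ∅ ∪ insert a1 (G.neighborFinset a1) ∪ insert w2 (G.neighborFinset w2) := by
          intro x hx
          simp only [Finset.mem_insert, Finset.mem_singleton] at hx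
          rcases hx with rfl | rfl | rfl | rfl | rfl <;> simp [hnb1, hnbw5] <;> simp [ha0def]
        have hs5 : ({a0, a1, w2, a2, a3} : Finset V) ⊆
            ∅ ∪ insert a2 (G.neighborFinset a2) ∪ insert w2 (G.neighborFinset w2) := by
          intro x hx
          simp only [Finset.mem_insert, Finset.mem_singleton] at hx
          rcases hx with rfl | rfl | rfl | rfl | rfl <;> simp [hnb2, hnbw5] <;> simp [ha0def]
        have hb1 : E1.ncard ≤ B (n - 5) :=
          pair a0 a2 ∅ 5 (by rw [← hcardP]; exact Finset.card_le_card hs1)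
        have hb2 : E2.ncard ≤ B (n - 5) :=
          pair a0 a3 ∅ 5 (by rw [← hcardP]; exact Finset.card_le_card hs2)
        have hb3 : E3.ncard ≤ B (n - 5) :=
          pair a1 a3 ∅ 5 (by rw [← hcardP]; exact Finset.card_le_card hs3)
        have hb4 : E4.ncard ≤ B (n - 5) :=
          pair a1 w2 ∅ 5 (by rw [← hcardP]; exact Finset.card_le_card hs4)
        have hb5 : E5.ncard ≤ B (n - 5) :=
          pair a2 w2 ∅ 5 (by rw [← hcardP]; exact Finset.card_le_card hs5)
        have hn5 : 5 ≤ n := by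
          rw [hnn, ← hcardP]
          exact Finset.card_le_card (Finset.subset_univ _) |>.trans (le_of_eq rfl)
        have hcov : {S : Finset V | IsMaxIndepFinset G S} ⊆ E1 ∪ E2 ∪ E3 ∪ E4 ∪ E5 := by
          intro S hS
          have mempair : ∀ x y : V, x ∈ S → y ∈ S →
              S ∈ {S : Finset V | IsMaxIndepFinset G S ∧ ({x, y} : Finset V) ⊆ S ∧
                ∀ x ∈ (∅ : Finset V), x ∉ S} := by
            intro x y hx hy
            refine ⟨hS, ?_, by simp⟩
            rw [Finset.insert_subset_iff, Finset.singleton_subset_iff]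
            exact ⟨hx, hy⟩
          by_cases h0 : a0 ∈ S
          · have h1' : a1 ∉ S := fun h => hS.1 h0 h ha01
            have hw' : w2 ∉ S := fun h => hS.1 h0 h ha0w
            by_cases h2 : a2 ∈ S
            · exact Or.inl (Or.inl (Or.inl (Or.inl (mempair a0 a2 h0 h2))))
            · have h3 : a3 ∈ S := by
                rcases mem_or_adj G hS a2 with h | ⟨s, hs, hadj⟩
                · exact absurd h h2
                · rcases (hiff2 s).1 hadj with rfl | rfl
                  · exact absurd hs h1'
                  · exact hs
              exact Or.inl (Or.inl (Or.inl (Or.inr (mempair a0 a3 h0 h3))))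
          · by_cases h1 : a1 ∈ S
            · have h2' : a2 ∉ S := fun h => hS.1 h1 h ha12
              by_cases h3 : a3 ∈ S
              · exact Or.inl (Or.inl (Or.inr (mempair a1 a3 h1 h3)))
              · have hw : w2 ∈ S := by
                  rcases mem_or_adj G hS a3 with h | ⟨s, hs, hadj⟩
                  · exact absurd h h3
                  · rcases (hiff3' s).1 hadj with rfl | rfl
                    · exact absurd hs h2'
                    · exact hs
                exact Or.inl (Or.inr (mempair a1 w2 h1 hw))
            · have h2 : a2 ∈ S := by
                rcases mem_or_adj G hS a1 with h | ⟨s, hs, hadj⟩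
                · exact absurd h h1
                · rcases (hiff1 s).1 hadj with rfl | rfl
                  · exact absurd hs h0
                  · exact hs
              have hw : w2 ∈ S := by
                rcases mem_or_adj G hS a0 with h | ⟨s, hs, hadj⟩
                · exact absurd h h0
                · rcases (hiff0 s).1 hadj with rfl | rfl
                  · exact absurd hs h1
                  · exact hs
              exact Or.inr (mempair a2 w2 h2 hw)
        have hnum : 5 * B (n - 5) ≤ B n := by
          have h' := N5' (n - 5)
          have e : n - 5 + 5 = n := by omega
          rwa [e] at h'
        have u1 := Set.ncard_union_le (E1 ∪ E2 ∪ E3 ∪ E4) E5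
        have u2 := Set.ncard_union_le (E1 ∪ E2 ∪ E3) E4
        have u3 := Set.ncard_union_le (E1 ∪ E2) E3
        have u4 := Set.ncard_union_le E1 E2
        calc mis G ≤ _ := Set.ncard_le_ncard hcov (Set.toFinite _)
          _ ≤ B n := by omega
      · -- generic case : six distinct vertices a0 a1 w2 a2 a3 a4
        have ne41 : a4 ≠ a1 := by
          intro h
          have : G.Adj a1 a3 := (h ▸ ha34).symm
          rcases (hiff1 a3).1 this with h' | h'
          · exact ne30 h'
          · exact ne32 h'
        have ne40 : a4 ≠ a0 := by
          intro h
          have : G.Adj a0 a3 := (h ▸ ha34).symm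
          rcases (hiff0 a3).1 this with h' | h'
          · exact ne31 h'
          · exact hc4 h'
        have ne43 : a4 ≠ a3 := ha34.ne'
        have net2w : t2 ≠ w2 := hwt2.ne'
        have net21 : t2 ≠ a1 := fun h => hnadj1w (h ▸ hwt2).symm
        set F1 := {S : Finset V | IsMaxIndepFinset G S ∧ ({a0, a2} : Finset V) ⊆ S ∧
          ∀ x ∈ (∅ : Finset V), x ∉ S} with hF1
        set F2 := {S : Finset V | IsMaxIndepFinset G S ∧ ({a0, a3} : Finset V) ⊆ S ∧
          ∀ x ∈ ({a2} : Finset V), x ∉ S} with hF2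
        set F3 := {S : Finset V | IsMaxIndepFinset G S ∧ ({a1} : Finset V) ⊆ S ∧
          ∀ x ∈ (∅ : Finset V), x ∉ S} with hF3
        set F4 := {S : Finset V | IsMaxIndepFinset G S ∧ ({w2} : Finset V) ⊆ S ∧
          ∀ x ∈ ({a1} : Finset V), x ∉ S} with hF4
        have hcardP5 : ({a0, a1, w2, a2, a3} : Finset V).card = 5 :=
          card5 ne01 ne0w ne20.symm ne30.symm h1w ne21.symm ne31.symm
            ne2w.symm (fun h => hc4 h.symm) ne32.symm
        have hcardP6 : ({a0, a1, w2, a2, a3, a4} : Finset V).card = 6 :=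
          card6 ne01 ne0w ne20.symm ne30.symm ne40.symm h1w ne21.symm ne31.symm
            ne41.symm ne2w.symm (fun h => hc4 h.symm) (fun h => hc5 h.symm)
            ne32.symm ha4ne.symm ne43.symm
        have hcardP4 : ({a1, w2, a0, t2} : Finset V).card = 4 :=
          card4 h1w ne01.symm net21.symm ne0w.symm net2w.symm ht2ne.symm
        have hs1 : ({a0, a1, w2, a2, a3} : Finset V) ⊆
            ∅ ∪ insert a0 (G.neighborFinset a0) ∪ insert a2 (G.neighborFinset a2) := by
          intro x hx
          simp only [Finset.mem_insert, Finset.mem_singleton] at hx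
          rcases hx with rfl | rfl | rfl | rfl | rfl <;> simp [hnb0, hnb2] <;> simp [ha0def]
        have hs2 : ({a0, a1, w2, a2, a3, a4} : Finset V) ⊆
            {a2} ∪ insert a0 (G.neighborFinset a0) ∪ insert a3 (G.neighborFinset a3) := by
          intro x hx
          simp only [Finset.mem_insert, Finset.mem_singleton] at hx
          rcases hx with rfl | rfl | rfl | rfl | rfl | rfl <;> simp [hnb0, hnb3] <;> simp [ha0def]
        have hs4 : ({a1, w2, a0, t2} : Finset V) ⊆
            {a1} ∪ insert w2 (G.neighborFinset w2) := by
          intro x hx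
          simp only [Finset.mem_insert, Finset.mem_singleton] at hx
          rcases hx with rfl | rfl | rfl | rfl <;> simp [hnbw] <;> simp [ha0def]
        have hb1 : F1.ncard ≤ B (n - 5) :=
          pair a0 a2 ∅ 5 (by rw [← hcardP5]; exact Finset.card_le_card hs1)
        have hb2 : F2.ncard ≤ B (n - 6) :=
          pair a0 a3 {a2} 6 (by rw [← hcardP6]; exact Finset.card_le_card hs2)
        have hb3 : F3.ncard ≤ B (n - 3) := by
          refine single a1 ∅ 3 ?_
          rw [Finset.empty_union, cardN, hdeg1]
        have hb4 : F4.ncard ≤ B (n - 4) :=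
          single w2 {a1} 4 (by rw [← hcardP4]; exact Finset.card_le_card hs4)
        have hn6 : 6 ≤ n := by
          rw [hnn, ← hcardP6]
          exact Finset.card_le_univ _
        have hcov : {S : Finset V | IsMaxIndepFinset G S} ⊆ F1 ∪ F2 ∪ F3 ∪ F4 := by
          intro S hS
          by_cases h0 : a0 ∈ S
          · have h1' : a1 ∉ S := fun h => hS.1 h0 h ha01
            have hw' : w2 ∉ S := fun h => hS.1 h0 h ha0w
            by_cases h2 : a2 ∈ S
            · refine Or.inl (Or.inl (Or.inl ⟨hS, ?_, by simp⟩))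
              rw [Finset.insert_subset_iff, Finset.singleton_subset_iff]
              exact ⟨h0, h2⟩
            · have h3 : a3 ∈ S := by
                rcases mem_or_adj G hS a2 with h | ⟨s, hs, hadj⟩
                · exact absurd h h2
                · rcases (hiff2 s).1 hadj with rfl | rfl
                  · exact absurd hs h1'
                  · exact hs
              refine Or.inl (Or.inl (Or.inr ⟨hS, ?_, ?_⟩))
              · rw [Finset.insert_subset_iff, Finset.singleton_subset_iff]
                exact ⟨h0, h3⟩
              · intro x hx
                rcases Finset.mem_singleton.1 hx with rfl
                exact h2
          · by_cases h1 : a1 ∈ S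
            · exact Or.inl (Or.inr ⟨hS, Finset.singleton_subset_iff.2 h1, by simp⟩)
            · have hw : w2 ∈ S := by
                rcases mem_or_adj G hS a0 with h | ⟨s, hs, hadj⟩
                · exact absurd h h0
                · rcases (hiff0 s).1 hadj with rfl | rfl
                  · exact absurd hs h1
                  · exact hs
              refine Or.inr ⟨hS, Finset.singleton_subset_iff.2 hw, ?_⟩
              intro x hx
              rcases Finset.mem_singleton.1 hx with rfl
              exact h1
        have hnum : B (n - 3) + B (n - 4) + B (n - 5) + B (n - 6) ≤ B n := by
          have h' := N6' (n - 6)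
          have e1 : n - 6 + 3 = n - 3 := by omega
          have e2 : n - 6 + 2 = n - 4 := by omega
          have e3 : n - 6 + 1 = n - 5 := by omega
          have e4 : n - 6 + 6 = n := by omega
          rwa [e1, e2, e3, e4] at h'
        have u1 := Set.ncard_union_le (F1 ∪ F2 ∪ F3) F4
        have u2 := Set.ncard_union_le (F1 ∪ F2) F3
        have u3 := Set.ncard_union_le F1 F2
        calc mis G ≤ _ := Set.ncard_le_ncard hcov (Set.toFinite _)
          _ ≤ B n := by omega
  · -- minimum degree ≥ 3
    have hDd : (G.neighborFinset v₀).card = d := rfl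
    set D := (G.neighborFinset v₀).card with hDdef
    set e := (G.neighborFinset v₀).equivFin with he
    set f : Fin D → V := fun i => (e.symm i).1 with hf
    have hfmem : ∀ i, f i ∈ G.neighborFinset v₀ := fun i => (e.symm i).2
    have hfinj : Function.Injective f := by
      intro i j hij
      have := Subtype.ext hij
      exact e.symm.injective this
    have hfsurj : ∀ s ∈ G.neighborFinset v₀, ∃ i, f i = s := by
      intro s hs
      exact ⟨e ⟨s, hs⟩, by simp [hf]; exact congrArg Subtype.val (e.symm_apply_apply ⟨s, hs⟩)⟩
    have hadjf : ∀ i, G.Adj v₀ (f i) :=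
      fun i => (SimpleGraph.mem_neighborFinset _ _ _).1 (hfmem i)
    set X : Fin D → Finset V := fun i =>
      ((Finset.range i.1).attachFin
        (fun m hm => lt_of_lt_of_le (Finset.mem_range.1 hm) i.isLt.le)).image f with hX
    have hXmem : ∀ (i : Fin D) (x : V), x ∈ X i ↔ ∃ j : Fin D, j.1 < i.1 ∧ f j = x := by
      intro i x
      simp only [hX, Finset.mem_image, Finset.mem_attachFin, Finset.mem_range]
    have hXcard : ∀ i : Fin D, (X i).card = i.1 := by
      intro i
      rw [hX]
      rw [Finset.card_image_of_injective _ hfinj, Finset.card_attachFin,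
        Finset.card_range]
    -- the big finsets for each class
    have hRcard : ∀ i : Fin D,
        d + 1 + i.1 ≤ (X i ∪ insert (f i) (G.neighborFinset (f i))).card := by
      intro i
      have hdisj : Disjoint (X i) (insert (f i) (G.neighborFinset (f i))) := by
        rw [Finset.disjoint_left]
        intro x hx hx'
        obtain ⟨j, hji, rfl⟩ := (hXmem i x).1 hx
        rcases Finset.mem_insert.1 hx' with h | h
        · exact absurd (hfinj h) (by omega)
        · exact hTF v₀ (f i) (f j) (hadjf i) (hadjf j)
            ((SimpleGraph.mem_neighborFinset _ _ _).1 h)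
      have hcalc : (X i ∪ insert (f i) (G.neighborFinset (f i))).card
          = i.1 + (G.degree (f i) + 1) := by
        rw [Finset.card_union_of_disjoint hdisj, hXcard, cardN]
      have := hmin' (f i)
      omega
    set Cv := {S : Finset V | IsMaxIndepFinset G S ∧ ({v₀} : Finset V) ⊆ S ∧
      ∀ x ∈ (∅ : Finset V), x ∉ S} with hCv
    set Ci : Fin D → Set (Finset V) := fun i =>
      {S : Finset V | IsMaxIndepFinset G S ∧ ({f i} : Finset V) ⊆ S ∧
        ∀ x ∈ X i, x ∉ S} with hCi
    have hbv : Cv.ncard ≤ B (n - (d + 1)) := by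
      refine single v₀ ∅ (d + 1) ?_
      have hcalc : (∅ ∪ insert v₀ (G.neighborFinset v₀)).card = G.degree v₀ + 1 := by
        rw [Finset.empty_union, cardN]
      omega
    have hbi : ∀ i : Fin D, (Ci i).ncard ≤ B (n - (d + 1 + i.1)) :=
      fun i => single (f i) (X i) (d + 1 + i.1) (hRcard i)
    have hcov : {S : Finset V | IsMaxIndepFinset G S} ⊆
        Cv ∪ ⋃ i ∈ ((Finset.univ : Finset (Fin D)) : Set (Fin D)), Ci i := by
      intro S hS
      by_cases h0 : v₀ ∈ S
      · exact Or.inl ⟨hS, Finset.singleton_subset_iff.2 h0, by simp⟩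
      · set J := Finset.univ.filter (fun j : Fin D => f j ∈ S) with hJ
        have hJne : J.Nonempty := by
          rcases mem_or_adj G hS v₀ with h | ⟨s, hs, hadj⟩
          · exact absurd h h0
          · obtain ⟨j, rfl⟩ := hfsurj s ((SimpleGraph.mem_neighborFinset _ _ _).2 hadj)
            exact ⟨j, by simp [hJ, hs]⟩
        set i := J.min' hJne with hi
        have hiJ : i ∈ J := J.min'_mem hJne
        have hfi : f i ∈ S := (Finset.mem_filter.1 hiJ).2
        refine Or.inr ?_
        rw [Set.mem_iUnion₂]
        refine ⟨i, by simp, hS, Finset.singleton_subset_iff.2 hfi, ?_⟩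
        intro x hx hxS
        obtain ⟨j, hji, rfl⟩ := (hXmem i x).1 hx
        have hjJ : j ∈ J := by simp [hJ, hxS]
        have := J.min'_le j hjJ
        rw [← hi] at this
        omega
    have h2d : 2 * d ≤ n := by
      obtain ⟨i₀, hi₀⟩ : ∃ i₀ : Fin D, (i₀ : ℕ) = d - 1 := ⟨⟨d - 1, by omega⟩, rfl⟩
      have h1 := hRcard i₀
      have h2 : (X i₀ ∪ insert (f i₀) (G.neighborFinset (f i₀))).card ≤ n := by
        rw [hnn]; exact Finset.card_le_univ _
      omega
    have hsum : mis G ≤ Cv.ncard + ∑ i : Fin D, (Ci i).ncard := by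
      calc mis G ≤ _ := Set.ncard_le_ncard hcov (Set.toFinite _)
        _ ≤ Cv.ncard + (⋃ i ∈ ((Finset.univ : Finset (Fin D)) : Set (Fin D)), Ci i).ncard :=
            Set.ncard_union_le _ _
        _ ≤ Cv.ncard + ∑ i : Fin D, (Ci i).ncard := by
            have := ncard_biUnion_le (Finset.univ : Finset (Fin D)) Ci
            omega
    have hsum2 : ∑ i : Fin D, (Ci i).ncard ≤ ∑ i ∈ Finset.range d, B (n - (d + 1 + i)) := by
      calc ∑ i : Fin D, (Ci i).ncard ≤ ∑ i : Fin D, B (n - (d + 1 + i.1)) :=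
            Finset.sum_le_sum (fun i _ => hbi i)
        _ = ∑ i ∈ Finset.range D, B (n - (d + 1 + i)) :=
            Fin.sum_univ_eq_sum_range (fun k => B (n - (d + 1 + k))) D
        _ = _ := by rw [hDd]
    have hnum := N7 n d hd3 h2d
    omega



def rel (i j : ℕ) : Prop :=
  (i < 5 ∧ j < 5 ∧ (j % 5 = (i + 1) % 5 ∨ i % 5 = (j + 1) % 5)) ∨
  (5 ≤ i ∧ 5 ≤ j ∧ i ≠ j ∧ (i - 5) / 2 = (j - 5) / 2)

instance relDec : ∀ i j, Decidable (rel i j) := fun i j => by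
  unfold rel; infer_instance

def Gc (n : ℕ) : SimpleGraph (Fin n) where
  Adj i j := rel i.1 j.1
  symm := by
    constructor
    intro i j h
    unfold rel at *
    rcases h with ⟨h1, h2, h3⟩ | ⟨h1, h2, h3, h4⟩
    · exact Or.inl ⟨h2, h1, h3.symm⟩
    · exact Or.inr ⟨h2, h1, fun h => h3 h.symm, h4.symm⟩
  loopless := by
    constructor
    intro i h
    unfold rel at h
    rcases h with ⟨h1, h2, h3⟩ | ⟨h1, h2, h3, h4⟩
    · omega
    · exact h3 rfl

instance GcDec (n : ℕ) : DecidableRel (Gc n).Adj := fun i j => relDec i.1 j.1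

instance indepDec {V : Type*} [Fintype V] (G : SimpleGraph V) [DecidableRel G.Adj] :
    DecidablePred (IsIndepFinset G) := fun s => by
  unfold IsIndepFinset; infer_instance

instance maxIndepDec {V : Type*} [Fintype V] [DecidableEq V] (G : SimpleGraph V)
    [DecidableRel G.Adj] : DecidablePred (IsMaxIndepFinset G) := fun s => by
  unfold IsMaxIndepFinset; infer_instance

lemma mis_eq_card {V : Type*} [Fintype V] [DecidableEq V] (G : SimpleGraph V)
    [DecidableRel G.Adj] :
    mis G = (Finset.univ.filter (fun s : Finset V => IsMaxIndepFinset G s)).card := by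
  rw [mis, ← Set.ncard_coe_finset]
  congr 1
  ext s
  simp

lemma mis_Gc5 : mis (Gc 5) = 5 := by
  rw [mis_eq_card]
  decide


lemma Gc_tfree (n : ℕ) : TFree (Gc n) := by
  intro a b c hab hac hbc
  have h1 : rel a.1 b.1 := hab
  have h2 : rel a.1 c.1 := hac
  have h3 : rel b.1 c.1 := hbc
  unfold rel at h1 h2 h3
  rcases h1 with ⟨x1, x2, x3⟩ | ⟨x1, x2, x3, x4⟩ <;>
    rcases h2 with ⟨y1, y2, y3⟩ | ⟨y1, y2, y3, y4⟩ <;>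
      rcases h3 with ⟨z1, z2, z3⟩ | ⟨z1, z2, z3, z4⟩ <;>
        omega

-- u and u' are the top two vertices of `Fin (n+2)`, `n ≥ 5`, `n` odd
lemma Gc_adj_top {n : ℕ} (hn5 : 5 ≤ n) (hodd : n % 2 = 1) :
    (Gc (n+2)).Adj ⟨n, by omega⟩ ⟨n+1, by omega⟩ := by
  show rel n (n+1)
  unfold rel
  right
  refine ⟨by omega, by omega, by omega, by omega⟩

lemma Gc_top_only {n : ℕ} (hn5 : 5 ≤ n) (hodd : n % 2 = 1) (y : Fin (n+2)) :
    (Gc (n+2)).Adj ⟨n, by omega⟩ y → y = ⟨n+1, by omega⟩ := by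
  intro h
  have h' : rel n y.1 := h
  unfold rel at h'
  have hy := y.2
  have : y.1 = n + 1 := by
    rcases h' with ⟨x1, x2, x3⟩ | ⟨x1, x2, x3, x4⟩ <;> omega
  exact Fin.ext this

lemma Gc_top_only' {n : ℕ} (hn5 : 5 ≤ n) (hodd : n % 2 = 1) (y : Fin (n+2)) :
    (Gc (n+2)).Adj ⟨n+1, by omega⟩ y → y = ⟨n, by omega⟩ := by
  intro h
  have h' : rel (n+1) y.1 := h
  unfold rel at h'
  have hy := y.2
  have : y.1 = n := by
    rcases h' with ⟨x1, x2, x3⟩ | ⟨x1, x2, x3, x4⟩ <;> omega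
  exact Fin.ext this

-- the graph induced outside the top pair is isomorphic to `Gc n`
lemma Gc_induce_iso {n : ℕ} (hn5 : 5 ≤ n) (hodd : n % 2 = 1) :
    Nonempty ((Gc (n+2)).induce {x : Fin (n+2) |
      x ∉ ({⟨n, by omega⟩, ⟨n+1, by omega⟩} : Finset (Fin (n+2)))} ≃g Gc n) := by
  refine ⟨⟨?_, ?_⟩⟩
  · refine
      { toFun := fun x => ⟨x.1.1, ?_⟩
        invFun := fun i => ⟨⟨i.1, by omega⟩, ?_⟩
        left_inv := ?_
        right_inv := ?_ }
    · have h2 := x.2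
      simp only [Set.mem_setOf_eq, Finset.mem_insert, Finset.mem_singleton] at h2
      have hne1 : x.1 ≠ ⟨n, by omega⟩ := fun h => h2 (Or.inl h)
      have hne2 : x.1 ≠ ⟨n+1, by omega⟩ := fun h => h2 (Or.inr h)
      have := x.1.2
      rcases Nat.lt_or_ge x.1.1 n with h | h
      · exact h
      · exfalso
        rcases Nat.lt_or_ge x.1.1 (n+1) with h' | h'
        · exact hne1 (Fin.ext (show x.1.1 = n by omega))
        · exact hne2 (Fin.ext (show x.1.1 = n + 1 by omega))
    · simp only [Set.mem_setOf_eq, Finset.mem_insert, Finset.mem_singleton]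
      push_neg
      constructor
      · refine Fin.ne_of_val_ne ?_
        show i.1 ≠ n
        have := i.2; omega
      · refine Fin.ne_of_val_ne ?_
        show i.1 ≠ n + 1
        have := i.2; omega
    · intro x
      ext
      rfl
    · intro i
      ext
      rfl
  · intro a b
    show rel a.1.1 b.1.1 ↔ rel a.1.1 b.1.1
    rfl


lemma card3 {a b c : V} (h1 : a ≠ b) (h2 : a ≠ c) (h3 : b ≠ c) :
    ({a, b, c} : Finset V).card = 3 := by
  rw [Finset.card_insert_of_notMem (by simp [h1, h2]),
    Finset.card_insert_of_notMem (by simp [h3]), Finset.card_singleton]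

lemma tfree_of_not_tm {W : Type*} [DecidableEq W] (G : SimpleGraph W)
    (h : ¬ HasInducedTriangleMatching G 1) : TFree G := by
  intro a b c hab hac hbc
  apply h
  refine ⟨fun _ => {a, b, c}, ?_, ?_, ?_, ?_⟩
  · intro i
    rw [Finset.card_insert_of_notMem (by simp [hab.ne, hac.ne]),
      Finset.card_insert_of_notMem (by simp [hbc.ne]), Finset.card_singleton]
  · intro i j hij; exact absurd (Subsingleton.elim i j) hij
  · intro i x hx y hy hxy
    simp only [Finset.mem_insert, Finset.mem_singleton] at hx hy
    rcases hx with rfl | rfl | rfl <;> rcases hy with rfl | rfl | rfl <;>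
      first
        | exact absurd rfl hxy
        | assumption
        | exact hab.symm
        | exact hac.symm
        | exact hbc.symm
  · intro i j hij; exact absurd (Subsingleton.elim i j) hij

lemma not_tm_of_tfree {W : Type*} [DecidableEq W] (G : SimpleGraph W) (h : TFree G) :
    ¬ HasInducedTriangleMatching G 1 := by
  rintro ⟨f, hcard, -, hadj, -⟩
  obtain ⟨a, b, c, hab, hac, hbc, hf⟩ := Finset.card_eq_three.1 (hcard 0)
  have ha : a ∈ f 0 := by rw [hf]; simp
  have hb : b ∈ f 0 := by rw [hf]; simp
  have hc : c ∈ f 0 := by rw [hf]; simp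
  exact h a b c (hadj 0 a ha b hb hab) (hadj 0 a ha c hc hac) (hadj 0 b hb c hc hbc)

lemma Gc_step {n : ℕ} (hn5 : 5 ≤ n) (hodd : n % 2 = 1) :
    mis (Gc (n+2)) = 2 * mis (Gc n) := by
  classical
  have hadj : (Gc (n+2)).Adj ⟨n, by omega⟩ ⟨n+1, by omega⟩ := Gc_adj_top hn5 hodd
  set u : Fin (n+2) := ⟨n, by omega⟩ with hu
  set u' : Fin (n+2) := ⟨n+1, by omega⟩ with hu'
  set R : Finset (Fin (n+2)) := {u, u'} with hR
  have honly : ∀ y, (Gc (n+2)).Adj u y → y = u' := fun y => Gc_top_only hn5 hodd y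
  have honly' : ∀ y, (Gc (n+2)).Adj u' y → y = u := fun y => Gc_top_only' hn5 hodd y
  have h1 : {S : Finset (Fin (n+2)) | IsMaxIndepFinset (Gc (n+2)) S ∧
      ({u} : Finset (Fin (n+2))) ⊆ S}.ncard
      = mis ((Gc (n+2)).induce {x : Fin (n+2) | x ∉ R}) := by
    refine classCountExact _ {u} R ?_ ?_ ?_ ?_
    · intro a ha b hb hab
      rcases Finset.mem_singleton.1 ha with rfl
      rcases Finset.mem_singleton.1 hb with rfl
      exact (Gc (n+2)).irrefl hab
    · intro t ht
      rcases Finset.mem_singleton.1 ht with rfl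
      exact Finset.mem_insert_self _ _
    · intro t ht y hy
      rcases Finset.mem_singleton.1 ht with rfl
      rw [honly y hy]
      simp [hR]
    · intro r hr hrT
      rcases Finset.mem_insert.1 hr with rfl | hr'
      · exact absurd (Finset.mem_singleton_self _) hrT
      · rcases Finset.mem_singleton.1 hr' with rfl
        exact ⟨u, Finset.mem_singleton_self _, hadj⟩
  have h2 : {S : Finset (Fin (n+2)) | IsMaxIndepFinset (Gc (n+2)) S ∧
      ({u'} : Finset (Fin (n+2))) ⊆ S}.ncard
      = mis ((Gc (n+2)).induce {x : Fin (n+2) | x ∉ R}) := by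
    refine classCountExact _ {u'} R ?_ ?_ ?_ ?_
    · intro a ha b hb hab
      rcases Finset.mem_singleton.1 ha with rfl
      rcases Finset.mem_singleton.1 hb with rfl
      exact (Gc (n+2)).irrefl hab
    · intro t ht
      rcases Finset.mem_singleton.1 ht with rfl
      simp [hR]
    · intro t ht y hy
      rcases Finset.mem_singleton.1 ht with rfl
      rw [honly' y hy]
      simp [hR]
    · intro r hr hrT
      rcases Finset.mem_insert.1 hr with rfl | hr'
      · exact ⟨u', Finset.mem_singleton_self _, hadj.symm⟩
      · rcases Finset.mem_singleton.1 hr' with rfl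
        exact absurd (Finset.mem_singleton_self _) hrT
  have hcovEq : {S : Finset (Fin (n+2)) | IsMaxIndepFinset (Gc (n+2)) S} =
      {S : Finset (Fin (n+2)) | IsMaxIndepFinset (Gc (n+2)) S ∧
        ({u} : Finset (Fin (n+2))) ⊆ S} ∪
      {S : Finset (Fin (n+2)) | IsMaxIndepFinset (Gc (n+2)) S ∧
        ({u'} : Finset (Fin (n+2))) ⊆ S} := by
    ext S
    constructor
    · intro hS
      by_cases hu0 : u ∈ S
      · exact Or.inl ⟨hS, Finset.singleton_subset_iff.2 hu0⟩
      · rcases mem_or_adj _ hS u with h | ⟨s, hs, hadj'⟩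
        · exact absurd h hu0
        · rw [honly s hadj'] at hs
          exact Or.inr ⟨hS, Finset.singleton_subset_iff.2 hs⟩
    · rintro (⟨h, -⟩ | ⟨h, -⟩) <;> exact h
  have hdisj : Disjoint
      {S : Finset (Fin (n+2)) | IsMaxIndepFinset (Gc (n+2)) S ∧
        ({u} : Finset (Fin (n+2))) ⊆ S}
      {S : Finset (Fin (n+2)) | IsMaxIndepFinset (Gc (n+2)) S ∧
        ({u'} : Finset (Fin (n+2))) ⊆ S} := by
    rw [Set.disjoint_left]
    rintro S ⟨hS, hu0⟩ ⟨-, hu1⟩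
    exact hS.1 (Finset.singleton_subset_iff.1 hu0) (Finset.singleton_subset_iff.1 hu1) hadj
  have hiso := Gc_induce_iso hn5 hodd
  obtain ⟨iso⟩ := hiso
  have hmis : mis ((Gc (n+2)).induce {x : Fin (n+2) | x ∉ R}) = mis (Gc n) :=
    mis_eq_of_iso iso
  calc mis (Gc (n+2))
      = ({S : Finset (Fin (n+2)) | IsMaxIndepFinset (Gc (n+2)) S ∧
          ({u} : Finset (Fin (n+2))) ⊆ S} ∪
        {S : Finset (Fin (n+2)) | IsMaxIndepFinset (Gc (n+2)) S ∧
          ({u'} : Finset (Fin (n+2))) ⊆ S}).ncard := by rw [mis, hcovEq]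
    _ = _ + _ := Set.ncard_union_eq hdisj (Set.toFinite _) (Set.toFinite _)
    _ = 2 * mis (Gc n) := by rw [h1, h2, hmis]; ring

lemma mis_Gc : ∀ k : ℕ, mis (Gc (5 + 2*k)) = 5 * 2^k
  | 0 => by simpa using mis_Gc5
  | (k+1) => by
      have e : 5 + 2*(k+1) = (5 + 2*k) + 2 := by ring
      rw [e, Gc_step (by omega) (by omega), mis_Gc k]
      ring

end HT

theorem mis_max_no_induced_triangle_matching_t_zero_odd (n : ℕ) (hn : 5 ≤ n) (hodd : Odd n) :
    (∀ G : SimpleGraph (Fin n), ¬ HasInducedTriangleMatching G 1 →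
      mis G ≤ 5 * 2 ^ ((n - 5) / 2)) ∧
    (∃ G : SimpleGraph (Fin n), ¬ HasInducedTriangleMatching G 1 ∧
      mis G = 5 * 2 ^ ((n - 5) / 2)) := by
  have hodd2 : n % 2 = 1 := Nat.odd_iff.1 hodd
  obtain ⟨k, rfl⟩ : ∃ k, n = 5 + 2*k := ⟨(n - 5)/2, by omega⟩
  have hek : (5 + 2*k - 5)/2 = k := by omega
  rw [hek]
  constructor
  · intro G hTM
    have hTF : HT.TFree G := HT.tfree_of_not_tm G hTM
    have h := HT.mis_le_B (5 + 2*k) (Fin (5 + 2*k)) G hTF (by simp)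
    rwa [HT.B_odd k] at h
  · exact ⟨HT.Gc (5 + 2*k), HT.not_tm_of_tfree _ (HT.Gc_tfree _), HT.mis_Gc k⟩
end

section
/- Let s be a nonnegative integer and let G be the disjoint union of a 5-cycle and s single edges (the graph C_5 + sK_2 on 5 + 2s vertices). Then G is triangle-free and mis(G) = 5 · 2^s. -/
/-- The graph `C₅ + s K₂`: the vertex-disjoint union of a 5-cycle and `s` single edges. -/
def pentagonEdgeUnion (s : ℕ) : SimpleGraph ((Fin 5) ⊕ (Fin s × Fin 2)) :=
  SimpleGraph.fromRel (fun x y =>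
    match x, y with
    | .inl a, .inl b => (SimpleGraph.cycleGraph 5).Adj a b
    | .inr (i, _), .inr (j, _) => i = j
    | _, _ => False)

namespace MisAux
open SimpleGraph Finset

variable {s : ℕ}

lemma adj_inl_inl {a b : Fin 5} :
    (pentagonEdgeUnion s).Adj (Sum.inl a) (Sum.inl b) ↔ (cycleGraph 5).Adj a b := by
  constructor
  · rintro ⟨hne, h | h⟩
    · exact h
    · exact h.symm
  · intro h
    exact ⟨fun he => h.ne (Sum.inl.inj he), Or.inl h⟩

lemma adj_inr_inr {i j : Fin s} {x y : Fin 2} :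
    (pentagonEdgeUnion s).Adj (Sum.inr (i, x)) (Sum.inr (j, y)) ↔ i = j ∧ x ≠ y := by
  constructor
  · rintro ⟨hne, h | h⟩
    · exact ⟨h, fun hxy => hne (by rw [h, hxy])⟩
    · exact ⟨h.symm, fun hxy => hne (by rw [h, hxy])⟩
  · rintro ⟨rfl, hxy⟩
    exact ⟨fun h => hxy (by simpa using h), Or.inl rfl⟩

lemma not_adj_inl_inr {a : Fin 5} {p : Fin s × Fin 2} :
    ¬ (pentagonEdgeUnion s).Adj (Sum.inl a) (Sum.inr p) := by
  obtain ⟨i, x⟩ := p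
  rintro ⟨-, h | h⟩ <;> exact h

lemma not_adj_inr_inl {a : Fin 5} {p : Fin s × Fin 2} :
    ¬ (pentagonEdgeUnion s).Adj (Sum.inr p) (Sum.inl a) := by
  obtain ⟨i, x⟩ := p
  rintro ⟨-, h | h⟩ <;> exact h

lemma c5_pair_indep : ∀ i a b : Fin 5, (a = i ∨ a = i + 2) → (b = i ∨ b = i + 2) →
    ¬ (cycleGraph 5).Adj a b := by decide

lemma c5_dom : ∀ i a : Fin 5, a ≠ i → a ≠ i + 2 →
    (cycleGraph 5).Adj a i ∨ (cycleGraph 5).Adj a (i + 2) := by decide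

lemma c5_struct : ∀ S : Finset (Fin 5),
    (∀ a ∈ S, ∀ b ∈ S, ¬ (cycleGraph 5).Adj a b) →
    (∀ a, a ∉ S → ∃ b ∈ S, (cycleGraph 5).Adj a b) →
    ∃ i, S = {i, i + 2} := by decide

lemma c5_inj : ∀ a b : Fin 5, (a = b ∨ a = b + 2) → (a + 2 = b ∨ a + 2 = b + 2) → a = b := by
  decide

lemma c5_tri : ∀ a b c : Fin 5, (cycleGraph 5).Adj a b → (cycleGraph 5).Adj a c →
    (cycleGraph 5).Adj b c → False := by decide

lemma fin2_tri : ∀ x y z : Fin 2, x ≠ y → x ≠ z → y ≠ z → False := by decide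

/-- The candidate maximal independent sets. -/
def phi (s : ℕ) (p : Fin 5 × (Fin s → Fin 2)) : Finset ((Fin 5) ⊕ (Fin s × Fin 2)) :=
  {Sum.inl p.1, Sum.inl (p.1 + 2)} ∪ Finset.univ.image fun j => Sum.inr (j, p.2 j)

lemma mem_phi {p : Fin 5 × (Fin s → Fin 2)} {x : (Fin 5) ⊕ (Fin s × Fin 2)} :
    x ∈ phi s p ↔ x = Sum.inl p.1 ∨ x = Sum.inl (p.1 + 2) ∨ ∃ j, x = Sum.inr (j, p.2 j) := by
  simp only [phi, Finset.mem_union, Finset.mem_insert, Finset.mem_singleton,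
    Finset.mem_image, Finset.mem_univ, true_and]
  constructor
  · rintro ((h | h) | ⟨j, h⟩)
    exacts [Or.inl h, Or.inr (Or.inl h), Or.inr (Or.inr ⟨j, h.symm⟩)]
  · rintro (h | h | ⟨j, h⟩)
    exacts [Or.inl (Or.inl h), Or.inl (Or.inr h), Or.inr ⟨j, h.symm⟩]

lemma phi_mis (p : Fin 5 × (Fin s → Fin 2)) :
    IsMaxIndepFinset (pentagonEdgeUnion s) (phi s p) := by
  constructor
  · intro a ha b hb hadj
    rw [mem_phi] at ha hb
    rcases ha with rfl | rfl | ⟨j, rfl⟩ <;> rcases hb with rfl | rfl | ⟨k, rfl⟩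
    · exact c5_pair_indep p.1 _ _ (Or.inl rfl) (Or.inl rfl) (adj_inl_inl.mp hadj)
    · exact c5_pair_indep p.1 _ _ (Or.inl rfl) (Or.inr rfl) (adj_inl_inl.mp hadj)
    · exact not_adj_inl_inr hadj
    · exact c5_pair_indep p.1 _ _ (Or.inr rfl) (Or.inl rfl) (adj_inl_inl.mp hadj)
    · exact c5_pair_indep p.1 _ _ (Or.inr rfl) (Or.inr rfl) (adj_inl_inl.mp hadj)
    · exact not_adj_inl_inr hadj
    · exact not_adj_inr_inl hadj
    · exact not_adj_inr_inl hadj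
    · obtain ⟨rfl, hne⟩ := adj_inr_inr.mp hadj
      exact hne rfl
  · intro t ht hsub
    refine Finset.Subset.antisymm hsub fun x hx => ?_
    rw [mem_phi]
    match x with
    | Sum.inl a =>
      by_contra hcon
      push_neg at hcon
      have ha1 : a ≠ p.1 := fun h => hcon.1 (by rw [h])
      have ha2 : a ≠ p.1 + 2 := fun h => hcon.2.1 (by rw [h])
      have h1 : Sum.inl p.1 ∈ t := hsub (mem_phi.mpr (Or.inl rfl))
      have h2 : Sum.inl (p.1 + 2) ∈ t := hsub (mem_phi.mpr (Or.inr (Or.inl rfl)))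
      rcases c5_dom p.1 a ha1 ha2 with h | h
      · exact ht hx h1 (adj_inl_inl.mpr h)
      · exact ht hx h2 (adj_inl_inl.mpr h)
    | Sum.inr (j, b) =>
      have hjt : Sum.inr (j, p.2 j) ∈ t := hsub (mem_phi.mpr (Or.inr (Or.inr ⟨j, rfl⟩)))
      by_cases hb : b = p.2 j
      · exact Or.inr (Or.inr ⟨j, by rw [hb]⟩)
      · exact absurd (adj_inr_inr.mpr ⟨rfl, hb⟩) (ht hx hjt)

lemma mis_eq_phi {t : Finset ((Fin 5) ⊕ (Fin s × Fin 2))}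
    (ht : IsMaxIndepFinset (pentagonEdgeUnion s) t) : ∃ p, t = phi s p := by
  obtain ⟨hind, hmax⟩ := ht
  have hK : ∀ j : Fin s, ∃ x : Fin 2, Sum.inr (j, x) ∈ t := by
    intro j
    by_contra h
    push_neg at h
    have hins : IsIndepFinset (pentagonEdgeUnion s) (insert (Sum.inr (j, 0)) t) := by
      intro a ha b hb hadj
      rcases Finset.mem_insert.mp ha with rfl | ha'
      · rcases Finset.mem_insert.mp hb with rfl | hb'
        · exact hadj.ne rfl
        · match b, hb' with
          | Sum.inl c, hb' => exact not_adj_inr_inl hadj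
          | Sum.inr (k, y), hb' =>
            obtain ⟨rfl, hxy⟩ := adj_inr_inr.mp hadj
            exact h y hb'
      · rcases Finset.mem_insert.mp hb with rfl | hb'
        · match a, ha' with
          | Sum.inl c, ha' => exact not_adj_inl_inr hadj
          | Sum.inr (k, y), ha' =>
            obtain ⟨rfl, hxy⟩ := adj_inr_inr.mp hadj.symm
            exact h y ha'
        · exact hind ha' hb' hadj
    have heq := hmax _ hins (Finset.subset_insert _ _)
    exact h 0 (by rw [heq]; exact Finset.mem_insert_self _ _)
  choose f hf using hK
  set S : Finset (Fin 5) := Finset.univ.filter (fun a => Sum.inl a ∈ t) with hS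
  have hSind : ∀ a ∈ S, ∀ b ∈ S, ¬ (cycleGraph 5).Adj a b := by
    intro a ha b hb hadj
    exact hind (Finset.mem_filter.mp ha).2 (Finset.mem_filter.mp hb).2 (adj_inl_inl.mpr hadj)
  have hSdom : ∀ a, a ∉ S → ∃ b ∈ S, (cycleGraph 5).Adj a b := by
    intro a ha
    by_contra hcon
    push_neg at hcon
    have hat : Sum.inl a ∉ t := fun h' => ha (Finset.mem_filter.mpr ⟨Finset.mem_univ _, h'⟩)
    have hins : IsIndepFinset (pentagonEdgeUnion s) (insert (Sum.inl a) t) := by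
      intro x hx y hy hadj
      rcases Finset.mem_insert.mp hx with rfl | hx'
      · rcases Finset.mem_insert.mp hy with rfl | hy'
        · exact hadj.ne rfl
        · match y, hy' with
          | Sum.inl c, hy' =>
            exact hcon c (Finset.mem_filter.mpr ⟨Finset.mem_univ _, hy'⟩) (adj_inl_inl.mp hadj)
          | Sum.inr q, hy' => exact not_adj_inl_inr hadj
      · rcases Finset.mem_insert.mp hy with rfl | hy'
        · match x, hx' with
          | Sum.inl c, hx' =>
            exact hcon c (Finset.mem_filter.mpr ⟨Finset.mem_univ _, hx'⟩)
              (adj_inl_inl.mp hadj.symm)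
          | Sum.inr q, hx' => exact not_adj_inl_inr hadj.symm
        · exact hind hx' hy' hadj
    have heq := hmax _ hins (Finset.subset_insert _ _)
    exact hat (by rw [heq]; exact Finset.mem_insert_self _ _)
  obtain ⟨i, hSi⟩ := c5_struct S hSind hSdom
  refine ⟨(i, f), ?_⟩
  ext x
  rw [mem_phi]
  match x with
  | Sum.inl a =>
    constructor
    · intro hx
      have haS : a ∈ S := Finset.mem_filter.mpr ⟨Finset.mem_univ _, hx⟩
      rw [hSi] at haS
      rcases Finset.mem_insert.mp haS with rfl | haS
      · exact Or.inl rfl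
      · exact Or.inr (Or.inl (by rw [Finset.mem_singleton.mp haS]))
    · rintro (h | h | ⟨j, h⟩)
      · have ha : a = i := Sum.inl.inj h
        have : a ∈ S := by rw [hSi, ha]; exact Finset.mem_insert_self _ _
        exact (Finset.mem_filter.mp this).2
      · have ha : a = i + 2 := Sum.inl.inj h
        have : a ∈ S := by
          rw [hSi, ha]; exact Finset.mem_insert_of_mem (Finset.mem_singleton_self _)
        exact (Finset.mem_filter.mp this).2
      · exact absurd h (by simp)
  | Sum.inr (j, b) =>
    constructor
    · intro hx
      by_cases hb : b = f j
      · exact Or.inr (Or.inr ⟨j, by rw [hb]⟩)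
      · exact absurd (adj_inr_inr.mpr ⟨rfl, hb⟩) (hind hx (hf j))
    · rintro (h | h | ⟨k, h⟩)
      · exact absurd h (by simp)
      · exact absurd h (by simp)
      · obtain ⟨rfl, rfl⟩ : j = k ∧ b = f k := by
          have := Sum.inr.inj h
          exact ⟨congrArg Prod.fst this, congrArg Prod.snd this⟩
        exact hf j

lemma phi_inj : Function.Injective (phi s) := by
  intro p q h
  have h1 : Sum.inl p.1 ∈ phi s q := h ▸ mem_phi.mpr (Or.inl rfl)
  have h2 : Sum.inl (p.1 + 2) ∈ phi s q := h ▸ mem_phi.mpr (Or.inr (Or.inl rfl))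
  rw [mem_phi] at h1 h2
  have e1 : p.1 = q.1 ∨ p.1 = q.1 + 2 := by
    rcases h1 with h' | h' | ⟨j, h'⟩
    · exact Or.inl (Sum.inl.inj h')
    · exact Or.inr (Sum.inl.inj h')
    · exact absurd h' (by simp)
  have e2 : p.1 + 2 = q.1 ∨ p.1 + 2 = q.1 + 2 := by
    rcases h2 with h' | h' | ⟨j, h'⟩
    · exact Or.inl (Sum.inl.inj h')
    · exact Or.inr (Sum.inl.inj h')
    · exact absurd h' (by simp)
  have hfst : p.1 = q.1 := c5_inj _ _ e1 e2
  have hsnd : ∀ j, p.2 j = q.2 j := by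
    intro j
    have hj : Sum.inr (j, p.2 j) ∈ phi s q := h ▸ mem_phi.mpr (Or.inr (Or.inr ⟨j, rfl⟩))
    rw [mem_phi] at hj
    rcases hj with h' | h' | ⟨k, h'⟩
    · exact absurd h' (by simp)
    · exact absurd h' (by simp)
    · have hjk := Sum.inr.inj h'
      have : j = k := congrArg Prod.fst hjk
      subst this
      exact congrArg Prod.snd hjk
  exact Prod.ext hfst (funext hsnd)

lemma mis_set_eq :
    {u : Finset ((Fin 5) ⊕ (Fin s × Fin 2)) | IsMaxIndepFinset (pentagonEdgeUnion s) u}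
      = Set.range (phi s) := by
  ext u
  constructor
  · intro hu
    obtain ⟨p, rfl⟩ := mis_eq_phi hu
    exact ⟨p, rfl⟩
  · rintro ⟨p, rfl⟩
    exact phi_mis p

end MisAux

theorem mis_pentagonEdgeUnion (s : ℕ) :
    (pentagonEdgeUnion s).CliqueFree 3 ∧ mis (pentagonEdgeUnion s) = 5 * 2 ^ s := by
  constructor
  · intro u hu
    obtain ⟨a, b, c, hab, hac, hbc, rfl⟩ := Finset.card_eq_three.mp hu.2
    have h1 : (pentagonEdgeUnion s).Adj a b := hu.1 (by simp) (by simp) hab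
    have h2 : (pentagonEdgeUnion s).Adj a c := hu.1 (by simp) (by simp) hac
    have h3 : (pentagonEdgeUnion s).Adj b c := hu.1 (by simp) (by simp) hbc
    match a, b, c with
    | Sum.inl a, Sum.inl b, Sum.inl c =>
      exact MisAux.c5_tri a b c (MisAux.adj_inl_inl.mp h1) (MisAux.adj_inl_inl.mp h2)
        (MisAux.adj_inl_inl.mp h3)
    | Sum.inl _, Sum.inr _, _ => exact MisAux.not_adj_inl_inr h1
    | Sum.inl _, _, Sum.inr _ => exact MisAux.not_adj_inl_inr h2
    | Sum.inr _, Sum.inl _, _ => exact MisAux.not_adj_inr_inl h1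
    | Sum.inr _, _, Sum.inl _ => exact MisAux.not_adj_inr_inl h2
    | Sum.inr (i, x), Sum.inr (j, y), Sum.inr (k, z) =>
      obtain ⟨rfl, hxy⟩ := MisAux.adj_inr_inr.mp h1
      obtain ⟨rfl, hxz⟩ := MisAux.adj_inr_inr.mp h2
      obtain ⟨-, hyz⟩ := MisAux.adj_inr_inr.mp h3
      exact MisAux.fin2_tri x y z hxy hxz hyz
  · rw [mis, MisAux.mis_set_eq]
    rw [← Nat.card_coe_set_eq, Nat.card_range_of_injective MisAux.phi_inj,
      Nat.card_eq_fintype_card]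
    simp
end

section
/- Let c denote the largest real root of the equation x^6 − 2x^2 − 2x − 1 = 0 (c ≈ 1.40759 < √2). Let n and t be nonnegative integers with 2t ≤ n, and let G be a triangle-free simple graph on n vertices that contains no induced matching of size t+1. Then mis(G) ≤ 2^t · c^{n−2t}. -/
set_option linter.unusedSectionVars false

open Finset

section Infra
variable {V : Type*} [Fintype V] [DecidableEq V] (G : SimpleGraph V) [DecidableRel G.Adj]

/-- independent within W -/
def IndepOn (W s : Finset V) : Prop :=
  s ⊆ W ∧ ∀ a ∈ s, ∀ b ∈ s, ¬ G.Adj a b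

/-- maximal independent within W (domination form) -/
def MaxIndepOn (W s : Finset V) : Prop :=
  IndepOn G W s ∧ ∀ w ∈ W, w ∉ s → ∃ x ∈ s, G.Adj w x

noncomputable def misOn (W : Finset V) : ℕ :=
  Set.ncard {s : Finset V | MaxIndepOn G W s}

def HasIMOn (W : Finset V) (k : ℕ) : Prop :=
  ∃ f : Fin k → Finset V,
    (∀ i, f i ⊆ W) ∧
    (∀ i, (f i).card = 2) ∧
    (∀ i j, i ≠ j → Disjoint (f i) (f j)) ∧
    (∀ i, ∀ a ∈ f i, ∀ b ∈ f i, a ≠ b → G.Adj a b) ∧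
    (∀ i j, i ≠ j → ∀ a ∈ f i, ∀ b ∈ f j, ¬ G.Adj a b)

def NB (W : Finset V) (u : V) : Finset V := insert u (W.filter (fun w => G.Adj u w))

def Tset (W : Finset V) (u : V) (F : Finset V) : Set (Finset V) :=
  {s : Finset V | MaxIndepOn G W s ∧ u ∈ s ∧ ∀ x ∈ F, x ∉ s}

variable {G}

lemma NB_subset {W : Finset V} {u : V} (hu : u ∈ W) : NB G W u ⊆ W := by
  intro x hx
  rcases Finset.mem_insert.mp hx with rfl | hx
  · exact hu
  · exact (Finset.mem_filter.mp hx).1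

lemma NB_card {W : Finset V} (u : V) :
    (NB G W u).card = (W.filter (fun w => G.Adj u w)).card + 1 := by
  rw [NB, Finset.card_insert_of_notMem]
  intro h
  exact G.irrefl (Finset.mem_filter.mp h).2

lemma mem_NB_self {W : Finset V} (u : V) : u ∈ NB G W u := Finset.mem_insert_self _ _

lemma mem_NB_of_adj {W : Finset V} {u w : V} (hw : w ∈ W) (h : G.Adj u w) :
    w ∈ NB G W u := Finset.mem_insert_of_mem (Finset.mem_filter.mpr ⟨hw, h⟩)

lemma not_adj_of_notMem_NB {W : Finset V} {u w : V} (hw : w ∈ W) (h : w ∉ NB G W u) :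
    ¬ G.Adj u w := fun hadj => h (mem_NB_of_adj hw hadj)

lemma ncard_key (W : Finset V) (u : V) (F : Finset V) :
    (Tset G W u F).ncard ≤ misOn G (W \ (NB G W u ∪ F)) := by
  classical
  have hinj : Set.InjOn (fun s : Finset V => s.erase u) (Tset G W u F) := by
    intro s1 h1 s2 h2 h
    have h' := congrArg (insert u) h
    simpa [Finset.insert_erase h1.2.1, Finset.insert_erase h2.2.1] using h'
  have himg : (fun s : Finset V => s.erase u) '' (Tset G W u F)
      ⊆ {s | MaxIndepOn G (W \ (NB G W u ∪ F)) s} := by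
    rintro _ ⟨s, ⟨⟨⟨hsub, hind⟩, hdom⟩, hus, hFs⟩, rfl⟩
    refine ⟨⟨?_, ?_⟩, ?_⟩
    · intro x hx
      have hxs : x ∈ s := Finset.mem_of_mem_erase hx
      have hxu : x ≠ u := Finset.ne_of_mem_erase hx
      rw [Finset.mem_sdiff]
      refine ⟨hsub hxs, ?_⟩
      rw [Finset.mem_union]
      rintro (hx' | hx')
      · rcases Finset.mem_insert.mp hx' with h | h
        · exact hxu h
        · exact hind u hus x hxs (Finset.mem_filter.mp h).2
      · exact hFs x hx' hxs
    · intro a ha b hb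
      exact hind a (Finset.mem_of_mem_erase ha) b (Finset.mem_of_mem_erase hb)
    · intro w hw hws
      rw [Finset.mem_sdiff] at hw
      have hwu : w ≠ u := by
        rintro rfl
        exact hw.2 (Finset.mem_union_left _ (mem_NB_self _))
      have hwss : w ∉ s := fun h => hws (Finset.mem_erase.mpr ⟨hwu, h⟩)
      obtain ⟨x, hxs, hadj⟩ := hdom w hw.1 hwss
      refine ⟨x, Finset.mem_erase.mpr ⟨?_, hxs⟩, hadj⟩
      rintro rfl
      exact hw.2 (Finset.mem_union_left _ (mem_NB_of_adj hw.1 hadj.symm))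
  calc (Tset G W u F).ncard
      = ((fun s : Finset V => s.erase u) '' (Tset G W u F)).ncard :=
        (Set.ncard_image_of_injOn hinj).symm
    _ ≤ _ := Set.ncard_le_ncard himg (Set.toFinite _)

lemma hasIMOn_mono {W W' : Finset V} (h : W' ⊆ W) {k : ℕ} (hk : HasIMOn G W' k) :
    HasIMOn G W k := by
  obtain ⟨f, h1, h2, h3, h4, h5⟩ := hk
  exact ⟨f, fun i => (h1 i).trans h, h2, h3, h4, h5⟩

lemma hasIMOn_zero (W : Finset V) : HasIMOn G W 0 :=
  ⟨Fin.elim0, fun i => i.elim0, fun i => i.elim0, fun i => i.elim0,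
    fun i => i.elim0, fun i => i.elim0⟩

lemma hasIMOn_extend {W W' : Finset V} {x y : V} (hx : x ∈ W) (hy : y ∈ W)
    (hxy : G.Adj x y) (hW' : W' ⊆ W)
    (hxW' : ∀ w ∈ W', ¬ G.Adj x w) (hyW' : ∀ w ∈ W', ¬ G.Adj y w)
    (hxn : x ∉ W') (hyn : y ∉ W') {k : ℕ} (h : HasIMOn G W' k) :
    HasIMOn G W (k + 1) := by
  obtain ⟨f, h1, h2, h3, h4, h5⟩ := h
  have hxyne : x ≠ y := G.ne_of_adj hxy
  have hpair : ∀ a ∈ ({x, y} : Finset V), a = x ∨ a = y := by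
    intro a ha
    rcases Finset.mem_insert.mp ha with h | h
    · exact Or.inl h
    · exact Or.inr (Finset.mem_singleton.mp h)
  refine ⟨Fin.cons {x, y} f, ?_, ?_, ?_, ?_, ?_⟩
  · intro i
    refine Fin.cases ?_ (fun j => ?_) i
    · rw [Fin.cons_zero]
      intro a ha
      rcases hpair a ha with rfl | rfl
      · exact hx
      · exact hy
    · rw [Fin.cons_succ]
      exact (h1 j).trans hW'
  · intro i
    refine Fin.cases ?_ (fun j => ?_) i
    · rw [Fin.cons_zero]; exact Finset.card_pair hxyne
    · rw [Fin.cons_succ]; exact h2 j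
  · intro i j hij
    rcases Fin.eq_zero_or_eq_succ i with rfl | ⟨i', rfl⟩ <;>
      rcases Fin.eq_zero_or_eq_succ j with rfl | ⟨j', rfl⟩
    · exact absurd rfl hij
    · rw [Fin.cons_zero, Fin.cons_succ]
      rw [Finset.disjoint_left]
      intro a ha haf
      have haW' : a ∈ W' := h1 j' haf
      rcases hpair a ha with rfl | rfl
      · exact hxn haW'
      · exact hyn haW'
    · rw [Fin.cons_succ, Fin.cons_zero]
      rw [Finset.disjoint_right]
      intro a ha haf
      have haW' : a ∈ W' := h1 i' haf
      rcases hpair a ha with rfl | rfl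
      · exact hxn haW'
      · exact hyn haW'
    · rw [Fin.cons_succ, Fin.cons_succ]
      exact h3 i' j' (fun hh => hij (by rw [hh]))
  · intro i
    refine Fin.cases ?_ (fun j => ?_) i
    · rw [Fin.cons_zero]
      intro a ha b hb hab
      rcases hpair a ha with rfl | rfl <;> rcases hpair b hb with rfl | rfl
      · exact absurd rfl hab
      · exact hxy
      · exact hxy.symm
      · exact absurd rfl hab
    · rw [Fin.cons_succ]
      exact h4 j
  · intro i j hij
    rcases Fin.eq_zero_or_eq_succ i with rfl | ⟨i', rfl⟩ <;>
      rcases Fin.eq_zero_or_eq_succ j with rfl | ⟨j', rfl⟩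
    · exact absurd rfl hij
    · rw [Fin.cons_zero, Fin.cons_succ]
      intro a ha b hb
      have hbW' : b ∈ W' := h1 j' hb
      rcases hpair a ha with rfl | rfl
      · exact hxW' b hbW'
      · exact hyW' b hbW'
    · rw [Fin.cons_succ, Fin.cons_zero]
      intro a ha b hb
      have haW' : a ∈ W' := h1 i' ha
      rcases hpair b hb with rfl | rfl
      · intro hadj; exact hxW' a haW' hadj.symm
      · intro hadj; exact hyW' a haW' hadj.symm
    · rw [Fin.cons_succ, Fin.cons_succ]
      exact h5 i' j' (fun hh => hij (by rw [hh]))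

lemma misOn_empty : misOn G (∅ : Finset V) = 1 := by
  have h : {s : Finset V | MaxIndepOn G ∅ s} = {∅} := by
    ext s
    simp only [Set.mem_setOf_eq, Set.mem_singleton_iff]
    constructor
    · rintro ⟨⟨hsub, _⟩, _⟩
      exact Finset.subset_empty.mp hsub
    · rintro rfl
      exact ⟨⟨Finset.Subset.refl _, fun a ha => absurd ha (Finset.notMem_empty a)⟩,
        fun w hw => absurd hw (Finset.notMem_empty w)⟩
  rw [misOn, h, Set.ncard_singleton]

lemma tri_helper (htf : G.CliqueFree 3) {a b c : V} (hab : G.Adj a b) (hac : G.Adj a c) :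
    ¬ G.Adj b c := by
  intro hbc
  exact htf {a, b, c} (SimpleGraph.is3Clique_iff.mpr ⟨a, b, c, hab, hac, hbc, rfl⟩)

end Infra
-- numeric lemmas (verified in t2) + biUnion + term_bound; to be appended to t3 content
section Main
variable {V : Type*} [Fintype V] [DecidableEq V] {G : SimpleGraph V} [DecidableRel G.Adj]

lemma ncard_biUnion_le {α β : Type*} [DecidableEq α] [Finite β] (A : Finset α) (S : α → Set β) :
    (⋃ u ∈ A, S u).ncard ≤ ∑ u ∈ A, (S u).ncard := by
  classical
  induction A using Finset.induction_on with
  | empty => simp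
  | @insert a A ha ih =>
    rw [Finset.sum_insert ha, Finset.set_biUnion_insert a A S]
    exact le_trans (Set.ncard_union_le _ _) (add_le_add le_rfl ih)

lemma term_bound {c : ℝ} (hc1 : (1:ℝ) ≤ c) {m : ℕ}
    (IH : ∀ (W' : Finset V) (t' : ℕ), W'.card ≤ m → ¬ HasIMOn G W' (t' + 1) →
      (misOn G W' : ℝ) * c ^ (2 * t') ≤ 2 ^ t' * c ^ W'.card)
    {W : Finset V} {u : V} {F : Finset V} {t' k : ℕ}
    (hu : u ∈ W) (hFW : F ⊆ W) (hFNB : Disjoint F (NB G W u))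
    (hk : k ≤ (NB G W u).card + F.card) (hkW : k ≤ W.card)
    (hm : W.card ≤ m + 1) (hkpos : 1 ≤ k)
    (hmatch' : ¬ HasIMOn G (W \ (NB G W u ∪ F)) (t' + 1)) :
    ((Tset G W u F).ncard : ℝ) * c ^ (2 * t') ≤ 2 ^ t' * c ^ (W.card - k) := by
  have hc0 : (0:ℝ) < c := lt_of_lt_of_le one_pos hc1
  set W' := W \ (NB G W u ∪ F) with hW'
  have hRsub : NB G W u ∪ F ⊆ W := Finset.union_subset (NB_subset hu) hFW
  have hRcard : (NB G W u ∪ F).card = (NB G W u).card + F.card := by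
    rw [Finset.card_union_of_disjoint hFNB.symm]
  have hW'card : W'.card = W.card - (NB G W u ∪ F).card := Finset.card_sdiff_of_subset hRsub
  have hW'le : W'.card ≤ W.card - k := by omega
  have hW'm : W'.card ≤ m := by
    have : 1 ≤ (NB G W u ∪ F).card := by
      refine le_trans ?_ (Finset.card_le_card (Finset.subset_union_left))
      rw [NB_card]; omega
    omega
  have h1 : ((Tset G W u F).ncard : ℝ) ≤ (misOn G W' : ℝ) := by
    exact_mod_cast ncard_key W u F
  calc ((Tset G W u F).ncard : ℝ) * c ^ (2 * t')
      ≤ (misOn G W' : ℝ) * c ^ (2 * t') := by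
        exact mul_le_mul_of_nonneg_right h1 (by positivity)
    _ ≤ 2 ^ t' * c ^ W'.card := IH W' t' hW'm hmatch'
    _ ≤ 2 ^ t' * c ^ (W.card - k) := by
        exact mul_le_mul_of_nonneg_left (pow_le_pow_right₀ hc1 hW'le) (by positivity)

end Main

lemma c_ge (c : ℝ) (hmax : ∀ x : ℝ, x ^ 6 - 2 * x ^ 2 - 2 * x - 1 = 0 → x ≤ c) :
    1.4 ≤ c := by
  have hcont : ContinuousOn (fun x : ℝ => x ^ 6 - 2 * x ^ 2 - 2 * x - 1) (Set.Icc 1.4 1.5) := by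
    fun_prop
  have h := intermediate_value_Icc (by norm_num : (1.4:ℝ) ≤ 1.5) hcont
  have h0 : (0:ℝ) ∈ Set.Icc ((1.4:ℝ)^6 - 2*1.4^2 - 2*1.4 - 1) ((1.5:ℝ)^6 - 2*1.5^2 - 2*1.5 - 1) := by
    constructor <;> norm_num
  obtain ⟨x, hx, hfx⟩ := h h0
  exact le_trans hx.1 (hmax x hfx)

lemma c_sq_le (c : ℝ) (hroot : c ^ 6 - 2 * c ^ 2 - 2 * c - 1 = 0) (h14 : 1.4 ≤ c) :
    c ^ 2 ≤ 2 := by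
  nlinarith [sq_nonneg (c^2 - 2), sq_nonneg c, sq_nonneg (c-1.4), sq_nonneg (c^3)]

lemma ineq_d2 (c : ℝ) (h14 : 1.4 ≤ c) : 2*c + 1 ≤ c ^ 4 := by
  nlinarith [sq_nonneg (c - 1.4), sq_nonneg c]

lemma ineq_d1 (c : ℝ) (h14 : 1.4 ≤ c) : 2 + c ≤ 2 * c ^ 2 := by nlinarith

lemma ineq_d3 (c : ℝ) (hroot : c ^ 6 - 2 * c ^ 2 - 2 * c - 1 = 0) (h14 : 1.4 ≤ c) :
    2*c^2 + c + 1 ≤ c ^ 6 := by nlinarith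

lemma ineq_dge (c : ℝ) (h14 : 1.4 ≤ c) : ∀ k : ℕ, 5 ≤ k → (k : ℝ) ≤ c ^ k := by
  intro k hk
  induction k with
  | zero => omega
  | succ n ih =>
    rcases Nat.lt_or_ge n 5 with h | h
    · interval_cases n <;>
        first
          | omega
          | (have h5 : (1.4:ℝ)^5 ≤ c^5 := pow_le_pow_left₀ (by norm_num) h14 5
             push_cast; nlinarith)
    · have h5 : 5 ≤ n := h
      have := ih h5
      have hc0 : (0:ℝ) ≤ c := by linarith
      calc ((n+1 : ℕ) : ℝ) = (n:ℝ) + 1 := by push_cast; ring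
        _ ≤ 1.4 * n := by
            have : (5:ℝ) ≤ n := by exact_mod_cast h5
            nlinarith
        _ ≤ c * n := by nlinarith [Nat.cast_nonneg (α := ℝ) n]
        _ ≤ c * c ^ n := by nlinarith [pow_nonneg hc0 n]
        _ = c ^ (n+1) := by ring
section MainLemma
variable {V : Type*} [Fintype V] [DecidableEq V] {G : SimpleGraph V} [DecidableRel G.Adj]

set_option maxHeartbeats 3200000 in
lemma main_bound (htf : G.CliqueFree 3) {c : ℝ} (h14 : 1.4 ≤ c) (hc2 : c ^ 2 ≤ 2)
    (hroot : c ^ 6 - 2 * c ^ 2 - 2 * c - 1 = 0) :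
    ∀ (m : ℕ) (W : Finset V) (t : ℕ), W.card ≤ m → ¬ HasIMOn G W (t + 1) →
      (misOn G W : ℝ) * c ^ (2 * t) ≤ 2 ^ t * c ^ W.card := by
  have hc1 : (1:ℝ) ≤ c := by linarith
  have hc0 : (0:ℝ) < c := by linarith
  have hbase : ∀ t : ℕ, (misOn G (∅ : Finset V) : ℝ) * c ^ (2 * t) ≤ 2 ^ t * c ^ (0:ℕ) := by
    intro t
    rw [misOn_empty, pow_zero, mul_one, Nat.cast_one, one_mul, pow_mul]
    exact pow_le_pow_left₀ (by positivity) hc2 t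
  intro m
  induction m with
  | zero =>
    intro W t hW _
    have hWe : W = ∅ := by rw [← Finset.card_eq_zero]; omega
    subst hWe
    simpa using hbase t
  | succ m ih =>
    intro W t hW hmatch
    rcases W.eq_empty_or_nonempty with rfl | hne
    · simpa using hbase t
    obtain ⟨v, hv, hmin⟩ := Finset.exists_min_image W
      (fun x => (W.filter (fun w => G.Adj x w)).card) hne
    set A := W.filter (fun w => G.Adj v w) with hA
    have hminA : ∀ x ∈ W, A.card ≤ (W.filter (fun w => G.Adj x w)).card := by
      intro x hx
      have h' := hmin x hx
      simpa [hA] using h'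
    have hW1 : 1 ≤ W.card := Finset.card_pos.mpr ⟨v, hv⟩
    by_cases hd0 : A.card = 0
    · -- CASE d = 0 : isolated vertex
      have hAe : A = ∅ := Finset.card_eq_zero.mp hd0
      have hcover : {s : Finset V | MaxIndepOn G W s} ⊆ Tset G W v ∅ := by
        intro s hs
        refine ⟨hs, ?_, by simp⟩
        by_contra hvs
        obtain ⟨x, hxs, hadj⟩ := hs.2 v hv hvs
        have hxA : x ∈ A := Finset.mem_filter.mpr ⟨hs.1.1 hxs, hadj⟩
        rw [hAe] at hxA
        exact absurd hxA (Finset.notMem_empty x)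
      have hcnt : misOn G W ≤ (Tset G W v ∅).ncard :=
        Set.ncard_le_ncard hcover (Set.toFinite _)
      have hB := term_bound hc1 ih hv (Finset.empty_subset W)
        (Finset.disjoint_left.mpr (by simp)) (k := 1)
        (by rw [NB_card]; omega) hW1 hW le_rfl
        (fun h => hmatch (hasIMOn_mono Finset.sdiff_subset h))
      calc (misOn G W : ℝ) * c ^ (2 * t)
          ≤ ((Tset G W v ∅).ncard : ℝ) * c ^ (2 * t) := by
            exact mul_le_mul_of_nonneg_right (by exact_mod_cast hcnt) (by positivity)
        _ ≤ 2 ^ t * c ^ (W.card - 1) := hB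
        _ ≤ 2 ^ t * c ^ W.card := by
            exact mul_le_mul_of_nonneg_left (pow_le_pow_right₀ hc1 (Nat.sub_le _ _)) (by positivity)
    by_cases hd1 : A.card = 1
    · -- CASE d = 1
      obtain ⟨u1, hAeq⟩ := Finset.card_eq_one.mp hd1
      have hu1A : u1 ∈ A := by rw [hAeq]; exact Finset.mem_singleton_self u1
      have hu1W : u1 ∈ W := (Finset.mem_filter.mp hu1A).1
      have hadj : G.Adj v u1 := (Finset.mem_filter.mp hu1A).2
      have hvAdjOnly : ∀ w ∈ W, G.Adj v w → w = u1 := fun w hw h =>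
        Finset.mem_singleton.mp (by rw [← hAeq]; exact Finset.mem_filter.mpr ⟨hw, h⟩)
      rcases t with _ | t'
      · exact absurd (hasIMOn_extend hv hu1W hadj (Finset.empty_subset W) (by simp) (by simp)
          (Finset.notMem_empty v) (Finset.notMem_empty u1) (hasIMOn_zero ∅)) hmatch
      set A1 := W.filter (fun w => G.Adj u1 w) with hA1
      have hdu1 : 1 ≤ A1.card := by
        have h' := hminA u1 hu1W
        rw [← hA1] at h'
        omega
      have hcover : {s : Finset V | MaxIndepOn G W s} ⊆ Tset G W v ∅ ∪ Tset G W u1 ∅ := by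
        intro s hs
        rw [Set.mem_union]
        by_cases hvs : v ∈ s
        · exact Or.inl ⟨hs, hvs, by simp⟩
        · obtain ⟨x, hxs, hadjx⟩ := hs.2 v hv hvs
          have hxu1 : x = u1 := hvAdjOnly x (hs.1.1 hxs) hadjx
          exact Or.inr ⟨hs, hxu1 ▸ hxs, by simp⟩
      have hcnt : misOn G W ≤ (Tset G W v ∅).ncard + (Tset G W u1 ∅).ncard :=
        le_trans (Set.ncard_le_ncard hcover (Set.toFinite _)) (Set.ncard_union_le _ _)
      have hNBvc : (NB G W v).card = 2 := by rw [NB_card, ← hA]; omega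
      have hW2 : 2 ≤ W.card := by
        calc 2 = (NB G W v).card := hNBvc.symm
          _ ≤ W.card := Finset.card_le_card (NB_subset hv)
      by_cases hdu : A1.card = 1
      · -- subcase: K2 component
        have hA1eq : A1 = {v} := by
          obtain ⟨z, hz⟩ := Finset.card_eq_one.mp hdu
          have hvA1 : v ∈ A1 := Finset.mem_filter.mpr ⟨hv, hadj.symm⟩
          rw [hz, Finset.mem_singleton] at hvA1
          rw [hz, hvA1]
        have hu1AdjOnly : ∀ w ∈ W, G.Adj u1 w → w = v := fun w hw h =>
          Finset.mem_singleton.mp (by rw [← hA1eq]; exact Finset.mem_filter.mpr ⟨hw, h⟩)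
        have hmatch0 : ¬ HasIMOn G (W \ (NB G W v ∪ ∅)) (t' + 1) := by
          intro h
          refine hmatch (hasIMOn_extend hv hu1W hadj Finset.sdiff_subset ?_ ?_ ?_ ?_ h)
          · intro w hw
            rw [Finset.mem_sdiff] at hw
            exact not_adj_of_notMem_NB hw.1 (fun hmem => hw.2 (Finset.mem_union_left _ hmem))
          · intro w hw hadj1
            rw [Finset.mem_sdiff] at hw
            have : w = v := hu1AdjOnly w hw.1 hadj1
            exact hw.2 (Finset.mem_union_left _ (by rw [this]; exact mem_NB_self v))
          · intro hmem
            rw [Finset.mem_sdiff] at hmem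
            exact hmem.2 (Finset.mem_union_left _ (mem_NB_self v))
          · intro hmem
            rw [Finset.mem_sdiff] at hmem
            exact hmem.2 (Finset.mem_union_left _ (mem_NB_of_adj hu1W hadj))
        have hmatch1 : ¬ HasIMOn G (W \ (NB G W u1 ∪ ∅)) (t' + 1) := by
          intro h
          refine hmatch (hasIMOn_extend hv hu1W hadj Finset.sdiff_subset ?_ ?_ ?_ ?_ h)
          · intro w hw hadj1
            rw [Finset.mem_sdiff] at hw
            have : w = u1 := hvAdjOnly w hw.1 hadj1
            exact hw.2 (Finset.mem_union_left _ (by rw [this]; exact mem_NB_self u1))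
          · intro w hw
            rw [Finset.mem_sdiff] at hw
            exact not_adj_of_notMem_NB hw.1 (fun hmem => hw.2 (Finset.mem_union_left _ hmem))
          · intro hmem
            rw [Finset.mem_sdiff] at hmem
            exact hmem.2 (Finset.mem_union_left _ (mem_NB_of_adj hv hadj.symm))
          · intro hmem
            rw [Finset.mem_sdiff] at hmem
            exact hmem.2 (Finset.mem_union_left _ (mem_NB_self u1))
        have hB0 := term_bound hc1 ih hv (Finset.empty_subset W)
          (Finset.disjoint_left.mpr (by simp)) (k := 2)
          (by rw [hNBvc]; omega) hW2 hW (by omega) hmatch0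
        have hB1 := term_bound hc1 ih hu1W (Finset.empty_subset W)
          (Finset.disjoint_left.mpr (by simp)) (k := 2)
          (by rw [NB_card, ← hA1]; omega) hW2 hW (by omega) hmatch1
        obtain ⟨j, hj⟩ : ∃ j, W.card = j + 2 := ⟨W.card - 2, by omega⟩
        rw [hj] at hB0 hB1 ⊢
        simp only [Nat.add_sub_cancel] at hB0 hB1
        have hpow : c ^ (2 * (t' + 1)) = c ^ (2 * t') * c ^ 2 := by
          rw [← pow_add]; ring_nf
        have hcast : (misOn G W : ℝ) ≤ ((Tset G W v ∅).ncard : ℝ) + ((Tset G W u1 ∅).ncard : ℝ) := by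
          exact_mod_cast hcnt
        have hc2t : (0:ℝ) ≤ c ^ (2 * t') := by positivity
        have hcsq : (0:ℝ) ≤ c ^ 2 := by positivity
        calc (misOn G W : ℝ) * c ^ (2 * (t' + 1))
            ≤ (((Tset G W v ∅).ncard : ℝ) + ((Tset G W u1 ∅).ncard : ℝ)) * (c ^ (2 * t') * c ^ 2) := by
              rw [← hpow]
              exact mul_le_mul_of_nonneg_right hcast (by positivity)
          _ = (((Tset G W v ∅).ncard : ℝ) * c ^ (2 * t')) * c ^ 2
              + (((Tset G W u1 ∅).ncard : ℝ) * c ^ (2 * t')) * c ^ 2 := by ring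
          _ ≤ (2 ^ t' * c ^ j) * c ^ 2 + (2 ^ t' * c ^ j) * c ^ 2 := by
              exact add_le_add (mul_le_mul_of_nonneg_right hB0 hcsq)
                (mul_le_mul_of_nonneg_right hB1 hcsq)
          _ = 2 ^ (t' + 1) * c ^ (j + 2) := by rw [pow_add, pow_add]; ring
      · -- subcase: deg u1 ≥ 2
        have hdu2 : 2 ≤ A1.card := by omega
        have hmatch1 : ¬ HasIMOn G (W \ (NB G W u1 ∪ ∅)) (t' + 1) := by
          intro h
          refine hmatch (hasIMOn_extend hv hu1W hadj Finset.sdiff_subset ?_ ?_ ?_ ?_ h)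
          · intro w hw hadj1
            rw [Finset.mem_sdiff] at hw
            have : w = u1 := hvAdjOnly w hw.1 hadj1
            exact hw.2 (Finset.mem_union_left _ (by rw [this]; exact mem_NB_self u1))
          · intro w hw
            rw [Finset.mem_sdiff] at hw
            exact not_adj_of_notMem_NB hw.1 (fun hmem => hw.2 (Finset.mem_union_left _ hmem))
          · intro hmem
            rw [Finset.mem_sdiff] at hmem
            exact hmem.2 (Finset.mem_union_left _ (mem_NB_of_adj hv hadj.symm))
          · intro hmem
            rw [Finset.mem_sdiff] at hmem
            exact hmem.2 (Finset.mem_union_left _ (mem_NB_self u1))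
        have hNB1c : 3 ≤ (NB G W u1).card := by rw [NB_card, ← hA1]; omega
        have hW3 : 3 ≤ W.card := le_trans hNB1c (Finset.card_le_card (NB_subset hu1W))
        have hB0 := term_bound hc1 ih hv (Finset.empty_subset W)
          (Finset.disjoint_left.mpr (by simp)) (k := 2)
          (by rw [hNBvc]; omega) hW2 hW (by omega)
          (fun h => hmatch (hasIMOn_mono Finset.sdiff_subset h))
        have hB1 := term_bound hc1 ih hu1W (Finset.empty_subset W)
          (Finset.disjoint_left.mpr (by simp)) (k := 3)
          (by omega) hW3 hW (by omega) hmatch1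
        obtain ⟨j, hj⟩ : ∃ j, W.card = j + 3 := ⟨W.card - 3, by omega⟩
        rw [hj] at hB0 hB1 ⊢
        have he1 : j + 3 - 2 = j + 1 := by omega
        have he2 : j + 3 - 3 = j := by omega
        rw [he1] at hB0
        rw [he2] at hB1
        have hpow : c ^ (2 * (t' + 1)) = c ^ (2 * t') * c ^ 2 := by
          rw [← pow_add]; ring_nf
        have hcast : (misOn G W : ℝ) ≤ ((Tset G W v ∅).ncard : ℝ) + ((Tset G W u1 ∅).ncard : ℝ) := by
          exact_mod_cast hcnt
        have hcsq : (0:ℝ) ≤ c ^ 2 := by positivity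
        have hineq : 2 * c ^ (j + 1) + (c ^ j * c ^ 2) ≤ 2 * c ^ (j + 3) := by
          have h := mul_le_mul_of_nonneg_right (ineq_d1 c h14) (pow_nonneg hc0.le (j+1))
          have e3 : c ^ (j+1) = c ^ j * c := by rw [pow_succ]
          have e4 : c ^ (j+2) = c ^ j * c ^ 2 := by rw [pow_add]
          have e5 : c ^ (j+3) = c ^ (j+1) * c ^ 2 := by rw [pow_add, pow_add]; ring
          nlinarith [pow_nonneg hc0.le j, pow_nonneg hc0.le (j+1)]
        have h2t : (0:ℝ) < 2 ^ t' := by positivity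
        calc (misOn G W : ℝ) * c ^ (2 * (t' + 1))
            ≤ (((Tset G W v ∅).ncard : ℝ) + ((Tset G W u1 ∅).ncard : ℝ)) * c ^ (2 * (t' + 1)) := by
              exact mul_le_mul_of_nonneg_right hcast (by positivity)
          _ = ((Tset G W v ∅).ncard : ℝ) * c ^ (2 * (t' + 1))
              + (((Tset G W u1 ∅).ncard : ℝ) * c ^ (2 * t')) * c ^ 2 := by
              rw [hpow]; ring
          _ ≤ 2 ^ (t' + 1) * c ^ (j + 1) + (2 ^ t' * c ^ j) * c ^ 2 := by
              exact add_le_add hB0 (mul_le_mul_of_nonneg_right hB1 hcsq)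
          _ ≤ 2 ^ (t' + 1) * c ^ (j + 3) := by
              have e : (2:ℝ) ^ (t' + 1) = 2 ^ t' * 2 := pow_succ 2 t'
              have h' := mul_le_mul_of_nonneg_left hineq (le_of_lt h2t)
              rw [e]
              nlinarith [h']
    by_cases hd2 : A.card = 2
    · -- CASE d = 2
      obtain ⟨u1, hu1A⟩ := Finset.card_pos.mp (by omega : 0 < A.card)
      have h1e : 0 < (A.erase u1).card := by
        rw [Finset.card_erase_of_mem hu1A]; omega
      obtain ⟨u2, hu2e⟩ := Finset.card_pos.mp h1e
      have h21 : u2 ≠ u1 := (Finset.mem_erase.mp hu2e).1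
      have hu2A : u2 ∈ A := (Finset.mem_erase.mp hu2e).2
      have hu1W : u1 ∈ W := (Finset.mem_filter.mp hu1A).1
      have hadj1 : G.Adj v u1 := (Finset.mem_filter.mp hu1A).2
      have hu2W : u2 ∈ W := (Finset.mem_filter.mp hu2A).1
      have hadj2 : G.Adj v u2 := (Finset.mem_filter.mp hu2A).2
      have hnadj : ¬ G.Adj u1 u2 := tri_helper htf hadj1 hadj2
      have hAeq : A = {u1, u2} := by
        refine (Finset.eq_of_subset_of_card_le ?_ ?_).symm
        · intro x hx
          rcases Finset.mem_insert.mp hx with rfl | hx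
          · exact hu1A
          · rw [Finset.mem_singleton] at hx; subst hx; exact hu2A
        · rw [Finset.card_insert_of_notMem (by simpa using (Ne.symm h21)),
            Finset.card_singleton]
          omega
      have hdeg1 : 2 ≤ (W.filter (fun w => G.Adj u1 w)).card := by
        have := hminA u1 hu1W; omega
      have hdeg2 : 2 ≤ (W.filter (fun w => G.Adj u2 w)).card := by
        have := hminA u2 hu2W; omega
      have hcover : {s : Finset V | MaxIndepOn G W s} ⊆
          Tset G W v ∅ ∪ (Tset G W u1 ∅ ∪ Tset G W u2 {u1}) := by
        intro s hs
        rw [Set.mem_union, Set.mem_union]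
        by_cases hvs : v ∈ s
        · exact Or.inl ⟨hs, hvs, by simp⟩
        by_cases hu1s : u1 ∈ s
        · exact Or.inr (Or.inl ⟨hs, hu1s, by simp⟩)
        obtain ⟨x, hxs, hadjx⟩ := hs.2 v hv hvs
        have hxA : x ∈ A := Finset.mem_filter.mpr ⟨hs.1.1 hxs, hadjx⟩
        rw [hAeq] at hxA
        rcases Finset.mem_insert.mp hxA with rfl | hxA
        · exact absurd hxs hu1s
        · rw [Finset.mem_singleton] at hxA
          subst hxA
          refine Or.inr (Or.inr ⟨hs, hxs, ?_⟩)
          intro z hz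
          rw [Finset.mem_singleton] at hz
          subst hz; exact hu1s
      have hcnt : misOn G W ≤ (Tset G W v ∅).ncard +
          ((Tset G W u1 ∅).ncard + (Tset G W u2 {u1}).ncard) :=
        le_trans (Set.ncard_le_ncard hcover (Set.toFinite _))
          (le_trans (Set.ncard_union_le _ _) (add_le_add le_rfl (Set.ncard_union_le _ _)))
      have hu1NB2 : u1 ∉ NB G W u2 := by
        intro h
        rcases Finset.mem_insert.mp h with h | h
        · exact h21 h.symm
        · exact hnadj (Finset.mem_filter.mp h).2.symm
      have hdisj2 : Disjoint ({u1} : Finset V) (NB G W u2) := by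
        rw [Finset.disjoint_left]
        intro a ha
        rw [Finset.mem_singleton] at ha; subst ha; exact hu1NB2
      have hsingsub : ({u1} : Finset V) ⊆ W := by
        intro a ha; rw [Finset.mem_singleton] at ha; subst ha; exact hu1W
      have hW4 : 4 ≤ W.card := by
        have hsub : NB G W u2 ∪ {u1} ⊆ W := Finset.union_subset (NB_subset hu2W) hsingsub
        have hcard : (NB G W u2 ∪ {u1}).card = (NB G W u2).card + 1 := by
          rw [Finset.card_union_of_disjoint hdisj2.symm, Finset.card_singleton]
        have hNB2c : 3 ≤ (NB G W u2).card := by rw [NB_card]; omega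
        have := Finset.card_le_card hsub
        omega
      have hmono : ∀ (R : Finset V), ¬ HasIMOn G (W \ R) (t + 1) :=
        fun R h => hmatch (hasIMOn_mono Finset.sdiff_subset h)
      have hB0 := term_bound hc1 ih hv (Finset.empty_subset W)
        (Finset.disjoint_left.mpr (by simp)) (k := 3)
        (by rw [NB_card, ← hA]; omega) (by omega) hW (by omega) (hmono _)
      have hB1 := term_bound hc1 ih hu1W (Finset.empty_subset W)
        (Finset.disjoint_left.mpr (by simp)) (k := 3)
        (by rw [NB_card]; omega) (by omega) hW (by omega) (hmono _)
      have hB2 := term_bound hc1 ih hu2W hsingsub hdisj2 (k := 4)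
        (by rw [NB_card, Finset.card_singleton]; omega) (by omega) hW (by omega) (hmono _)
      obtain ⟨j, hj⟩ : ∃ j, W.card = j + 4 := ⟨W.card - 4, by omega⟩
      rw [hj] at hB0 hB1 hB2 ⊢
      have he1 : j + 4 - 3 = j + 1 := by omega
      have he2 : j + 4 - 4 = j := by omega
      rw [he1] at hB0 hB1
      rw [he2] at hB2
      have hcast : (misOn G W : ℝ) ≤ ((Tset G W v ∅).ncard : ℝ) +
          (((Tset G W u1 ∅).ncard : ℝ) + ((Tset G W u2 {u1}).ncard : ℝ)) := by
        exact_mod_cast hcnt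
      have h2t : (0:ℝ) < 2 ^ t := by positivity
      have hineq : 2 * c ^ (j + 1) + c ^ j ≤ c ^ (j + 4) := by
        have h := mul_le_mul_of_nonneg_right (ineq_d2 c h14) (pow_nonneg hc0.le j)
        have e3 : c ^ (j+1) = c ^ j * c := by rw [pow_succ]
        have e4 : c ^ (j+4) = c ^ j * c ^ 4 := by rw [pow_add]
        nlinarith
      calc (misOn G W : ℝ) * c ^ (2 * t)
          ≤ (((Tset G W v ∅).ncard : ℝ) +
             (((Tset G W u1 ∅).ncard : ℝ) + ((Tset G W u2 {u1}).ncard : ℝ))) * c ^ (2*t) := by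
            exact mul_le_mul_of_nonneg_right hcast (by positivity)
        _ = ((Tset G W v ∅).ncard : ℝ) * c ^ (2*t) + (((Tset G W u1 ∅).ncard : ℝ) * c ^ (2*t)
            + ((Tset G W u2 {u1}).ncard : ℝ) * c ^ (2*t)) := by ring
        _ ≤ 2^t * c^(j+1) + (2^t * c^(j+1) + 2^t * c^j) := add_le_add hB0 (add_le_add hB1 hB2)
        _ ≤ 2^t * c^(j+4) := by nlinarith [mul_le_mul_of_nonneg_left hineq (le_of_lt h2t)]
    by_cases hd3 : A.card = 3
    · -- CASE d = 3
      obtain ⟨u1, hu1A⟩ := Finset.card_pos.mp (by omega : 0 < A.card)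
      have h1e : 0 < (A.erase u1).card := by
        rw [Finset.card_erase_of_mem hu1A]; omega
      obtain ⟨u2, hu2e⟩ := Finset.card_pos.mp h1e
      have h21 : u2 ≠ u1 := (Finset.mem_erase.mp hu2e).1
      have hu2A : u2 ∈ A := (Finset.mem_erase.mp hu2e).2
      have h2e : 0 < ((A.erase u1).erase u2).card := by
        rw [Finset.card_erase_of_mem hu2e, Finset.card_erase_of_mem hu1A]; omega
      obtain ⟨u3, hu3e⟩ := Finset.card_pos.mp h2e
      have h32 : u3 ≠ u2 := (Finset.mem_erase.mp hu3e).1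
      have h31 : u3 ≠ u1 := (Finset.mem_erase.mp (Finset.mem_erase.mp hu3e).2).1
      have hu3A : u3 ∈ A := (Finset.mem_erase.mp (Finset.mem_erase.mp hu3e).2).2
      have hu1W : u1 ∈ W := (Finset.mem_filter.mp hu1A).1
      have hadj1 : G.Adj v u1 := (Finset.mem_filter.mp hu1A).2
      have hu2W : u2 ∈ W := (Finset.mem_filter.mp hu2A).1
      have hadj2 : G.Adj v u2 := (Finset.mem_filter.mp hu2A).2
      have hu3W : u3 ∈ W := (Finset.mem_filter.mp hu3A).1
      have hadj3 : G.Adj v u3 := (Finset.mem_filter.mp hu3A).2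
      have hn12 : ¬ G.Adj u1 u2 := tri_helper htf hadj1 hadj2
      have hn13 : ¬ G.Adj u1 u3 := tri_helper htf hadj1 hadj3
      have hn23 : ¬ G.Adj u2 u3 := tri_helper htf hadj2 hadj3
      have hAeq : A = {u1, u2, u3} := by
        refine (Finset.eq_of_subset_of_card_le ?_ ?_).symm
        · intro x hx
          rcases Finset.mem_insert.mp hx with rfl | hx
          · exact hu1A
          rcases Finset.mem_insert.mp hx with rfl | hx
          · exact hu2A
          · rw [Finset.mem_singleton] at hx; subst hx; exact hu3A
        · rw [Finset.card_insert_of_notMem (by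
              simp only [Finset.mem_insert, Finset.mem_singleton]
              exact not_or.mpr ⟨Ne.symm h21, Ne.symm h31⟩),
            Finset.card_insert_of_notMem (by simpa using Ne.symm h32),
            Finset.card_singleton]
          omega
      have hdeg1 : 3 ≤ (W.filter (fun w => G.Adj u1 w)).card := by
        have := hminA u1 hu1W; omega
      have hdeg2 : 3 ≤ (W.filter (fun w => G.Adj u2 w)).card := by
        have := hminA u2 hu2W; omega
      have hdeg3 : 3 ≤ (W.filter (fun w => G.Adj u3 w)).card := by
        have := hminA u3 hu3W; omega
      have hcover : {s : Finset V | MaxIndepOn G W s} ⊆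
          Tset G W v ∅ ∪ (Tset G W u1 ∅ ∪ (Tset G W u2 {u1} ∪ Tset G W u3 {u1, u2})) := by
        intro s hs
        rw [Set.mem_union, Set.mem_union, Set.mem_union]
        by_cases hvs : v ∈ s
        · exact Or.inl ⟨hs, hvs, by simp⟩
        by_cases hu1s : u1 ∈ s
        · exact Or.inr (Or.inl ⟨hs, hu1s, by simp⟩)
        by_cases hu2s : u2 ∈ s
        · refine Or.inr (Or.inr (Or.inl ⟨hs, hu2s, ?_⟩))
          intro z hz
          rw [Finset.mem_singleton] at hz; subst hz; exact hu1s
        obtain ⟨x, hxs, hadjx⟩ := hs.2 v hv hvs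
        have hxA : x ∈ A := Finset.mem_filter.mpr ⟨hs.1.1 hxs, hadjx⟩
        rw [hAeq] at hxA
        rcases Finset.mem_insert.mp hxA with rfl | hxA
        · exact absurd hxs hu1s
        rcases Finset.mem_insert.mp hxA with rfl | hxA
        · exact absurd hxs hu2s
        rw [Finset.mem_singleton] at hxA
        subst hxA
        refine Or.inr (Or.inr (Or.inr ⟨hs, hxs, ?_⟩))
        intro z hz
        rcases Finset.mem_insert.mp hz with rfl | hz
        · exact hu1s
        · rw [Finset.mem_singleton] at hz; subst hz; exact hu2s
      have hcnt : misOn G W ≤ (Tset G W v ∅).ncard +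
          ((Tset G W u1 ∅).ncard + ((Tset G W u2 {u1}).ncard + (Tset G W u3 {u1, u2}).ncard)) :=
        le_trans (Set.ncard_le_ncard hcover (Set.toFinite _))
          (le_trans (Set.ncard_union_le _ _) (add_le_add le_rfl
            (le_trans (Set.ncard_union_le _ _) (add_le_add le_rfl (Set.ncard_union_le _ _)))))
      have hu1NB2 : u1 ∉ NB G W u2 := by
        intro h
        rcases Finset.mem_insert.mp h with h | h
        · exact h21 h.symm
        · exact hn12 (Finset.mem_filter.mp h).2.symm
      have hdisj2 : Disjoint ({u1} : Finset V) (NB G W u2) := by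
        rw [Finset.disjoint_left]
        intro a ha
        rw [Finset.mem_singleton] at ha; subst ha; exact hu1NB2
      have hu1NB3 : u1 ∉ NB G W u3 := by
        intro h
        rcases Finset.mem_insert.mp h with h | h
        · exact h31 h.symm
        · exact hn13 (Finset.mem_filter.mp h).2.symm
      have hu2NB3 : u2 ∉ NB G W u3 := by
        intro h
        rcases Finset.mem_insert.mp h with h | h
        · exact h32 h.symm
        · exact hn23 (Finset.mem_filter.mp h).2.symm
      have hdisj3 : Disjoint ({u1, u2} : Finset V) (NB G W u3) := by
        rw [Finset.disjoint_left]
        intro a ha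
        rcases Finset.mem_insert.mp ha with rfl | ha
        · exact hu1NB3
        · rw [Finset.mem_singleton] at ha; subst ha; exact hu2NB3
      have hsing1 : ({u1} : Finset V) ⊆ W := by
        intro a ha; rw [Finset.mem_singleton] at ha; subst ha; exact hu1W
      have hpair12 : ({u1, u2} : Finset V) ⊆ W := by
        intro a ha
        rcases Finset.mem_insert.mp ha with rfl | ha
        · exact hu1W
        · rw [Finset.mem_singleton] at ha; subst ha; exact hu2W
      have hpair12card : ({u1, u2} : Finset V).card = 2 := Finset.card_pair (Ne.symm h21)
      have hW6 : 6 ≤ W.card := by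
        have hsub : NB G W u3 ∪ {u1, u2} ⊆ W := Finset.union_subset (NB_subset hu3W) hpair12
        have hcard : (NB G W u3 ∪ {u1, u2}).card = (NB G W u3).card + 2 := by
          rw [Finset.card_union_of_disjoint hdisj3.symm, hpair12card]
        have hNB3c : 4 ≤ (NB G W u3).card := by rw [NB_card]; omega
        have := Finset.card_le_card hsub
        omega
      have hmono : ∀ (R : Finset V), ¬ HasIMOn G (W \ R) (t + 1) :=
        fun R h => hmatch (hasIMOn_mono Finset.sdiff_subset h)
      have hB0 := term_bound hc1 ih hv (Finset.empty_subset W)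
        (Finset.disjoint_left.mpr (by simp)) (k := 4)
        (by rw [NB_card, ← hA]; omega) (by omega) hW (by omega) (hmono _)
      have hB1 := term_bound hc1 ih hu1W (Finset.empty_subset W)
        (Finset.disjoint_left.mpr (by simp)) (k := 4)
        (by rw [NB_card]; omega) (by omega) hW (by omega) (hmono _)
      have hB2 := term_bound hc1 ih hu2W hsing1 hdisj2 (k := 5)
        (by rw [NB_card, Finset.card_singleton]; omega) (by omega) hW (by omega) (hmono _)
      have hB3 := term_bound hc1 ih hu3W hpair12 hdisj3 (k := 6)
        (by rw [NB_card, hpair12card]; omega) (by omega) hW (by omega) (hmono _)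
      obtain ⟨j, hj⟩ : ∃ j, W.card = j + 6 := ⟨W.card - 6, by omega⟩
      rw [hj] at hB0 hB1 hB2 hB3 ⊢
      have he1 : j + 6 - 4 = j + 2 := by omega
      have he2 : j + 6 - 5 = j + 1 := by omega
      have he3 : j + 6 - 6 = j := by omega
      rw [he1] at hB0 hB1
      rw [he2] at hB2
      rw [he3] at hB3
      have hcast : (misOn G W : ℝ) ≤ ((Tset G W v ∅).ncard : ℝ) +
          (((Tset G W u1 ∅).ncard : ℝ) + (((Tset G W u2 {u1}).ncard : ℝ) +
            ((Tset G W u3 {u1, u2}).ncard : ℝ))) := by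
        exact_mod_cast hcnt
      have h2t : (0:ℝ) < 2 ^ t := by positivity
      have hineq : 2 * c ^ (j + 2) + c ^ (j + 1) + c ^ j ≤ c ^ (j + 6) := by
        have h := mul_le_mul_of_nonneg_right (ineq_d3 c hroot h14) (pow_nonneg hc0.le j)
        have e2 : c ^ (j+1) = c ^ j * c := by rw [pow_succ]
        have e3 : c ^ (j+2) = c ^ j * c ^ 2 := by rw [pow_add]
        have e4 : c ^ (j+6) = c ^ j * c ^ 6 := by rw [pow_add]
        nlinarith
      calc (misOn G W : ℝ) * c ^ (2 * t)
          ≤ (((Tset G W v ∅).ncard : ℝ) +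
             (((Tset G W u1 ∅).ncard : ℝ) + (((Tset G W u2 {u1}).ncard : ℝ) +
               ((Tset G W u3 {u1, u2}).ncard : ℝ)))) * c ^ (2*t) := by
            exact mul_le_mul_of_nonneg_right hcast (by positivity)
        _ = ((Tset G W v ∅).ncard : ℝ) * c ^ (2*t) + (((Tset G W u1 ∅).ncard : ℝ) * c ^ (2*t)
            + (((Tset G W u2 {u1}).ncard : ℝ) * c ^ (2*t)
              + ((Tset G W u3 {u1, u2}).ncard : ℝ) * c ^ (2*t))) := by ring
        _ ≤ 2^t * c^(j+2) + (2^t * c^(j+2) + (2^t * c^(j+1) + 2^t * c^j)) :=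
            add_le_add hB0 (add_le_add hB1 (add_le_add hB2 hB3))
        _ ≤ 2^t * c^(j+6) := by nlinarith [mul_le_mul_of_nonneg_left hineq (le_of_lt h2t)]
    · -- CASE d ≥ 4
      have hd4 : 4 ≤ A.card := by omega
      have hcover : {s : Finset V | MaxIndepOn G W s} ⊆
          Tset G W v ∅ ∪ ⋃ u ∈ A, Tset G W u ∅ := by
        intro s hs
        rw [Set.mem_union]
        by_cases hvs : v ∈ s
        · exact Or.inl ⟨hs, hvs, by simp⟩
        · obtain ⟨x, hxs, hadjx⟩ := hs.2 v hv hvs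
          have hxA : x ∈ A := Finset.mem_filter.mpr ⟨hs.1.1 hxs, hadjx⟩
          exact Or.inr (Set.mem_biUnion hxA ⟨hs, hxs, by simp⟩)
      have hcnt : misOn G W ≤ (Tset G W v ∅).ncard + ∑ u ∈ A, (Tset G W u ∅).ncard :=
        le_trans (Set.ncard_le_ncard hcover (Set.toFinite _))
          (le_trans (Set.ncard_union_le _ _) (add_le_add le_rfl (ncard_biUnion_le A _)))
      have hWd : A.card + 1 ≤ W.card := by
        have hNBc : (NB G W v).card = A.card + 1 := by rw [NB_card, ← hA]
        calc A.card + 1 = (NB G W v).card := hNBc.symm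
          _ ≤ W.card := Finset.card_le_card (NB_subset hv)
      have hmono : ∀ (R : Finset V), ¬ HasIMOn G (W \ R) (t + 1) :=
        fun R h => hmatch (hasIMOn_mono Finset.sdiff_subset h)
      have hB0 := term_bound hc1 ih hv (Finset.empty_subset W)
        (Finset.disjoint_left.mpr (by simp)) (k := A.card + 1)
        (by rw [NB_card, ← hA]; omega) (by omega) hW (by omega) (hmono _)
      have hBu : ∀ u ∈ A, ((Tset G W u ∅).ncard : ℝ) * c ^ (2*t)
          ≤ 2^t * c^(W.card - (A.card + 1)) := by
        intro u huA
        have huW : u ∈ W := (Finset.mem_filter.mp huA).1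
        have hdegu := hminA u huW
        exact term_bound hc1 ih huW (Finset.empty_subset W)
          (Finset.disjoint_left.mpr (by simp)) (k := A.card + 1)
          (by rw [NB_card]; omega) (by omega) hW (by omega) (hmono _)
      obtain ⟨j, hj⟩ : ∃ j, W.card = j + (A.card + 1) := ⟨W.card - (A.card + 1), by omega⟩
      rw [hj] at hB0 ⊢
      simp only [hj, Nat.add_sub_cancel] at hBu
      simp only [Nat.add_sub_cancel] at hB0
      have hcast : (misOn G W : ℝ) ≤ ((Tset G W v ∅).ncard : ℝ) +
          ((∑ u ∈ A, (Tset G W u ∅).ncard : ℕ) : ℝ) := by exact_mod_cast hcnt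
      have hsum : ((∑ u ∈ A, (Tset G W u ∅).ncard : ℕ) : ℝ) * c ^ (2*t)
          ≤ (A.card : ℝ) * (2^t * c^j) := by
        push_cast
        rw [Finset.sum_mul]
        refine le_trans (Finset.sum_le_sum hBu) ?_
        rw [Finset.sum_const, nsmul_eq_mul]
      have hck : ((A.card : ℝ) + 1) ≤ c ^ (A.card + 1) := by
        have h := ineq_dge c h14 (A.card + 1) (by omega)
        exact_mod_cast h
      have hcj : (0:ℝ) ≤ c ^ j := by positivity
      have h2t : (0:ℝ) < 2 ^ t := by positivity
      have hfin : c ^ (j + (A.card + 1)) = c ^ j * c ^ (A.card + 1) := by rw [pow_add]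
      calc (misOn G W : ℝ) * c ^ (2*t)
          ≤ (((Tset G W v ∅).ncard : ℝ) +
             ((∑ u ∈ A, (Tset G W u ∅).ncard : ℕ) : ℝ)) * c ^ (2*t) := by
            exact mul_le_mul_of_nonneg_right hcast (by positivity)
        _ = ((Tset G W v ∅).ncard : ℝ) * c ^ (2*t)
            + ((∑ u ∈ A, (Tset G W u ∅).ncard : ℕ) : ℝ) * c ^ (2*t) := by ring
        _ ≤ 2^t * c^j + (A.card : ℝ) * (2^t * c^j) := add_le_add hB0 hsum
        _ ≤ 2^t * c^(j + (A.card + 1)) := by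
            rw [hfin]
            nlinarith [mul_le_mul_of_nonneg_left hck (mul_nonneg (le_of_lt h2t) hcj)]
end MainLemma
section Glue
variable {V : Type*} [Fintype V] [DecidableEq V] {G : SimpleGraph V} [DecidableRel G.Adj]

lemma maxIndep_univ_iff (s : Finset V) :
    MaxIndepOn G Finset.univ s ↔ IsMaxIndepFinset G s := by
  constructor
  · rintro ⟨⟨_, hind⟩, hdom⟩
    refine ⟨fun a ha b hb => hind a ha b hb, ?_⟩
    intro u hu hsub
    by_contra hne
    obtain ⟨w, hwt, hws⟩ := Finset.exists_of_ssubset (lt_of_le_of_ne hsub hne)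
    obtain ⟨x, hxs, hadj⟩ := hdom w (Finset.mem_univ w) hws
    exact hu hwt (hsub hxs) hadj
  · rintro ⟨hind, hmaxi⟩
    refine ⟨⟨Finset.subset_univ s, fun a ha b hb => hind ha hb⟩, ?_⟩
    intro w _ hws
    by_contra hnon
    push_neg at hnon
    have hins : IsIndepFinset G (insert w s) := by
      intro a ha b hb
      rcases Finset.mem_insert.mp ha with rfl | ha'
      · rcases Finset.mem_insert.mp hb with rfl | hb'
        · exact G.irrefl
        · exact hnon b hb'
      · rcases Finset.mem_insert.mp hb with rfl | hb'
        · intro h; exact hnon a ha' h.symm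
        · exact hind ha' hb'
    have := hmaxi (insert w s) hins (Finset.subset_insert w s)
    exact hws (this ▸ Finset.mem_insert_self w s)

lemma hasIM_univ {k : ℕ} (h : HasIMOn G Finset.univ k) : HasInducedMatching G k := by
  obtain ⟨f, _, h2, h3, h4, h5⟩ := h
  exact ⟨f, h2, h3, h4, h5⟩

end Glue

theorem mis_trianglefree_no_induced_matching_le (c : ℝ)
    (hroot : c ^ 6 - 2 * c ^ 2 - 2 * c - 1 = 0)
    (hmax : ∀ x : ℝ, x ^ 6 - 2 * x ^ 2 - 2 * x - 1 = 0 → x ≤ c)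
    (n t : ℕ) (htn : 2 * t ≤ n) (G : SimpleGraph (Fin n))
    (htf : G.CliqueFree 3) (hmatch : ¬ HasInducedMatching G (t + 1)) :
    (mis G : ℝ) ≤ 2 ^ t * c ^ (n - 2 * t) := by
  haveI : DecidableRel G.Adj := Classical.decRel _
  have h14 : (1.4 : ℝ) ≤ c := c_ge c hmax
  have hc2 : c ^ 2 ≤ 2 := c_sq_le c hroot h14
  have hset : {s : Finset (Fin n) | IsMaxIndepFinset G s}
      = {s : Finset (Fin n) | MaxIndepOn G Finset.univ s} :=
    Set.ext fun s => (maxIndep_univ_iff s).symm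
  have hmisOn : mis G = misOn G Finset.univ := congrArg Set.ncard hset
  have hmatch' : ¬ HasIMOn G Finset.univ (t + 1) := fun h => hmatch (hasIM_univ h)
  have hmain := main_bound htf h14 hc2 hroot n Finset.univ t (by simp) hmatch'
  rw [Finset.card_univ, Fintype.card_fin] at hmain
  rw [hmisOn]
  have hc0 : (0:ℝ) < c := by linarith
  have hpow : c ^ n = c ^ (n - 2 * t) * c ^ (2 * t) := by
    rw [← pow_add]
    congr 1
    omega
  rw [hpow] at hmain
  have h2t : (0:ℝ) < c ^ (2 * t) := by positivity
  exact le_of_mul_le_mul_right (hmain.trans_eq (by ring)) h2t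
end
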